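/- arXiv:1502.03056 — 4 statements merged into one kernel-verified Lean document; each statement's English description precedes it below -/
import Mathlib

section
/- Let a and b be positive integers with (a,b) ≠ (1,1) and (a,b) ≠ (2,1), and let f(z) = c·z(z-1)/2 + d·z where c and d are positive integers with d not dividing c. If the sum a·T_x + b·y² + f(z) is universal over ℕ, then it is one of the following 18 sums: T_x+2y²+z(z+3)/2; T_x+2y²+z(z+5)/2; T_x+2y²+z(z+7)/2; T_x+2y²+z(z+3); T_x+2y²+z(3z+1); T_x+2y²+z(3z+1)/2; T_x+2y²+z(3z+5)/2; T_x+2y²+z(5z−1)/2; T_x+2y²+z(7z−3)/2; T_x+2y²+z(9z−5)/2; T_x+2y²+z(9z−1)/2; T_x+3y²+z(3z+1)/2; T_x+4y²+z(z+3)/2; T_x+4y²+z(3z+1)/2; 3T_x+y²+z(z+3)/2; 3T_x+y²+z(3z+1)/2; 4T_x+y²+z(z+3)/2; 6T_x+y²+z(z+3)/2. -/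
def triZ (n : ℕ) : ℤ := (n : ℤ) * ((n : ℤ) + 1) / 2

def polF (c d z : ℕ) : ℤ := (c : ℤ) * ((z : ℤ) * ((z : ℤ) - 1)) / 2 + (d : ℤ) * (z : ℤ)

lemma aux_msb {x k : ℕ} (h : x * (x + 1) < (k+1)*(k+2)) : x ≤ k := by
  by_contra hx
  push_neg at hx
  have h2 : (k+1)*(k+2) ≤ x*(x+1) := Nat.mul_le_mul hx (by omega)
  omega

lemma aux_sq {y k : ℕ} (h : y ^ 2 < (k+1)*(k+1)) : y ≤ k := by
  by_contra hy
  push_neg at hy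
  have h2 : (k+1)*(k+1) ≤ y^2 := by rw [pow_two]; exact Nat.mul_le_mul hy hy
  omega

lemma aux_pred {z k : ℕ} (h : z * (z - 1) < (k+1)*(k+2)) : z ≤ k + 2 := by
  by_contra hz
  push_neg at hz
  have h2 : (k+2)*(k+2) ≤ z*(z-1) := Nat.mul_le_mul (by omega) (by omega)
  have h3 : (k+1)*(k+2) ≤ (k+2)*(k+2) := Nat.mul_le_mul (by omega) le_rfl
  omega

lemma triZ_two (x : ℕ) : 2 * triZ x = (x:ℤ) * ((x:ℤ) + 1) := by
  obtain ⟨k, hk⟩ := Int.even_mul_succ_self (x:ℤ)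
  unfold triZ
  rw [show (x:ℤ)*((x:ℤ)+1) = 2*k by linear_combination hk]
  rw [Int.mul_ediv_cancel_left _ two_ne_zero]

lemma polF_two (c d z : ℕ) : 2 * polF c d z = (c:ℤ)*((z:ℤ)*((z:ℤ)-1)) + 2*((d:ℤ)*(z:ℤ)) := by
  obtain ⟨k, hk⟩ := Int.even_mul_succ_self ((z:ℤ) - 1)
  have hk' : (z:ℤ)*((z:ℤ)-1) = 2*k := by linear_combination hk
  unfold polF
  rw [show (c:ℤ)*((z:ℤ)*((z:ℤ)-1)) = 2*((c:ℤ)*k) by rw [hk']; ring]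
  rw [Int.mul_ediv_cancel_left _ two_ne_zero]
  ring

lemma rep_nat {a b c d : ℕ} (n : ℕ)
    (h : ∃ x y z : ℕ, (n : ℤ) = (a : ℤ) * triZ x + (b : ℤ) * (y : ℤ) ^ 2 + polF c d z) :
    ∃ x y z : ℕ, a*(x*(x+1)) + 2*(b*y^2) + (c*(z*(z-1)) + 2*(d*z)) = 2*n := by
  obtain ⟨x, y, z, h⟩ := h
  refine ⟨x, y, z, ?_⟩
  have t1 := triZ_two x
  have t2 := polF_two c d z
  have hZ : (a:ℤ)*((x:ℤ)*((x:ℤ)+1)) + 2*((b:ℤ)*(y:ℤ)^2) +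
      ((c:ℤ)*((z:ℤ)*((z:ℤ)-1)) + 2*((d:ℤ)*(z:ℤ))) = 2*(n:ℤ) := by
    linear_combination (-2)*h - (a:ℤ)*t1 - t2
  rcases z with _ | w
  · norm_num at hZ ⊢
    exact_mod_cast hZ
  · have hw : (w+1) - 1 = w := rfl
    rw [hw]
    zify
    push_cast at hZ
    linear_combination hZ

lemma not_rep {a b c d n : ℕ} (bx by' bz : ℕ)
    (hbx : 2*n < a*((bx+1)*(bx+2))) (hby : n < b*((by'+1)*(by'+1)))
    (hbz : 2*n < c*((bz+1)*(bz+2)))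
    (H : ∀ x ≤ bx, ∀ y ≤ by', ∀ z ≤ bz + 2,
      a*(x*(x+1)) + 2*(b*y^2) + (c*(z*(z-1)) + 2*(d*z)) ≠ 2*n) :
    ¬ ∃ x y z : ℕ, a*(x*(x+1)) + 2*(b*y^2) + (c*(z*(z-1)) + 2*(d*z)) = 2*n := by
  rintro ⟨x, y, z, hE⟩
  have h1 : a*(x*(x+1)) < a*((bx+1)*(bx+2)) := by omega
  have h2 : b*(y^2) < b*((by'+1)*(by'+1)) := by omega
  have h3 : c*(z*(z-1)) < c*((bz+1)*(bz+2)) := by omega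
  have hx : x ≤ bx := aux_msb (Nat.lt_of_mul_lt_mul_left h1)
  have hy : y ≤ by' := aux_sq (Nat.lt_of_mul_lt_mul_left h2)
  have hz : z ≤ bz + 2 := aux_pred (Nat.lt_of_mul_lt_mul_left h3)
  exact H x hx y hy z hz hE

lemma polF_div2 (c d : ℕ) (p q : ℤ) (h1 : p = (c:ℤ)) (h2 : p + q = 2*(d:ℤ)) (z : ℕ) :
    polF c d z = (z:ℤ) * (p*(z:ℤ) + q) / 2 := by
  obtain ⟨k, hk⟩ := Int.even_mul_succ_self ((z:ℤ) - 1)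
  have hk' : (z:ℤ)*((z:ℤ)-1) = 2*k := by linear_combination hk
  unfold polF
  rw [show (c:ℤ)*((z:ℤ)*((z:ℤ)-1)) = 2*((c:ℤ)*k) by rw [hk']; ring]
  rw [show (z:ℤ)*(p*(z:ℤ)+q) = 2*((c:ℤ)*k + (d:ℤ)*(z:ℤ)) by
    linear_combination p*hk' + 2*k*h1 + (z:ℤ)*h2]
  rw [Int.mul_ediv_cancel_left _ two_ne_zero, Int.mul_ediv_cancel_left _ two_ne_zero]

lemma polF_nodiv (c d : ℕ) (p q : ℤ) (h1 : 2*p = (c:ℤ)) (h2 : p + q = (d:ℤ)) (z : ℕ) :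
    polF c d z = (z:ℤ) * (p*(z:ℤ) + q) := by
  obtain ⟨k, hk⟩ := Int.even_mul_succ_self ((z:ℤ) - 1)
  have hk' : (z:ℤ)*((z:ℤ)-1) = 2*k := by linear_combination hk
  unfold polF
  rw [show (c:ℤ)*((z:ℤ)*((z:ℤ)-1)) = 2*((c:ℤ)*k) by rw [hk']; ring]
  rw [show (z:ℤ)*(p*(z:ℤ)+q) = (c:ℤ)*k + (d:ℤ)*(z:ℤ) by
    linear_combination p*hk' + k*h1 + (z:ℤ)*h2]
  rw [Int.mul_ediv_cancel_left _ two_ne_zero]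

lemma L12 : ∀ z : ℕ, polF 1 2 z = (z : ℤ) * ((z : ℤ) + 3) / 2 := fun z => by
  rw [polF_div2 1 2 1 3 (by norm_num) (by norm_num) z]; try (congr 1 <;> ring)
lemma L13 : ∀ z : ℕ, polF 1 3 z = (z : ℤ) * ((z : ℤ) + 5) / 2 := fun z => by
  rw [polF_div2 1 3 1 5 (by norm_num) (by norm_num) z]; try (congr 1 <;> ring)
lemma L14 : ∀ z : ℕ, polF 1 4 z = (z : ℤ) * ((z : ℤ) + 7) / 2 := fun z => by
  rw [polF_div2 1 4 1 7 (by norm_num) (by norm_num) z]; try (congr 1 <;> ring)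
lemma L24 : ∀ z : ℕ, polF 2 4 z = (z : ℤ) * ((z : ℤ) + 3) := fun z => by
  rw [polF_nodiv 2 4 1 3 (by norm_num) (by norm_num) z]; try ring
lemma L64 : ∀ z : ℕ, polF 6 4 z = (z : ℤ) * (3 * (z : ℤ) + 1) := fun z => by
  rw [polF_nodiv 6 4 3 1 (by norm_num) (by norm_num) z]; try ring
lemma L32 : ∀ z : ℕ, polF 3 2 z = (z : ℤ) * (3 * (z : ℤ) + 1) / 2 := fun z => by
  rw [polF_div2 3 2 3 1 (by norm_num) (by norm_num) z]; try (congr 1 <;> ring)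
lemma L34 : ∀ z : ℕ, polF 3 4 z = (z : ℤ) * (3 * (z : ℤ) + 5) / 2 := fun z => by
  rw [polF_div2 3 4 3 5 (by norm_num) (by norm_num) z]; try (congr 1 <;> ring)
lemma L52 : ∀ z : ℕ, polF 5 2 z = (z : ℤ) * (5 * (z : ℤ) - 1) / 2 := fun z => by
  rw [polF_div2 5 2 5 (-1) (by norm_num) (by norm_num) z]; try (congr 1 <;> ring)
lemma L72 : ∀ z : ℕ, polF 7 2 z = (z : ℤ) * (7 * (z : ℤ) - 3) / 2 := fun z => by
  rw [polF_div2 7 2 7 (-3) (by norm_num) (by norm_num) z]; try (congr 1 <;> ring)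
lemma L92 : ∀ z : ℕ, polF 9 2 z = (z : ℤ) * (9 * (z : ℤ) - 5) / 2 := fun z => by
  rw [polF_div2 9 2 9 (-5) (by norm_num) (by norm_num) z]; try (congr 1 <;> ring)
lemma L94 : ∀ z : ℕ, polF 9 4 z = (z : ℤ) * (9 * (z : ℤ) - 1) / 2 := fun z => by
  rw [polF_div2 9 4 9 (-1) (by norm_num) (by norm_num) z]; try (congr 1 <;> ring)

set_option maxHeartbeats 4000000 in
theorem stmt_3 (a b c d : ℕ) (ha : 0 < a) (hb : 0 < b)
    (hab : (a, b) ≠ (1, 1)) (hab' : (a, b) ≠ (2, 1))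
    (hc : 0 < c) (hd : 0 < d) (hdc : ¬ d ∣ c)
    (huniv : ∀ n : ℕ, ∃ x y z : ℕ,
      (n : ℤ) = (a : ℤ) * triZ x + (b : ℤ) * (y : ℤ) ^ 2 + polF c d z) :
    (a = 1 ∧ b = 2 ∧ ∀ z : ℕ, polF c d z = (z : ℤ) * ((z : ℤ) + 3) / 2) ∨
    (a = 1 ∧ b = 2 ∧ ∀ z : ℕ, polF c d z = (z : ℤ) * ((z : ℤ) + 5) / 2) ∨
    (a = 1 ∧ b = 2 ∧ ∀ z : ℕ, polF c d z = (z : ℤ) * ((z : ℤ) + 7) / 2) ∨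
    (a = 1 ∧ b = 2 ∧ ∀ z : ℕ, polF c d z = (z : ℤ) * ((z : ℤ) + 3)) ∨
    (a = 1 ∧ b = 2 ∧ ∀ z : ℕ, polF c d z = (z : ℤ) * (3 * (z : ℤ) + 1)) ∨
    (a = 1 ∧ b = 2 ∧ ∀ z : ℕ, polF c d z = (z : ℤ) * (3 * (z : ℤ) + 1) / 2) ∨
    (a = 1 ∧ b = 2 ∧ ∀ z : ℕ, polF c d z = (z : ℤ) * (3 * (z : ℤ) + 5) / 2) ∨
    (a = 1 ∧ b = 2 ∧ ∀ z : ℕ, polF c d z = (z : ℤ) * (5 * (z : ℤ) - 1) / 2) ∨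
    (a = 1 ∧ b = 2 ∧ ∀ z : ℕ, polF c d z = (z : ℤ) * (7 * (z : ℤ) - 3) / 2) ∨
    (a = 1 ∧ b = 2 ∧ ∀ z : ℕ, polF c d z = (z : ℤ) * (9 * (z : ℤ) - 5) / 2) ∨
    (a = 1 ∧ b = 2 ∧ ∀ z : ℕ, polF c d z = (z : ℤ) * (9 * (z : ℤ) - 1) / 2) ∨
    (a = 1 ∧ b = 3 ∧ ∀ z : ℕ, polF c d z = (z : ℤ) * (3 * (z : ℤ) + 1) / 2) ∨
    (a = 1 ∧ b = 4 ∧ ∀ z : ℕ, polF c d z = (z : ℤ) * ((z : ℤ) + 3) / 2) ∨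
    (a = 1 ∧ b = 4 ∧ ∀ z : ℕ, polF c d z = (z : ℤ) * (3 * (z : ℤ) + 1) / 2) ∨
    (a = 3 ∧ b = 1 ∧ ∀ z : ℕ, polF c d z = (z : ℤ) * ((z : ℤ) + 3) / 2) ∨
    (a = 3 ∧ b = 1 ∧ ∀ z : ℕ, polF c d z = (z : ℤ) * (3 * (z : ℤ) + 1) / 2) ∨
    (a = 4 ∧ b = 1 ∧ ∀ z : ℕ, polF c d z = (z : ℤ) * ((z : ℤ) + 3) / 2) ∨
    (a = 6 ∧ b = 1 ∧ ∀ z : ℕ, polF c d z = (z : ℤ) * ((z : ℤ) + 3) / 2) := by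
  have hd2 : 2 ≤ d := by
    rcases d with _ | _ | d'
    · omega
    · exact absurd (one_dvd c) hdc
    · omega
  obtain ⟨x1, y1, z1, hE1⟩ := rep_nat 1 (huniv 1)
  have ta1 : 1*(x1*(x1+1)) ≤ a*(x1*(x1+1)) := Nat.mul_le_mul ha le_rfl
  have tb1 : 1*(y1^2) ≤ b*y1^2 := Nat.mul_le_mul hb le_rfl
  have tc1 : 2*z1 ≤ d*z1 := Nat.mul_le_mul hd2 le_rfl
  have hx1 : x1 ≤ 1 := aux_msb (show x1*(x1+1) < 2*3 by omega)
  have hy1 : y1 ≤ 1 := aux_sq (show y1^2 < 2*2 by omega)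
  have hz1 : z1 ≤ 0 := by omega
  have hS1 : a = 1 ∨ b = 1 := by
    interval_cases x1 <;> interval_cases y1 <;> interval_cases z1 <;> omega
  rcases hS1 with ha1 | hb1
  · -- branch a = 1
    subst ha1
    have hbne : b ≠ 1 := fun h => hab (by rw [h])
    have hbge : 2 ≤ b := by omega
    obtain ⟨x2, y2, z2, hE2⟩ := rep_nat 2 (huniv 2)
    have tb2 : 2*(y2^2) ≤ b*y2^2 := Nat.mul_le_mul hbge le_rfl
    have tc2 : 2*z2 ≤ d*z2 := Nat.mul_le_mul hd2 le_rfl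
    have hx2 : x2 ≤ 1 := aux_msb (show x2*(x2+1) < 2*3 by omega)
    have hy2 : y2 ≤ 1 := aux_sq (show y2^2 < 2*2 by omega)
    have hz2 : z2 ≤ 1 := by omega
    have hS2 : b = 2 ∨ d = 2 := by
      interval_cases x2 <;> interval_cases y2 <;> interval_cases z2 <;> omega
    rcases hS2 with hb2v | hd2v
    · -- b = 2
      subst hb2v
      obtain ⟨x3, y3, z3, hE3⟩ := rep_nat 4 (huniv 4)
      have tc3 : 2*z3 ≤ d*z3 := Nat.mul_le_mul hd2 le_rfl
      have hx3 : x3 ≤ 2 := aux_msb (show x3*(x3+1) < 3*4 by omega)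
      have hy3 : y3 ≤ 1 := aux_sq (show y3^2 < 2*2 by omega)
      have hz3 : z3 ≤ 2 := by omega
      have hS3 : d = 2 ∨ d = 3 ∨ d = 4 := by
        interval_cases x3 <;> interval_cases y3 <;> interval_cases z3 <;> omega
      rcases hS3 with hdv | hdv | hdv
      · subst hdv
        obtain ⟨x4, y4, z4, hE4⟩ := rep_nat 27 (huniv 27)
        have tz4 : 1*(z4*(z4-1)) ≤ c*(z4*(z4-1)) := Nat.mul_le_mul hc le_rfl
        have hx4 : x4 ≤ 6 := aux_msb (show x4*(x4+1) < 7*8 by omega)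
        have hy4 : y4 ≤ 3 := aux_sq (show y4^2 < 4*4 by omega)
        have hz4 : z4 ≤ 8 := aux_pred (show z4*(z4-1) < 7*8 by omega)
        have hS4 : c = 1 ∨ c = 3 ∨ c = 5 ∨ c = 7 ∨ c = 9 ∨ c = 11 ∨ c = 13 ∨ c = 15 ∨ c = 17 ∨ c = 21 ∨ c = 23 := by
          interval_cases x4 <;> interval_cases y4 <;> interval_cases z4 <;> omega
        rcases hS4 with h4c|h4c|h4c|h4c|h4c|h4c|h4c|h4c|h4c|h4c|h4c <;> subst h4c
        · exact Or.inl ⟨rfl, rfl, L12⟩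
        · exact Or.inr (Or.inr (Or.inr (Or.inr (Or.inr (Or.inl ⟨rfl, rfl, L32⟩)))))
        · exact Or.inr (Or.inr (Or.inr (Or.inr (Or.inr (Or.inr (Or.inr (Or.inl ⟨rfl, rfl, L52⟩)))))))
        · exact Or.inr (Or.inr (Or.inr (Or.inr (Or.inr (Or.inr (Or.inr (Or.inr (Or.inl ⟨rfl, rfl, L72⟩))))))))
        · exact Or.inr (Or.inr (Or.inr (Or.inr (Or.inr (Or.inr (Or.inr (Or.inr (Or.inr (Or.inl ⟨rfl, rfl, L92⟩)))))))))
        · exact absurd (rep_nat 22 (huniv 22)) (not_rep 6 3 1 (by norm_num) (by norm_num) (by norm_num) (by decide))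
        · exact absurd (rep_nat 43 (huniv 43)) (not_rep 8 4 2 (by norm_num) (by norm_num) (by norm_num) (by decide))
        · exact absurd (rep_nat 419 (huniv 419)) (not_rep 28 14 6 (by norm_num) (by norm_num) (by norm_num) (by decide))
        · exact absurd (rep_nat 43 (huniv 43)) (not_rep 8 4 1 (by norm_num) (by norm_num) (by norm_num) (by decide))
        · exact absurd (rep_nat 22 (huniv 22)) (not_rep 6 3 1 (by norm_num) (by norm_num) (by norm_num) (by decide))
        · exact absurd (rep_nat 22 (huniv 22)) (not_rep 6 3 0 (by norm_num) (by norm_num) (by norm_num) (by decide))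
      · subst hdv
        obtain ⟨x5, y5, z5, hE5⟩ := rep_nat 7 (huniv 7)
        have hx5 : x5 ≤ 3 := aux_msb (show x5*(x5+1) < 4*5 by omega)
        have hy5 : y5 ≤ 1 := aux_sq (show y5^2 < 2*2 by omega)
        have hz5 : z5 ≤ 2 := by omega
        have hS5 : c = 1 := by
          interval_cases x5 <;> interval_cases y5 <;> interval_cases z5 <;> omega
        subst hS5
        exact Or.inr (Or.inl ⟨rfl, rfl, L13⟩)
      · subst hdv
        obtain ⟨x6, y6, z6, hE6⟩ := rep_nat 26 (huniv 26)
        have hx6 : x6 ≤ 6 := aux_msb (show x6*(x6+1) < 7*8 by omega)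
        have hy6 : y6 ≤ 3 := aux_sq (show y6^2 < 4*4 by omega)
        have hz6 : z6 ≤ 6 := by omega
        have hS6 : c = 1 ∨ c = 2 ∨ c = 3 ∨ c = 6 ∨ c = 7 ∨ c = 9 ∨ c = 10 ∨ c = 13 ∨ c = 15 ∨ c = 17 ∨ c = 18 := by
          interval_cases x6 <;> interval_cases y6 <;> interval_cases z6 <;> omega
        rcases hS6 with h6c|h6c|h6c|h6c|h6c|h6c|h6c|h6c|h6c|h6c|h6c <;> subst h6c
        · exact Or.inr (Or.inr (Or.inl ⟨rfl, rfl, L14⟩))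
        · exact Or.inr (Or.inr (Or.inr (Or.inl ⟨rfl, rfl, L24⟩)))
        · exact Or.inr (Or.inr (Or.inr (Or.inr (Or.inr (Or.inr (Or.inl ⟨rfl, rfl, L34⟩))))))
        · exact Or.inr (Or.inr (Or.inr (Or.inr (Or.inl ⟨rfl, rfl, L64⟩))))
        · exact absurd (rep_nat 31 (huniv 31)) (not_rep 7 3 2 (by norm_num) (by norm_num) (by norm_num) (by decide))
        · exact Or.inr (Or.inr (Or.inr (Or.inr (Or.inr (Or.inr (Or.inr (Or.inr (Or.inr (Or.inr (Or.inl ⟨rfl, rfl, L94⟩))))))))))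
        · exact absurd (rep_nat 31 (huniv 31)) (not_rep 7 3 2 (by norm_num) (by norm_num) (by norm_num) (by decide))
        · exact absurd (rep_nat 20 (huniv 20)) (not_rep 5 3 1 (by norm_num) (by norm_num) (by norm_num) (by decide))
        · exact absurd (rep_nat 20 (huniv 20)) (not_rep 5 3 1 (by norm_num) (by norm_num) (by norm_num) (by decide))
        · exact absurd (rep_nat 20 (huniv 20)) (not_rep 5 3 1 (by norm_num) (by norm_num) (by norm_num) (by decide))
        · exact absurd (rep_nat 20 (huniv 20)) (not_rep 5 3 1 (by norm_num) (by norm_num) (by norm_num) (by decide))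
    · -- d = 2
      subst hd2v
      obtain ⟨x7, y7, z7, hE7⟩ := rep_nat 4 (huniv 4)
      have tb7 : 2*(y7^2) ≤ b*y7^2 := Nat.mul_le_mul hbge le_rfl
      have hx7 : x7 ≤ 2 := aux_msb (show x7*(x7+1) < 3*4 by omega)
      have hy7 : y7 ≤ 1 := aux_sq (show y7^2 < 2*2 by omega)
      have hz7 : z7 ≤ 2 := by omega
      have hS7 : b = 2 ∨ b = 3 ∨ b = 4 := by
        interval_cases x7 <;> interval_cases y7 <;> interval_cases z7 <;> omega
      rcases hS7 with hbv | hbv | hbv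
      · subst hbv
        obtain ⟨x8, y8, z8, hE8⟩ := rep_nat 27 (huniv 27)
        have tz8 : 1*(z8*(z8-1)) ≤ c*(z8*(z8-1)) := Nat.mul_le_mul hc le_rfl
        have hx8 : x8 ≤ 6 := aux_msb (show x8*(x8+1) < 7*8 by omega)
        have hy8 : y8 ≤ 3 := aux_sq (show y8^2 < 4*4 by omega)
        have hz8 : z8 ≤ 8 := aux_pred (show z8*(z8-1) < 7*8 by omega)
        have hS8 : c = 1 ∨ c = 3 ∨ c = 5 ∨ c = 7 ∨ c = 9 ∨ c = 11 ∨ c = 13 ∨ c = 15 ∨ c = 17 ∨ c = 21 ∨ c = 23 := by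
          interval_cases x8 <;> interval_cases y8 <;> interval_cases z8 <;> omega
        rcases hS8 with h8c|h8c|h8c|h8c|h8c|h8c|h8c|h8c|h8c|h8c|h8c <;> subst h8c
        · exact Or.inl ⟨rfl, rfl, L12⟩
        · exact Or.inr (Or.inr (Or.inr (Or.inr (Or.inr (Or.inl ⟨rfl, rfl, L32⟩)))))
        · exact Or.inr (Or.inr (Or.inr (Or.inr (Or.inr (Or.inr (Or.inr (Or.inl ⟨rfl, rfl, L52⟩)))))))
        · exact Or.inr (Or.inr (Or.inr (Or.inr (Or.inr (Or.inr (Or.inr (Or.inr (Or.inl ⟨rfl, rfl, L72⟩))))))))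
        · exact Or.inr (Or.inr (Or.inr (Or.inr (Or.inr (Or.inr (Or.inr (Or.inr (Or.inr (Or.inl ⟨rfl, rfl, L92⟩)))))))))
        · exact absurd (rep_nat 22 (huniv 22)) (not_rep 6 3 1 (by norm_num) (by norm_num) (by norm_num) (by decide))
        · exact absurd (rep_nat 43 (huniv 43)) (not_rep 8 4 2 (by norm_num) (by norm_num) (by norm_num) (by decide))
        · exact absurd (rep_nat 419 (huniv 419)) (not_rep 28 14 6 (by norm_num) (by norm_num) (by norm_num) (by decide))
        · exact absurd (rep_nat 43 (huniv 43)) (not_rep 8 4 1 (by norm_num) (by norm_num) (by norm_num) (by decide))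
        · exact absurd (rep_nat 22 (huniv 22)) (not_rep 6 3 1 (by norm_num) (by norm_num) (by norm_num) (by decide))
        · exact absurd (rep_nat 22 (huniv 22)) (not_rep 6 3 0 (by norm_num) (by norm_num) (by norm_num) (by decide))
      · subst hbv
        obtain ⟨x9, y9, z9, hE9⟩ := rep_nat 7 (huniv 7)
        have hx9 : x9 ≤ 3 := aux_msb (show x9*(x9+1) < 4*5 by omega)
        have hy9 : y9 ≤ 1 := aux_sq (show y9^2 < 2*2 by omega)
        have hz9 : z9 ≤ 3 := by omega
        have hS9 : c = 3 := by
          interval_cases x9 <;> interval_cases y9 <;> interval_cases z9 <;> omega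
        subst hS9
        exact Or.inr (Or.inr (Or.inr (Or.inr (Or.inr (Or.inr (Or.inr (Or.inr (Or.inr (Or.inr (Or.inr (Or.inl ⟨rfl, rfl, L32⟩)))))))))))
      · subst hbv
        obtain ⟨x10, y10, z10, hE10⟩ := rep_nat 11 (huniv 11)
        have hx10 : x10 ≤ 4 := aux_msb (show x10*(x10+1) < 5*6 by omega)
        have hy10 : y10 ≤ 1 := aux_sq (show y10^2 < 2*2 by omega)
        have hz10 : z10 ≤ 5 := by omega
        have hS10 : c = 1 ∨ c = 3 ∨ c = 7 := by
          interval_cases x10 <;> interval_cases y10 <;> interval_cases z10 <;> omega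
        rcases hS10 with h10c|h10c|h10c <;> subst h10c
        · exact Or.inr (Or.inr (Or.inr (Or.inr (Or.inr (Or.inr (Or.inr (Or.inr (Or.inr (Or.inr (Or.inr (Or.inr (Or.inl ⟨rfl, rfl, L12⟩))))))))))))
        · exact Or.inr (Or.inr (Or.inr (Or.inr (Or.inr (Or.inr (Or.inr (Or.inr (Or.inr (Or.inr (Or.inr (Or.inr (Or.inr (Or.inl ⟨rfl, rfl, L32⟩)))))))))))))
        · exact absurd (rep_nat 13 (huniv 13)) (not_rep 4 1 1 (by norm_num) (by norm_num) (by norm_num) (by decide))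
  · -- branch b = 1
    subst hb1
    have hane1 : a ≠ 1 := fun h => hab (by rw [h])
    have hane2 : a ≠ 2 := fun h => hab' (by rw [h])
    have ha3 : 3 ≤ a := by omega
    obtain ⟨x11, y11, z11, hE11⟩ := rep_nat 2 (huniv 2)
    have ta11 : 3*(x11*(x11+1)) ≤ a*(x11*(x11+1)) := Nat.mul_le_mul ha3 le_rfl
    have tc11 : 2*z11 ≤ d*z11 := Nat.mul_le_mul hd2 le_rfl
    have hx11 : x11 ≤ 0 := aux_msb (show x11*(x11+1) < 1*2 by omega)
    have hy11 : y11 ≤ 1 := aux_sq (show y11^2 < 2*2 by omega)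
    have hz11 : z11 ≤ 1 := by omega
    have hS11 : d = 2 := by
      interval_cases x11 <;> interval_cases y11 <;> interval_cases z11 <;> omega
    subst hS11
    obtain ⟨x12, y12, z12, hE12⟩ := rep_nat 5 (huniv 5)
    have ta12 : 3*(x12*(x12+1)) ≤ a*(x12*(x12+1)) := Nat.mul_le_mul ha3 le_rfl
    have hx12 : x12 ≤ 1 := aux_msb (show x12*(x12+1) < 2*3 by omega)
    have hy12 : y12 ≤ 2 := aux_sq (show y12^2 < 3*3 by omega)
    have hz12 : z12 ≤ 2 := by omega
    have hS12 : a = 3 ∨ a = 4 ∨ a = 5 ∨ c = 1 := by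
      interval_cases x12 <;> interval_cases y12 <;> interval_cases z12 <;> omega
    rcases hS12 with hav | hav | hav | hcv
    · subst hav
      obtain ⟨x13, y13, z13, hE13⟩ := rep_nat 8 (huniv 8)
      have hx13 : x13 ≤ 1 := aux_msb (show x13*(x13+1) < 2*3 by omega)
      have hy13 : y13 ≤ 2 := aux_sq (show y13^2 < 3*3 by omega)
      have hz13 : z13 ≤ 4 := by omega
      have hS13 : c = 1 ∨ c = 3 := by
        interval_cases x13 <;> interval_cases y13 <;> interval_cases z13 <;> omega
      rcases hS13 with h13c|h13c <;> subst h13c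
      · exact Or.inr (Or.inr (Or.inr (Or.inr (Or.inr (Or.inr (Or.inr (Or.inr (Or.inr (Or.inr (Or.inr (Or.inr (Or.inr (Or.inr (Or.inl ⟨rfl, rfl, L12⟩))))))))))))))
      · exact Or.inr (Or.inr (Or.inr (Or.inr (Or.inr (Or.inr (Or.inr (Or.inr (Or.inr (Or.inr (Or.inr (Or.inr (Or.inr (Or.inr (Or.inr (Or.inl ⟨rfl, rfl, L32⟩)))))))))))))))
    · subst hav
      obtain ⟨x14, y14, z14, hE14⟩ := rep_nat 32 (huniv 32)
      have tz14 : 1*(z14*(z14-1)) ≤ c*(z14*(z14-1)) := Nat.mul_le_mul hc le_rfl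
      have hx14 : x14 ≤ 3 := aux_msb (show x14*(x14+1) < 4*5 by omega)
      have hy14 : y14 ≤ 5 := aux_sq (show y14^2 < 6*6 by omega)
      have hz14 : z14 ≤ 9 := aux_pred (show z14*(z14-1) < 8*9 by omega)
      have hS14 : c = 1 ∨ c = 3 ∨ c = 7 ∨ c = 15 ∨ c = 19 ∨ c = 23 ∨ c = 27 := by
        interval_cases x14 <;> interval_cases y14 <;> interval_cases z14 <;> omega
      rcases hS14 with h14c|h14c|h14c|h14c|h14c|h14c|h14c <;> subst h14c
      · exact Or.inr (Or.inr (Or.inr (Or.inr (Or.inr (Or.inr (Or.inr (Or.inr (Or.inr (Or.inr (Or.inr (Or.inr (Or.inr (Or.inr (Or.inr (Or.inr (Or.inl ⟨rfl, rfl, L12⟩))))))))))))))))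
      · exact absurd (rep_nat 17 (huniv 17)) (not_rep 2 4 2 (by norm_num) (by norm_num) (by norm_num) (by decide))
      · exact absurd (rep_nat 17 (huniv 17)) (not_rep 2 4 1 (by norm_num) (by norm_num) (by norm_num) (by decide))
      · exact absurd (rep_nat 17 (huniv 17)) (not_rep 2 4 1 (by norm_num) (by norm_num) (by norm_num) (by decide))
      · exact absurd (rep_nat 17 (huniv 17)) (not_rep 2 4 0 (by norm_num) (by norm_num) (by norm_num) (by decide))
      · exact absurd (rep_nat 17 (huniv 17)) (not_rep 2 4 0 (by norm_num) (by norm_num) (by norm_num) (by decide))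
      · exact absurd (rep_nat 17 (huniv 17)) (not_rep 2 4 0 (by norm_num) (by norm_num) (by norm_num) (by decide))
    · subst hav
      obtain ⟨x15, y15, z15, hE15⟩ := rep_nat 10 (huniv 10)
      have hx15 : x15 ≤ 1 := aux_msb (show x15*(x15+1) < 2*3 by omega)
      have hy15 : y15 ≤ 3 := aux_sq (show y15^2 < 4*4 by omega)
      have hz15 : z15 ≤ 5 := by omega
      have hS15 : c = 1 ∨ c = 5 := by
        interval_cases x15 <;> interval_cases y15 <;> interval_cases z15 <;> omega
      rcases hS15 with h15c|h15c <;> subst h15c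
      · exact absurd (rep_nat 12 (huniv 12)) (not_rep 1 3 4 (by norm_num) (by norm_num) (by norm_num) (by decide))
      · exact absurd (rep_nat 12 (huniv 12)) (not_rep 1 3 1 (by norm_num) (by norm_num) (by norm_num) (by decide))
    · subst hcv
      obtain ⟨x16, y16, z16, hE16⟩ := rep_nat 7 (huniv 7)
      have ta16 : 3*(x16*(x16+1)) ≤ a*(x16*(x16+1)) := Nat.mul_le_mul ha3 le_rfl
      have hx16 : x16 ≤ 1 := aux_msb (show x16*(x16+1) < 2*3 by omega)
      have hy16 : y16 ≤ 2 := aux_sq (show y16^2 < 3*3 by omega)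
      have hz16 : z16 ≤ 3 := by omega
      have hS16 : a = 3 ∨ a = 4 ∨ a = 5 ∨ a = 6 ∨ a = 7 := by
        interval_cases x16 <;> interval_cases y16 <;> interval_cases z16 <;> omega
      rcases hS16 with hav|hav|hav|hav|hav <;> subst hav
      · exact Or.inr (Or.inr (Or.inr (Or.inr (Or.inr (Or.inr (Or.inr (Or.inr (Or.inr (Or.inr (Or.inr (Or.inr (Or.inr (Or.inr (Or.inl ⟨rfl, rfl, L12⟩))))))))))))))
      · exact Or.inr (Or.inr (Or.inr (Or.inr (Or.inr (Or.inr (Or.inr (Or.inr (Or.inr (Or.inr (Or.inr (Or.inr (Or.inr (Or.inr (Or.inr (Or.inr (Or.inl ⟨rfl, rfl, L12⟩))))))))))))))))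
      · exact absurd (rep_nat 12 (huniv 12)) (not_rep 1 3 4 (by norm_num) (by norm_num) (by norm_num) (by decide))
      · exact Or.inr (Or.inr (Or.inr (Or.inr (Or.inr (Or.inr (Or.inr (Or.inr (Or.inr (Or.inr (Or.inr (Or.inr (Or.inr (Or.inr (Or.inr (Or.inr (Or.inr (⟨rfl, rfl, L12⟩)))))))))))))))))
      · exact absurd (rep_nat 19 (huniv 19)) (not_rep 1 4 5 (by norm_num) (by norm_num) (by norm_num) (by decide))
end

section
/- The sum T_x + T_y + z(z+2) is universal over ℕ; that is, every n ∈ ℕ can be written as T_x + T_y + z(z+2) with x, y, z ∈ ℕ. -/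
open Matrix

/-- divide-by-2 helper -/
lemma half_sum (n x y z : ℕ) (h : 2*n = x*(x+1) + y*(y+1) + 2*(z*(z+2))) :
    n = x*(x+1)/2 + y*(y+1)/2 + z*(z+2) := by
  have hx : 2 ∣ x*(x+1) := (Nat.even_mul_succ_self x).two_dvd
  have hy : 2 ∣ y*(y+1) := (Nat.even_mul_succ_self y).two_dvd
  omega

lemma natAbs_sq_cast (a : ℤ) : ((a.natAbs : ℤ))^2 = a^2 := by
  rw [← Int.abs_eq_natAbs, sq_abs]

lemma sq_mod_four (a : ℕ) : (a % 2 = 0 ∧ a^2 % 4 = 0) ∨ (a % 2 = 1 ∧ a^2 % 4 = 1) := by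
  rcases Nat.even_or_odd a with ⟨k, hk⟩ | ⟨k, hk⟩
  · left; constructor; omega
    have : a^2 = 4 * k^2 := by subst hk; ring
    omega
  · right; constructor; omega
    have : a^2 = 4 * (k^2 + k) + 1 := by subst hk; ring
    omega

/-- endgame: from a suitable 3-square rep of 4n+5 to the goal -/
lemma endgame (n A B C : ℕ) (hA : A % 2 = 1) (hB : B % 2 = 0) (hC : C % 2 = 0)
    (hB2 : 2 ≤ B) (h : A^2 + B^2 + C^2 = 4*n + 5) :
    ∃ x y z : ℕ, n = x*(x+1)/2 + y*(y+1)/2 + z*(z+2) := by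
  have hAC : A ≠ C := by omega
  obtain ⟨z, hz⟩ : ∃ z, 2*z + 2 = B := ⟨B/2 - 1, by omega⟩
  obtain ⟨x, hx⟩ : ∃ x, 2*x + 1 = A + C := ⟨(A + C)/2, by omega⟩
  rcases Nat.lt_or_ge A C with hlt | hge
  · obtain ⟨y, hy⟩ : ∃ y, 2*y + 1 + A = C := ⟨(C - A)/2, by omega⟩
    refine ⟨x, y, z, half_sum _ _ _ _ ?_⟩
    nlinarith [hx, hy, hz, h]
  · have hlt : C < A := by omega
    obtain ⟨y, hy⟩ : ∃ y, 2*y + 1 + C = A := ⟨(A - C)/2, by omega⟩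
    refine ⟨x, y, z, half_sum _ _ _ _ ?_⟩
    nlinarith [hx, hy, hz, h]

/-- from two positive sums-of-two-squares summing to odd a, a good rep of a² -/
lemma caseB_main (a u v p q r s : ℕ) (hsum : u + v = a) (hu : u = p^2 + q^2)
    (hv : v = r^2 + s^2) (hu1 : 1 ≤ u) (hv1 : 1 ≤ v) (ha : a % 2 = 1) :
    ∃ A B C : ℕ, A % 2 = 1 ∧ B % 2 = 0 ∧ C % 2 = 0 ∧ 2 ≤ B ∧ A^2 + B^2 + C^2 = a^2 := by
  set e : ℕ := p*r + q*s with he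
  set f : ℤ := (p : ℤ)*s - (q : ℤ)*r with hf
  have brahma : (e:ℤ)^2 + f^2 = (u : ℤ) * v := by
    rw [he, hf, hu, hv]; push_cast; ring
  set A : ℕ := ((a : ℤ) - 2*u).natAbs with hA
  have hA2 : (A:ℤ)^2 = ((a:ℤ) - 2*u)^2 := natAbs_sq_cast _
  set F : ℕ := f.natAbs with hF
  have hF2 : (F:ℤ)^2 = f^2 := natAbs_sq_cast _
  have key : (A:ℤ)^2 + (2*e:ℕ)^2 + (2*F:ℕ)^2 = (a:ℤ)^2 := by
    push_cast
    have hva : (v:ℤ) = a - u := by push_cast; omega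
    nlinarith [brahma, hA2, hF2]
  have hef : 1 ≤ e ∨ 1 ≤ F := by
    by_contra hcon
    push_neg at hcon
    have he0 : e = 0 := by omega
    have hf0 : F = 0 := by omega
    have hfz : f = 0 := by rw [← Int.natAbs_eq_zero]; exact hf0
    rw [he0, hfz] at brahma
    have : (u:ℤ) * v = 0 := by push_cast at brahma; linarith
    have h2 : u * v = 0 := by exact_mod_cast this
    have : 1 ≤ u * v := Nat.one_le_iff_ne_zero.mpr (by positivity)
    omega
  have hApar : A % 2 = 1 := by
    have h1 : ((a:ℤ) - 2*u) % 2 = 1 := by omega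
    have : (A : ℤ) = ((a:ℤ) - 2*u) ∨ (A : ℤ) = -((a:ℤ) - 2*u) := by
      rw [hA]; rcases Int.natAbs_eq ((a:ℤ) - 2*u) with h | h
      · left; omega
      · right; omega
    rcases this with h | h <;> omega
  rcases le_total e F with hle | hle
  · refine ⟨A, 2*F, 2*e, hApar, by omega, by omega, by omega, ?_⟩
    have : ((A^2 + (2*F)^2 + (2*e)^2 : ℕ) : ℤ) = ((a^2 : ℕ) : ℤ) := by push_cast at key ⊢; linarith
    exact_mod_cast this
  · refine ⟨A, 2*e, 2*F, hApar, by omega, by omega, by omega, ?_⟩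
    have : ((A^2 + (2*e)^2 + (2*F)^2 : ℕ) : ℤ) = ((a^2 : ℕ) : ℤ) := by push_cast at key ⊢; linarith
    exact_mod_cast this

/-- boost a good rep of t² to a good rep of (t²)² -/
lemma boost (t A' B' C' : ℕ) (hA' : A' % 2 = 1) (hB' : B' % 2 = 0) (hC' : C' % 2 = 0)
    (hB2' : 2 ≤ B') (heq' : A'^2 + B'^2 + C'^2 = t^2) :
    ∃ A B C : ℕ, A % 2 = 1 ∧ B % 2 = 0 ∧ C % 2 = 0 ∧ 2 ≤ B ∧ A^2 + B^2 + C^2 = (t^2)^2 := by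
  have hA1 : 1 ≤ A' := by omega
  have hB1 : 1 ≤ B' := by omega
  obtain ⟨_, hA4⟩ | ⟨_, hA4⟩ := sq_mod_four A'; · omega
  obtain ⟨_, hB4⟩ | ⟨_, hB4⟩ := sq_mod_four B'; swap; · omega
  by_cases hC0 : C' = 0
  · subst hC0
    set X : ℤ := ((A'^2 : ℕ) : ℤ) - ((B'^2 : ℕ) : ℤ) with hX
    set D : ℕ := X.natAbs with hD
    have hDX : (D:ℤ) = X ∨ (D:ℤ) = -X := by
      rw [hD]; rcases Int.natAbs_eq X with h | h
      · left; omega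
      · right; omega
    have hApar : D % 2 = 1 := by rcases hDX with h | h <;> omega
    have hD2 : (D:ℤ)^2 = X^2 := natAbs_sq_cast _
    refine ⟨D, 2*(A'*B'), 0, hApar, by omega, by omega, by nlinarith, ?_⟩
    have hpz : ((t:ℤ))^2 = (A':ℤ)^2 + (B':ℤ)^2 := by zify at heq'; linarith
    have key : ((D:ℤ))^2 + ((2*(A'*B') : ℕ) : ℤ)^2 + ((0:ℕ):ℤ)^2 = (((t:ℤ))^2)^2 := by
      rw [hX] at hD2; push_cast at hD2 ⊢
      linear_combination hD2 - ((t:ℤ)^2 + (A':ℤ)^2 + (B':ℤ)^2) * hpz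
    exact_mod_cast key
  · have hC2 : 2 ≤ C' := by omega
    obtain ⟨_, hC4⟩ | ⟨_, hC4⟩ := sq_mod_four C'; swap; · omega
    set X : ℤ := ((A'^2 : ℕ) : ℤ) + ((B'^2 : ℕ) : ℤ) - ((C'^2 : ℕ) : ℤ) with hX
    set D : ℕ := X.natAbs with hD
    have hDX : (D:ℤ) = X ∨ (D:ℤ) = -X := by
      rw [hD]; rcases Int.natAbs_eq X with h | h
      · left; omega
      · right; omega
    have hApar : D % 2 = 1 := by rcases hDX with h | h <;> omega
    have hD2 : (D:ℤ)^2 = X^2 := natAbs_sq_cast _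
    have hC1 : 1 ≤ C' := by omega
    refine ⟨D, 2*(B'*C'), 2*(A'*C'), hApar, by omega, by omega, by nlinarith, ?_⟩
    have hpz : ((t:ℤ))^2 = (A':ℤ)^2 + (B':ℤ)^2 + (C':ℤ)^2 := by zify at heq'; linarith
    have key : ((D:ℤ))^2 + ((2*(B'*C') : ℕ) : ℤ)^2 + ((2*(A'*C'):ℕ):ℤ)^2 = (((t:ℤ))^2)^2 := by
      rw [hX] at hD2; push_cast at hD2 ⊢
      linear_combination hD2 - ((t:ℤ)^2 + (A':ℤ)^2 + (B':ℤ)^2 + (C':ℤ)^2) * hpz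
    exact_mod_cast key

/-- every odd a ≥ 3 : a² has a rep A²+B²+C², A odd, B even ≥ 2, C even -/
lemma oddSq_three (a : ℕ) (h3 : 3 ≤ a) (hodd : a % 2 = 1) :
    ∃ A B C : ℕ, A % 2 = 1 ∧ B % 2 = 0 ∧ C % 2 = 0 ∧ 2 ≤ B ∧ A^2 + B^2 + C^2 = a^2 := by
  induction a using Nat.strong_induction_on with
  | _ a ih =>
  obtain ⟨p, q, r, s, hpqrs⟩ := Nat.sum_four_squares a
  -- helper for the "a = t²" degenerate branch
  have sqbranch : ∀ t : ℕ, a = t^2 → ∃ A B C : ℕ,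
      A % 2 = 1 ∧ B % 2 = 0 ∧ C % 2 = 0 ∧ 2 ≤ B ∧ A^2 + B^2 + C^2 = a^2 := by
    intro t hat
    have htodd : t % 2 = 1 := by
      rcases sq_mod_four t with ⟨_, h4⟩ | ⟨h2, _⟩; omega; omega
    have ht2 : 2 ≤ t := by nlinarith
    have ht3 : 3 ≤ t := by omega
    have hta : t < a := by nlinarith
    obtain ⟨A', B', C', hA', hB', hC', hB2', heq'⟩ := ih t hta ht3 htodd
    rw [hat]
    exact boost t A' B' C' hA' hB' hC' hB2' heq'
  by_cases h1 : 1 ≤ p^2 + q^2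
  · by_cases h2 : 1 ≤ r^2 + s^2
    · exact caseB_main a (p^2+q^2) (r^2+s^2) p q r s (by omega) rfl rfl h1 h2 hodd
    · have hrs : r = 0 ∧ s = 0 := by constructor <;> nlinarith
      have hpq : p^2 + q^2 = a := by omega
      by_cases hp1 : 1 ≤ p^2
      · by_cases hq1 : 1 ≤ q^2
        · exact caseB_main a (p^2) (q^2) p 0 q 0 (by omega) (by ring) (by ring) hp1 hq1 hodd
        · exact sqbranch p (by nlinarith)
      · exact sqbranch q (by nlinarith)
  · have hpq : p = 0 ∧ q = 0 := by constructor <;> nlinarith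
    have hrs : r^2 + s^2 = a := by omega
    by_cases hr1 : 1 ≤ r^2
    · by_cases hs1 : 1 ≤ s^2
      · exact caseB_main a (r^2) (s^2) r 0 s 0 (by omega) (by ring) (by ring) hr1 hs1 hodd
      · exact sqbranch r (by nlinarith)
    · exact sqbranch s (by nlinarith)

set_option maxHeartbeats 1000000 in
/-- Reduction theory for positive definite integral binary quadratic forms. -/
lemma binary_reduce (A B C : ℤ)
    (hpos : ∀ y z : ℤ, ¬(y = 0 ∧ z = 0) → 0 < A*y^2 + B*y*z + C*z^2) :
    ∃ r s u v a b c : ℤ,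
      r*v - s*u = 1 ∧
      a = A*r^2 + B*r*s + C*s^2 ∧
      c = A*u^2 + B*u*v + C*v^2 ∧
      b = 2*A*r*u + B*(r*v + s*u) + 2*C*s*v ∧
      0 < a ∧ a ≤ c ∧ |b| ≤ a ∧
      4*a*c - b^2 = 4*A*C - B^2 ∧ 3*a^2 ≤ 4*A*C - B^2 := by
  set S : Set ℕ := {t | ∃ y z : ℤ, ¬(y = 0 ∧ z = 0) ∧ A*y^2 + B*y*z + C*z^2 = (t:ℤ)} with hS
  have hSne : S.Nonempty := by
    have hA : 0 < A := by simpa using hpos 1 0 (by simp)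
    exact ⟨A.toNat, 1, 0, by simp, by push_cast; omega⟩
  obtain ⟨m, hm⟩ : ∃ m : ℕ, m = sInf S := ⟨_, rfl⟩
  obtain ⟨y₀, z₀, hy₀, hFy₀⟩ := Nat.sInf_mem hSne
  rw [← hm] at hFy₀
  have hmin : ∀ y z : ℤ, ¬(y = 0 ∧ z = 0) → (m:ℤ) ≤ A*y^2 + B*y*z + C*z^2 := by
    intro y z hyz
    have hp := hpos y z hyz
    have hmem : (A*y^2 + B*y*z + C*z^2).toNat ∈ S := ⟨y, z, hyz, by omega⟩
    have := Nat.sInf_le hmem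
    rw [← hm] at this
    omega
  have hm1 : 0 < (m:ℤ) := hFy₀ ▸ hpos y₀ z₀ hy₀
  -- primitivize the minimal vector
  obtain ⟨g, hg⟩ : ∃ g : ℕ, g = Int.gcd y₀ z₀ := ⟨_, rfl⟩
  have hgpos : 0 < (g:ℤ) := by
    have : g ≠ 0 := by
      intro h0
      rw [hg] at h0
      rw [Int.gcd_eq_zero_iff] at h0
      exact hy₀ h0
    omega
  obtain ⟨r, hr⟩ : (g:ℤ) ∣ y₀ := by rw [hg]; exact Int.gcd_dvd_left _ _
  obtain ⟨s, hs⟩ : (g:ℤ) ∣ z₀ := by rw [hg]; exact Int.gcd_dvd_right _ _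
  have hrs0 : ¬(r = 0 ∧ s = 0) := by
    rintro ⟨rfl, rfl⟩
    simp at hr hs
    exact hy₀ ⟨hr, hs⟩
  have hval : (g:ℤ)^2 * (A*r^2 + B*r*s + C*s^2) = (m:ℤ) := by
    rw [← hFy₀, hr, hs]; ring
  have hrsm : (m:ℤ) ≤ A*r^2 + B*r*s + C*s^2 := hmin r s hrs0
  have hgsq : ((g:ℤ))^2 ≤ 1 := by
    have hp1 : (g:ℤ)^2 * (m:ℤ) ≤ (g:ℤ)^2 * (A*r^2 + B*r*s + C*s^2) :=
      mul_le_mul_of_nonneg_left hrsm (sq_nonneg _)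
    by_contra hcon
    push_neg at hcon
    have h2g : (2:ℤ) ≤ (g:ℤ)^2 := by omega
    have hp2 : 2 * (m:ℤ) ≤ (g:ℤ)^2 * (m:ℤ) :=
      mul_le_mul_of_nonneg_right h2g (by omega)
    linarith only [hp1, hp2, hval, hm1]
  have hg1 : (g:ℤ) = 1 ∧ A*r^2 + B*r*s + C*s^2 = (m:ℤ) := by
    have hgeq : (g:ℤ) = 1 := by
      by_contra hcon
      have h2 : (2:ℤ) ≤ (g:ℤ) := by omega
      have h4 : (2:ℤ)*2 ≤ (g:ℤ)*(g:ℤ) := mul_le_mul h2 h2 (by norm_num) (by omega)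
      have : (g:ℤ)^2 = (g:ℤ)*(g:ℤ) := sq (g:ℤ) ▸ by ring
      linarith only [h4, hgsq, this]
    refine ⟨hgeq, ?_⟩
    rw [hgeq] at hval; linarith [hval]
  have hcop : Int.gcd r s = 1 := by
    have : y₀ = r := by rw [hr, hg1.1]; ring
    have h2 : z₀ = s := by rw [hs, hg1.1]; ring
    rw [← this, ← h2]
    rw [← Nat.cast_inj (R := ℤ), ← hg]
    · rw [hg1.1]; simp
  obtain ⟨x, y, hxy⟩ : ∃ x y, x * r + y * s = 1 := Int.isCoprime_iff_gcd_eq_one.mpr hcop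
  obtain ⟨v₀, hv₀⟩ : ∃ v₀ : ℤ, v₀ = x := ⟨_, rfl⟩
  obtain ⟨u₀, hu₀⟩ : ∃ u₀ : ℤ, u₀ = -y := ⟨_, rfl⟩
  have hdet0 : r * v₀ - s * u₀ = 1 := by rw [hv₀, hu₀]; linarith [hxy]
  obtain ⟨a, ha⟩ : ∃ a : ℤ, a = A*r^2 + B*r*s + C*s^2 := ⟨_, rfl⟩
  have ha_pos : 0 < a := ha ▸ hpos r s hrs0
  have ham : a = (m:ℤ) := by rw [ha]; exact hg1.2
  obtain ⟨b₀, hb₀⟩ : ∃ b₀ : ℤ, b₀ = 2*A*r*u₀ + B*(r*v₀ + s*u₀) + 2*C*s*v₀ := ⟨_, rfl⟩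
  -- shift to make |b| ≤ a
  have h2a : 0 < 2*a := by omega
  obtain ⟨t, ht⟩ : ∃ t : ℤ, t = b₀ % (2*a) := ⟨_, rfl⟩
  obtain ⟨k, hk⟩ : ∃ k : ℤ, k = -(b₀ / (2*a)) := ⟨_, rfl⟩
  have htk : b₀ + 2*a*k = t := by rw [ht, hk, Int.emod_def]; ring
  have ht0 : 0 ≤ t := ht ▸ Int.emod_nonneg b₀ (by omega)
  have ht2a : t < 2*a := ht ▸ Int.emod_lt_of_pos b₀ h2a
  -- choose final shift k' with b in [-a, a]
  obtain ⟨k', b, hb_eq, hb_range⟩ :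
      ∃ k' b : ℤ, b₀ + 2*a*k' = b ∧ -a ≤ b ∧ b ≤ a := by
    by_cases hta : t ≤ a
    · exact ⟨k, t, htk, by omega, hta⟩

    · exact ⟨k - 1, t - 2*a, by linear_combination htk, by omega, by omega⟩
  obtain ⟨u, hu⟩ : ∃ u : ℤ, u = u₀ + k'*r := ⟨_, rfl⟩
  obtain ⟨v, hv⟩ : ∃ v : ℤ, v = v₀ + k'*s := ⟨_, rfl⟩
  have hdet : r*v - s*u = 1 := by rw [hu, hv]; linear_combination hdet0
  obtain ⟨c, hc⟩ : ∃ c : ℤ, c = A*u^2 + B*u*v + C*v^2 := ⟨_, rfl⟩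
  have hb : b = 2*A*r*u + B*(r*v + s*u) + 2*C*s*v := by
    rw [hu, hv, ← hb_eq, hb₀, ha]; ring
  have huv0 : ¬(u = 0 ∧ v = 0) := by
    rintro ⟨h1, h2⟩
    rw [h1, h2] at hdet
    simp at hdet
  have hca : a ≤ c := by rw [ham, hc]; exact hmin u v huv0
  have hdisc : 4*a*c - b^2 = 4*A*C - B^2 := by
    have : 4*a*c - b^2 = (4*A*C - B^2) * (r*v - s*u)^2 := by
      rw [ha, hc, hb]; ring
    rw [this, hdet]; ring
  have habs : |b| ≤ a := abs_le.mpr ⟨hb_range.1, hb_range.2⟩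
  refine ⟨r, s, u, v, a, b, c, hdet, ha, hc, hb, ha_pos, hca, habs, hdisc, ?_⟩
  have h1 : b^2 ≤ a^2 := by
    have h := pow_le_pow_left₀ (abs_nonneg b) habs 2
    rwa [sq_abs] at h
  have h2 : a*a ≤ a*c := mul_le_mul_of_nonneg_left hca (le_of_lt ha_pos)
  linarith only [hdisc, h1, h2]

/-- near-rounding: for m > 0 and any L there is x with |m*x + L| ≤ m/2 (as 4(mx+L)² ≤ m²) -/
lemma round_div (m L : ℤ) (hm : 0 < m) : ∃ x rr : ℤ, m*x + L = rr ∧ 4*rr^2 ≤ m^2 := by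
  have h0 : 0 ≤ L % m := Int.emod_nonneg L (by omega)
  have h1 : L % m < m := Int.emod_lt_of_pos L hm
  have hdef : m * (L / m) + L % m = L := Int.mul_ediv_add_emod L m
  by_cases h : 2*(L % m) ≤ m
  · refine ⟨-(L / m), L % m, by linarith [hdef], by nlinarith [h0, h]⟩
  · refine ⟨-(L / m) - 1, L % m - m, by linarith [hdef], by nlinarith [h1, h]⟩

set_option maxHeartbeats 1000000 in
/-- the minimum of a positive definite integral ternary form of determinant 1 is 1 -/
lemma ternary_min_one (m p q d e f : ℤ)
    (hdet : m*d*f + 2*p*q*e - m*e^2 - d*q^2 - f*p^2 = 1)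
    (hm : 0 < m)
    (hmin : ∀ x y z : ℤ, ¬(x = 0 ∧ y = 0 ∧ z = 0) →
      m ≤ m*x^2 + d*y^2 + f*z^2 + 2*p*x*y + 2*q*x*z + 2*e*y*z) :
    m = 1 := by
  set A' : ℤ := m*d - p^2 with hA'
  set B' : ℤ := 2*(m*e - p*q) with hB'
  set C' : ℤ := m*f - q^2 with hC'
  have key : ∀ x y z : ℤ,
      m*(m*x^2 + d*y^2 + f*z^2 + 2*p*x*y + 2*q*x*z + 2*e*y*z)
        = (m*x + p*y + q*z)^2 + (A'*y^2 + B'*y*z + C'*z^2) := by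
    intro x y z; rw [hA', hB', hC']; ring
  have hdisc : 4*A'*C' - B'^2 = 4*m := by
    rw [hA', hB', hC']; linear_combination (4*m)*hdet
  -- positivity and lower bound for the binary complement
  have hFlow : ∀ y z : ℤ, ¬(y = 0 ∧ z = 0) → 3*m^2 ≤ 4*(A'*y^2 + B'*y*z + C'*z^2) := by
    intro y z hyz
    obtain ⟨x, rr, hxr, hrr⟩ := round_div m (p*y + q*z) hm
    have hq := hmin x y z (by tauto)
    have hk := key x y z
    have hm2 : m*m ≤ m*(m*x^2 + d*y^2 + f*z^2 + 2*p*x*y + 2*q*x*z + 2*e*y*z) :=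
      mul_le_mul_of_nonneg_left hq (by omega)
    have hsq : (m*x + p*y + q*z)^2 = rr^2 := by rw [← hxr]; ring
    nlinarith [hm2, hk, hsq, hrr]
  have hFpos : ∀ y z : ℤ, ¬(y = 0 ∧ z = 0) → 0 < A'*y^2 + B'*y*z + C'*z^2 := by
    intro y z hyz
    have := hFlow y z hyz
    nlinarith [this, hm]
  obtain ⟨r, s, u, v, a, b, c, hdet2, ha, hc, hb, hapos, hac, habs, hd2, h3a⟩ :=
    binary_reduce A' B' C' hFpos
  have hrs : ¬(r = 0 ∧ s = 0) := by
    rintro ⟨rfl, rfl⟩; simp at hdet2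
  have h4a : 3*m^2 ≤ 4*a := by rw [ha]; exact hFlow r s hrs
  have h3a' : 3*a^2 ≤ 4*m := by rwa [hdisc] at h3a
  -- 27 m⁴ ≤ 48 a² ≤ 64 m  ⇒  m = 1
  by_contra hcon
  have hm2 : 2 ≤ m := by omega
  have hsq : (3*m^2)^2 ≤ (4*a)^2 := by
    have h1 : 0 ≤ 3*m^2 := by positivity
    exact pow_le_pow_left₀ h1 h4a 2
  have h8 : 8 ≤ m^3 := by
    calc (8:ℤ) = 2^3 := by norm_num
    _ ≤ m^3 := pow_le_pow_left₀ (by norm_num) hm2 3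
  have hchain : 9*m^4 ≤ 16*a^2 := by nlinarith [hsq]
  have hchain2 : 27*m^4 ≤ 64*m := by nlinarith [hchain, h3a']
  have : 8*m ≤ m^3*m := mul_le_mul_of_nonneg_right h8 (by omega)
  nlinarith [hchain2, this, hm]

lemma qval_expand (M : Matrix (Fin 3) (Fin 3) ℤ) (v : Fin 3 → ℤ) :
    v ⬝ᵥ (M *ᵥ v) = M 0 0*(v 0)^2 + M 1 1*(v 1)^2 + M 2 2*(v 2)^2
      + (M 0 1 + M 1 0)*(v 0*v 1) + (M 0 2 + M 2 0)*(v 0*v 2) + (M 1 2 + M 2 1)*(v 1*v 2) := by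
  simp [Matrix.mulVec, dotProduct, Fin.sum_univ_three]
  ring

lemma qval_basis (G W : Matrix (Fin 3) (Fin 3) ℤ) (w : Fin 3 → ℤ) :
    w ⬝ᵥ ((Wᵀ*G*W) *ᵥ w) = (W *ᵥ w) ⬝ᵥ (G *ᵥ (W *ᵥ w)) := by
  rw [← Matrix.mulVec_mulVec, ← Matrix.mulVec_mulVec, Matrix.dotProduct_mulVec,
    Matrix.vecMul_transpose]

lemma vec3_0 {x y z : ℤ} : (![x,y,z]) 0 = x := rfl
lemma vec3_1 {x y z : ℤ} : (![x,y,z]) 1 = y := rfl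
lemma vec3_2 {x y z : ℤ} : (![x,y,z]) 2 = z := rfl

set_option maxHeartbeats 1600000 in
/-- A positive definite integral ternary quadratic form of determinant 1
represents its upper-left coefficient as a sum of three squares. -/
theorem ternary_repr (a00 a01 a02 a11 a12 a22 : ℤ)
    (hdet : a00*a11*a22 + 2*a01*a02*a12 - a00*a12^2 - a11*a02^2 - a22*a01^2 = 1)
    (hpos : ∀ x y z : ℤ, ¬(x = 0 ∧ y = 0 ∧ z = 0) →
      0 < a00*x^2 + a11*y^2 + a22*z^2 + 2*a01*x*y + 2*a02*x*z + 2*a12*y*z) :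
    ∃ x y z : ℤ, a00 = x^2 + y^2 + z^2 := by
  set G : Matrix (Fin 3) (Fin 3) ℤ := !![a00,a01,a02; a01,a11,a12; a02,a12,a22] with hG
  have hGsym : Gᵀ = G := by
    rw [hG]; ext i j; fin_cases i <;> fin_cases j <;> simp
  have hlink : ∀ v : Fin 3 → ℤ, v ⬝ᵥ (G *ᵥ v)
      = a00*(v 0)^2 + a11*(v 1)^2 + a22*(v 2)^2
        + 2*a01*(v 0)*(v 1) + 2*a02*(v 0)*(v 2) + 2*a12*(v 1)*(v 2) := by
    intro v
    rw [qval_expand, hG]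
    simp
    ring
  have hposv : ∀ v : Fin 3 → ℤ, ¬(v 0 = 0 ∧ v 1 = 0 ∧ v 2 = 0) → 0 < v ⬝ᵥ (G *ᵥ v) := by
    intro v hv
    rw [hlink]
    exact hpos (v 0) (v 1) (v 2) hv
  -- minimum of the form
  set S : Set ℕ := {n | ∃ x y z : ℤ, ¬(x = 0 ∧ y = 0 ∧ z = 0) ∧
      a00*x^2 + a11*y^2 + a22*z^2 + 2*a01*x*y + 2*a02*x*z + 2*a12*y*z = (n:ℤ)} with hS
  have hSne : S.Nonempty := by
    have h1 : 0 < a00 := by simpa using hpos 1 0 0 (by simp)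
    exact ⟨a00.toNat, 1, 0, 0, by simp, by push_cast; ring_nf; omega⟩
  obtain ⟨m, hm⟩ : ∃ m : ℕ, m = sInf S := ⟨_, rfl⟩
  have hmem := Nat.sInf_mem hSne
  rw [← hm] at hmem
  obtain ⟨x₀, y₀, z₀, h0ne, hval0⟩ := hmem
  have hmin : ∀ x y z : ℤ, ¬(x = 0 ∧ y = 0 ∧ z = 0) →
      (m:ℤ) ≤ a00*x^2 + a11*y^2 + a22*z^2 + 2*a01*x*y + 2*a02*x*z + 2*a12*y*z := by
    intro x y z hxyz
    have hp := hpos x y z hxyz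
    have hmem2 : (a00*x^2 + a11*y^2 + a22*z^2 + 2*a01*x*y + 2*a02*x*z + 2*a12*y*z).toNat ∈ S :=
      ⟨x, y, z, hxyz, by omega⟩
    have := Nat.sInf_le hmem2
    rw [← hm] at this
    omega
  have hmpos : 0 < (m:ℤ) := hval0 ▸ hpos x₀ y₀ z₀ h0ne
  -- primitivize the minimal vector
  obtain ⟨g1, hg1⟩ : ∃ g1 : ℕ, g1 = Int.gcd x₀ y₀ := ⟨_, rfl⟩
  obtain ⟨gg, hgg⟩ : ∃ gg : ℕ, gg = Int.gcd (g1:ℤ) z₀ := ⟨_, rfl⟩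
  have hd1 : (gg:ℤ) ∣ x₀ := by
    have h1 : (gg:ℤ) ∣ (g1:ℤ) := by rw [hgg]; exact Int.gcd_dvd_left _ _
    have h2 : (g1:ℤ) ∣ x₀ := by rw [hg1]; exact Int.gcd_dvd_left _ _
    exact h1.trans h2
  have hd2 : (gg:ℤ) ∣ y₀ := by
    have h1 : (gg:ℤ) ∣ (g1:ℤ) := by rw [hgg]; exact Int.gcd_dvd_left _ _
    have h2 : (g1:ℤ) ∣ y₀ := by rw [hg1]; exact Int.gcd_dvd_right _ _
    exact h1.trans h2
  have hd3 : (gg:ℤ) ∣ z₀ := by rw [hgg]; exact Int.gcd_dvd_right _ _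
  have hggpos : 0 < (gg:ℤ) := by
    have hne : gg ≠ 0 := by
      intro h0
      rw [hgg, Int.gcd_eq_zero_iff] at h0
      obtain ⟨ha', hb'⟩ := h0
      rw [hg1] at ha'
      norm_cast at ha'
      rw [Int.gcd_eq_zero_iff] at ha'
      exact h0ne ⟨ha'.1, ha'.2, hb'⟩
    exact_mod_cast Nat.pos_of_ne_zero hne
  obtain ⟨r, hr⟩ := hd1
  obtain ⟨s, hs⟩ := hd2
  obtain ⟨t, ht⟩ := hd3
  have hrst0 : ¬(r = 0 ∧ s = 0 ∧ t = 0) := by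
    rintro ⟨rfl, rfl, rfl⟩
    simp at hr hs ht
    exact h0ne ⟨hr, hs, ht⟩
  have hscale : (gg:ℤ)^2 * (a00*r^2 + a11*s^2 + a22*t^2 + 2*a01*r*s + 2*a02*r*t + 2*a12*s*t)
      = (m:ℤ) := by rw [← hval0, hr, hs, ht]; ring
  have hqrst : (m:ℤ) ≤ a00*r^2 + a11*s^2 + a22*t^2 + 2*a01*r*s + 2*a02*r*t + 2*a12*s*t :=
    hmin r s t hrst0
  have hggsq : ((gg:ℤ))^2 ≤ 1 := by
    have hp1 : (gg:ℤ)^2 * (m:ℤ) ≤ (gg:ℤ)^2 *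
        (a00*r^2 + a11*s^2 + a22*t^2 + 2*a01*r*s + 2*a02*r*t + 2*a12*s*t) :=
      mul_le_mul_of_nonneg_left hqrst (sq_nonneg _)
    by_contra hcon
    push_neg at hcon
    have h2g : (2:ℤ) ≤ (gg:ℤ)^2 := by omega
    have hp2 : 2 * (m:ℤ) ≤ (gg:ℤ)^2 * (m:ℤ) := mul_le_mul_of_nonneg_right h2g (by omega)
    linarith only [hp1, hp2, hscale, hmpos]
  have hgg1 : (gg:ℤ) = 1 := by
    by_contra hcon
    have h2 : (2:ℤ) ≤ (gg:ℤ) := by omega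
    have h4 : (2:ℤ)*2 ≤ (gg:ℤ)*(gg:ℤ) := mul_le_mul h2 h2 (by norm_num) (by omega)
    have hgg2 : (gg:ℤ)^2 = (gg:ℤ)*(gg:ℤ) := by ring
    linarith only [h4, hggsq, hgg2]
  have hx₀ : x₀ = r := by rw [hr, hgg1]; ring
  have hy₀ : y₀ = s := by rw [hs, hgg1]; ring
  have hz₀ : z₀ = t := by rw [ht, hgg1]; ring
  have hggnat : gg = 1 := by exact_mod_cast hgg1
  have hprim : Int.gcd (g1:ℤ) t = 1 := by rw [← hz₀, ← hgg, hggnat]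
  have hvrst : a00*r^2 + a11*s^2 + a22*t^2 + 2*a01*r*s + 2*a02*r*t + 2*a12*s*t = (m:ℤ) := by
    rw [← hx₀, ← hy₀, ← hz₀]; exact hval0
  -- construct a unimodular matrix with first column (r,s,t)
  obtain ⟨W, ε, hWdet, hWeps, hWcol⟩ : ∃ (W : Matrix (Fin 3) (Fin 3) ℤ) (ε : ℤ),
      W.det = ε ∧ (ε = 1 ∨ ε = -1) ∧ W *ᵥ ![1,0,0] = ![r,s,t] := by
    by_cases hcase : g1 = 0
    · have hrs00 : x₀ = 0 ∧ y₀ = 0 := by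
        rw [hg1] at hcase
        exact_mod_cast Int.gcd_eq_zero_iff.mp (by exact_mod_cast hcase)
      have hr0 : r = 0 := by rw [← hx₀]; exact hrs00.1
      have hs0 : s = 0 := by rw [← hy₀]; exact hrs00.2
      have ht1 : t = 1 ∨ t = -1 := by
        rw [hcase] at hprim
        simp [Int.gcd] at hprim
        omega
      refine ⟨!![0,1,0; 0,0,1; t,0,0], t, ?_, ht1, ?_⟩
      · rw [Matrix.det_fin_three]; simp
      · funext i
        fin_cases i <;> simp [Matrix.mulVec, dotProduct, Fin.sum_univ_three, hr0, hs0]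
    · have hg1z : (g1:ℤ) ≠ 0 := by exact_mod_cast hcase
      have hg1rs : (g1:ℤ) = Int.gcd r s := by rw [hg1, hx₀, hy₀]
      obtain ⟨s1, hs1⟩ : ∃ s1 : ℤ, s1 = Int.gcdA r s := ⟨_, rfl⟩
      obtain ⟨t1, ht1⟩ : ∃ t1 : ℤ, t1 = Int.gcdB r s := ⟨_, rfl⟩
      have hbez : (g1:ℤ) = r*s1 + s*t1 := by
        rw [hg1rs, hs1, ht1]; exact Int.gcd_eq_gcd_ab r s
      have hdr : (g1:ℤ) ∣ r := by rw [hg1rs]; exact Int.gcd_dvd_left _ _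
      have hds : (g1:ℤ) ∣ s := by rw [hg1rs]; exact Int.gcd_dvd_right _ _
      obtain ⟨r', hr'⟩ := hdr
      obtain ⟨s', hs'⟩ := hds
      have hr's' : r'*s1 + s'*t1 = 1 := by
        have h1 : (g1:ℤ) * (r'*s1 + s'*t1) = (g1:ℤ) * 1 := by
          rw [mul_one]
          calc (g1:ℤ) * (r'*s1 + s'*t1) = (g1*r')*s1 + (g1*s')*t1 := by ring
          _ = r*s1 + s*t1 := by rw [← hr', ← hs']
          _ = (g1:ℤ) := hbez.symm
        exact mul_left_cancel₀ hg1z h1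
      obtain ⟨α, β, hαβ⟩ : ∃ α β : ℤ, α*(g1:ℤ) + β*t = 1 := by
        have := Int.isCoprime_iff_gcd_eq_one.mpr hprim
        obtain ⟨α, β, h⟩ := this
        exact ⟨α, β, h⟩
      refine ⟨!![r, -t1, -β*r'; s, s1, -β*s'; t, 0, α], 1, ?_, Or.inl rfl, ?_⟩
      · rw [Matrix.det_fin_three]
        simp
        linear_combination (-α) * hbez + (β*t) * hr's' + hαβ
      · funext i
        fin_cases i <;> simp [Matrix.mulVec, dotProduct, Fin.sum_univ_three]
  -- the transformed form H
  have hε2 : ε * ε = 1 := by rcases hWeps with h | h <;> rw [h] <;> ring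
  obtain ⟨H, hH⟩ : ∃ H, H = Wᵀ * G * W := ⟨_, rfl⟩
  have hHsym : Hᵀ = H := by
    rw [hH, Matrix.transpose_mul, Matrix.transpose_mul, Matrix.transpose_transpose, hGsym,
      Matrix.mul_assoc]
  have hsym10 : H 1 0 = H 0 1 := by
    have := congrFun (congrFun hHsym 0) 1
    rwa [Matrix.transpose_apply] at this
  have hsym20 : H 2 0 = H 0 2 := by
    have := congrFun (congrFun hHsym 0) 2
    rwa [Matrix.transpose_apply] at this
  have hsym21 : H 2 1 = H 1 2 := by
    have := congrFun (congrFun hHsym 1) 2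
    rwa [Matrix.transpose_apply] at this
  have hQH : ∀ u : Fin 3 → ℤ, u ⬝ᵥ (H *ᵥ u)
      = H 0 0*(u 0)^2 + H 1 1*(u 1)^2 + H 2 2*(u 2)^2
        + 2*(H 0 1)*(u 0)*(u 1) + 2*(H 0 2)*(u 0)*(u 2) + 2*(H 1 2)*(u 1)*(u 2) := by
    intro u
    rw [qval_expand, hsym10, hsym20, hsym21]
    ring
  have hbasis : ∀ u : Fin 3 → ℤ, u ⬝ᵥ (H *ᵥ u) = (W *ᵥ u) ⬝ᵥ (G *ᵥ (W *ᵥ u)) := by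
    intro u; rw [hH]; exact qval_basis G W u
  have hH00 : H 0 0 = (m:ℤ) := by
    have h1 : (![1,0,0] : Fin 3 → ℤ) ⬝ᵥ (H *ᵥ ![1,0,0]) = H 0 0 := by
      rw [hQH]
      rw [vec3_0, vec3_1, vec3_2]
      ring
    have h2 := hbasis ![1,0,0]
    rw [hWcol, hlink, vec3_0, vec3_1, vec3_2] at h2
    rw [← h1, h2]
    exact hvrst
  have hWinj : ∀ u : Fin 3 → ℤ, ¬(u 0 = 0 ∧ u 1 = 0 ∧ u 2 = 0) →
      ¬((W *ᵥ u) 0 = 0 ∧ (W *ᵥ u) 1 = 0 ∧ (W *ᵥ u) 2 = 0) := by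
    intro u hu hcon
    have hWu : W *ᵥ u = 0 := by
      funext i
      fin_cases i
      · exact hcon.1
      · exact hcon.2.1
      · exact hcon.2.2
    have h2 : W.adjugate *ᵥ (W *ᵥ u) = 0 := by rw [hWu, Matrix.mulVec_zero]
    rw [Matrix.mulVec_mulVec, Matrix.adjugate_mul, hWdet] at h2
    have h3 : ε • u = 0 := by
      rw [Matrix.smul_mulVec, Matrix.one_mulVec] at h2
      exact h2
    have hεne : ε ≠ 0 := by rcases hWeps with h | h <;> omega
    have h4 : u = 0 := by
      rcases smul_eq_zero.mp h3 with h | h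
      · exact absurd h hεne
      · exact h
    exact hu ⟨by rw [h4]; rfl, by rw [h4]; rfl, by rw [h4]; rfl⟩
  have hminH : ∀ x y z : ℤ, ¬(x = 0 ∧ y = 0 ∧ z = 0) →
      (m:ℤ) ≤ H 0 0*x^2 + H 1 1*y^2 + H 2 2*z^2
        + 2*(H 0 1)*x*y + 2*(H 0 2)*x*z + 2*(H 1 2)*y*z := by
    intro x y z hxyz
    have h1 := hQH ![x,y,z]
    have h2 := hbasis ![x,y,z]
    have h3 := hlink (W *ᵥ ![x,y,z])
    have h4 : ¬((W *ᵥ ![x,y,z]) 0 = 0 ∧ (W *ᵥ ![x,y,z]) 1 = 0 ∧ (W *ᵥ ![x,y,z]) 2 = 0) := by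
      apply hWinj
      simpa using hxyz
    have h5 := hmin _ _ _ h4
    rw [vec3_0, vec3_1, vec3_2] at h1
    rw [← h1, h2, h3]
    exact h5
  -- determinant bookkeeping
  have hdetG : G.det = 1 := by
    rw [hG, Matrix.det_fin_three]
    simp
    linear_combination hdet
  have hdetH : H.det = 1 := by
    rw [hH, Matrix.det_mul, Matrix.det_mul, Matrix.det_transpose, hWdet, hdetG]
    rw [mul_one]
    exact hε2
  have hdetHe : H 0 0 * H 1 1 * H 2 2 + 2*(H 0 1)*(H 0 2)*(H 1 2)
      - H 0 0*(H 1 2)^2 - H 1 1*(H 0 2)^2 - H 2 2*(H 0 1)^2 = 1 := by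
    have h1 := Matrix.det_fin_three H
    rw [hdetH, hsym10, hsym20, hsym21] at h1
    linear_combination -h1
  -- the minimum is 1
  have hm1 : (m:ℤ) = 1 := by
    rw [← hH00]
    apply ternary_min_one (H 0 0) (H 0 1) (H 0 2) (H 1 1) (H 1 2) (H 2 2)
    · linear_combination hdetHe
    · rw [hH00]; exact hmpos
    · intro x y z hxyz
      have h := hminH x y z hxyz
      rw [hH00] at h
      rw [hH00]
      exact h
  have hH001 : H 0 0 = 1 := by rw [hH00, hm1]
  -- complete the square, reduce the binary complement
  obtain ⟨p, hp⟩ : ∃ p, p = H 0 1 := ⟨_, rfl⟩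
  obtain ⟨q, hq⟩ : ∃ q, q = H 0 2 := ⟨_, rfl⟩
  obtain ⟨d, hd⟩ : ∃ d, d = H 1 1 := ⟨_, rfl⟩
  obtain ⟨e, he⟩ : ∃ e, e = H 1 2 := ⟨_, rfl⟩
  obtain ⟨f, hf⟩ : ∃ f, f = H 2 2 := ⟨_, rfl⟩
  obtain ⟨A1, hA1⟩ : ∃ A1 : ℤ, A1 = d - p^2 := ⟨_, rfl⟩
  obtain ⟨B1, hB1⟩ : ∃ B1 : ℤ, B1 = 2*(e - p*q) := ⟨_, rfl⟩
  obtain ⟨C1, hC1⟩ : ∃ C1 : ℤ, C1 = f - q^2 := ⟨_, rfl⟩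
  have hdetpq : d*f + 2*p*q*e - e^2 - d*q^2 - f*p^2 = 1 := by
    rw [hp, hq, hd, he, hf]
    linear_combination hdetHe - (H 1 1 * H 2 2 - (H 1 2)^2) * hH001
  have key : ∀ x y z : ℤ,
      x^2 + d*y^2 + f*z^2 + 2*p*x*y + 2*q*x*z + 2*e*y*z
        = (x + p*y + q*z)^2 + (A1*y^2 + B1*y*z + C1*z^2) := by
    intro x y z; rw [hA1, hB1, hC1]; ring
  have hminH' : ∀ x y z : ℤ, ¬(x = 0 ∧ y = 0 ∧ z = 0) →
      (1:ℤ) ≤ x^2 + d*y^2 + f*z^2 + 2*p*x*y + 2*q*x*z + 2*e*y*z := by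
    intro x y z hxyz
    have hthis := hminH x y z hxyz
    rw [hH001, hm1] at hthis
    rw [hp, hq, hd, he, hf]
    linarith only [hthis]
  have hF1pos : ∀ y z : ℤ, ¬(y = 0 ∧ z = 0) → 0 < A1*y^2 + B1*y*z + C1*z^2 := by
    intro y z hyz
    have h1 := hminH' (-(p*y + q*z)) y z (by tauto)
    have h2 := key (-(p*y + q*z)) y z
    linarith only [h1, h2]
  have hdisc1 : 4*A1*C1 - B1^2 = 4 := by
    rw [hA1, hB1, hC1]
    linear_combination 4*hdetpq
  obtain ⟨r2, s2, u2, v2, a, b, c, hdet2, ha2, hc2, hb2, hapos, hac, habs, hd2, h3a⟩ :=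
    binary_reduce A1 B1 C1 hF1pos
  rw [hdisc1] at hd2 h3a
  have ha1 : a = 1 := by
    rcases lt_or_ge a 2 with h | h
    · omega
    · exfalso
      have h4 : (2:ℤ)*2 ≤ a*a := mul_le_mul h h (by norm_num) (by linarith only [hapos])
      have h5 : a^2 = a*a := by ring
      linarith only [h3a, h4, h5]
  have hbc : b = 0 ∧ c = 1 := by
    obtain ⟨hbl, hbr⟩ : -1 ≤ b ∧ b ≤ 1 := abs_le.mp (ha1 ▸ habs)
    have h4c : 4*c - b^2 = 4 := by rw [ha1] at hd2; linarith only [hd2]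
    interval_cases b
    · omega
    · omega
    · omega
  have hA : A1*r2^2 + B1*r2*s2 + C1*s2^2 = 1 := ha2.symm.trans ha1
  have hC : A1*u2^2 + B1*u2*v2 + C1*v2^2 = 1 := hc2.symm.trans hbc.2
  have hB : 2*A1*r2*u2 + B1*(r2*v2 + s2*u2) + 2*C1*s2*v2 = 0 := hb2.symm.trans hbc.1
  have trans_id : ∀ Y Z : ℤ,
      A1*(r2*Y+u2*Z)^2 + B1*(r2*Y+u2*Z)*(s2*Y+v2*Z) + C1*(s2*Y+v2*Z)^2 = Y^2 + Z^2 := by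
    intro Y Z
    linear_combination (Y^2) * hA + (Y*Z) * hB + (Z^2) * hC
  -- assemble total change of basis
  obtain ⟨T2, hT2⟩ : ∃ T2 : Matrix (Fin 3) (Fin 3) ℤ,
      T2 = !![1, -(p*r2+q*s2), -(p*u2+q*v2); (0:ℤ), r2, u2; 0, s2, v2] := ⟨_, rfl⟩
  have hdetT2 : T2.det = 1 := by
    rw [hT2, Matrix.det_fin_three]
    simp [Matrix.vecHead, Matrix.vecTail, Function.comp]
    linear_combination hdet2
  obtain ⟨M, hM⟩ : ∃ M, M = W * T2 := ⟨_, rfl⟩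
  have hdetM : M.det = ε := by rw [hM, Matrix.det_mul, hWdet, hdetT2, mul_one]
  have hT2c : ∀ w : Fin 3 → ℤ,
      (T2 *ᵥ w) 0 = w 0 - (p*r2+q*s2)*(w 1) - (p*u2+q*v2)*(w 2)
      ∧ (T2 *ᵥ w) 1 = r2*(w 1) + u2*(w 2)
      ∧ (T2 *ᵥ w) 2 = s2*(w 1) + v2*(w 2) := by
    intro w
    refine ⟨?_, ?_, ?_⟩ <;> simp [hT2, Matrix.mulVec, dotProduct, Fin.sum_univ_three] <;> ring
  have hMval : ∀ w : Fin 3 → ℤ,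
      (M *ᵥ w) ⬝ᵥ (G *ᵥ (M *ᵥ w)) = (w 0)^2 + (w 1)^2 + (w 2)^2 := by
    intro w
    have h1 : M *ᵥ w = W *ᵥ (T2 *ᵥ w) := by rw [hM, ← Matrix.mulVec_mulVec]
    rw [h1, ← hbasis, hQH]
    obtain ⟨c0, c1, c2⟩ := hT2c w
    rw [c0, c1, c2, hH001, ← hp, ← hq, ← hd, ← he, ← hf]
    have h2 := trans_id (w 1) (w 2)
    have h3 := key (w 0 - (p*r2+q*s2)*(w 1) - (p*u2+q*v2)*(w 2))
      (r2*(w 1) + u2*(w 2)) (s2*(w 1) + v2*(w 2))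
    have h4 : (w 0 - (p*r2+q*s2)*(w 1) - (p*u2+q*v2)*(w 2)
        + p*(r2*(w 1) + u2*(w 2)) + q*(s2*(w 1) + v2*(w 2))) = w 0 := by ring
    rw [h4] at h3
    linarith only [h2, h3]
  -- extract representation of a00
  obtain ⟨w, hw⟩ : ∃ w, w = ε • (M.adjugate *ᵥ ![1,0,0]) := ⟨_, rfl⟩
  have hMw : M *ᵥ w = ![1,0,0] := by
    rw [hw, Matrix.mulVec_smul, Matrix.mulVec_mulVec, Matrix.mul_adjugate, hdetM,
      Matrix.smul_mulVec, Matrix.one_mulVec, smul_smul, hε2, one_smul]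
  have hfin : a00 = (w 0)^2 + (w 1)^2 + (w 2)^2 := by
    have h1 : a00 = (![1,0,0] : Fin 3 → ℤ) ⬝ᵥ (G *ᵥ ![1,0,0]) := by
      rw [hlink, vec3_0, vec3_1, vec3_2]; ring
    rw [h1, ← hMw]
    exact hMval w
  exact ⟨w 0, w 1, w 2, hfin⟩

set_option maxHeartbeats 1000000 in
theorem one_mod_four_three_squares (N : ℕ) (h4 : N % 4 = 1) (hN1 : 1 < N) :
    ∃ x y z : ℤ, (N:ℤ) = x^2 + y^2 + z^2 := by
  have hNodd : N % 2 = 1 := by omega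
  have hN5 : 5 ≤ N := by omega
  obtain ⟨a, ha⟩ : ∃ a : ℕ, a = 2*N^2 - 1 := ⟨_, rfl⟩
  have haN : a + 1 = 2*N^2 := by
    have hNz : 1 ≤ N := by omega
    have hmm := Nat.mul_le_mul hNz hNz
    have hp : N^2 = N*N := by ring
    omega
  have hNsq : ∃ k, N^2 = 4*(k^2+k)+1 := by
    obtain ⟨k, hk⟩ : ∃ k, N = 2*k+1 := ⟨N/2, by omega⟩
    exact ⟨k, by rw [hk]; ring⟩
  have ha4 : a % 4 = 1 := by obtain ⟨k, hk⟩ := hNsq; omega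
  have hcop : Nat.Coprime a (4*N) := by
    have h2 : Nat.Coprime 2 a := (Nat.Prime.coprime_iff_not_dvd Nat.prime_two).mpr (by omega)
    have h4' : Nat.Coprime a (2^2) := Nat.Coprime.pow_right 2 h2.symm
    have hN' : Nat.Coprime a N := by
      have hd1 : Nat.gcd a N ∣ a := Nat.gcd_dvd_left a N
      have hd2 : Nat.gcd a N ∣ N := Nat.gcd_dvd_right a N
      have hd3 : Nat.gcd a N ∣ 2*N^2 := by
        have h1 : Nat.gcd a N ∣ N * N := Dvd.dvd.mul_right hd2 N
        have h2 : Nat.gcd a N ∣ 2*(N*N) := Dvd.dvd.mul_left h1 2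
        have h3 : 2*N^2 = 2*(N*N) := by ring
        rwa [h3]
      have hd4 : Nat.gcd a N ∣ 1 := by
        have := Nat.dvd_sub hd3 hd1
        rwa [← haN, Nat.add_sub_cancel_left] at this
      exact Nat.dvd_one.mp hd4
    have h44 : Nat.Coprime a 4 := by
      have he : (2:ℕ)^2 = 4 := by norm_num
      rwa [he] at h4'
    exact Nat.Coprime.mul_right h44 hN'
  haveI : NeZero (4*N) := ⟨by omega⟩
  have hunit : IsUnit ((a : ZMod (4*N))) := by
    rw [ZMod.isUnit_iff_coprime]
    exact hcop
  obtain ⟨P, hPgt, hPp, hPmod⟩ := Nat.forall_exists_prime_gt_and_eq_mod hunit (4*N)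
  haveI : Fact P.Prime := ⟨hPp⟩
  have hPmod4N : P ≡ a [MOD 4*N] := by
    rw [← ZMod.natCast_eq_natCast_iff]
    exact hPmod
  have hP4 : P % 4 = 1 := by
    have h1 : P ≡ a [MOD 4] := Nat.ModEq.of_dvd ⟨N, rfl⟩ hPmod4N
    have h1' : P % 4 = a % 4 := h1
    omega
  have hPN : (N:ℤ) ∣ (P:ℤ) + 1 := by
    have h1 : P ≡ a [MOD N] := Nat.ModEq.of_dvd ⟨4, by ring⟩ hPmod4N
    have h2 : (N:ℤ) ∣ (a:ℤ) - (P:ℤ) := h1.dvd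
    have h3 : (N:ℤ) ∣ (a:ℤ) + 1 := by
      have hcast : ((a:ℤ) + 1) = 2*(N:ℤ)^2 := by exact_mod_cast congrArg (Nat.cast : ℕ → ℤ) haN
      exact ⟨2*N, by rw [hcast]; ring⟩
    have h5 : (P:ℤ) + 1 = ((a:ℤ) + 1) - ((a:ℤ) - (P:ℤ)) := by ring
    rw [h5]
    exact dvd_sub h3 h2
  have hPgtN : N < P := by omega
  have hPodd : P % 2 = 1 := by
    have := hPp.odd_of_ne_two (by omega)
    omega
  -- -N is a QR mod P
  have hjac : jacobiSym (-(N:ℤ)) P = 1 := by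
    have hmul : jacobiSym (-(N:ℤ)) P = jacobiSym (-1) P * jacobiSym (N:ℤ) P := by
      rw [← jacobiSym.mul_left]
      norm_num
    have h1 : jacobiSym (-1) P = 1 := by
      rw [jacobiSym.at_neg_one (Nat.odd_iff.mpr hPodd), ZMod.χ₄_nat_one_mod_four hP4]
    have h2 : jacobiSym (N:ℤ) P = 1 := by
      have hrec : jacobiSym (P:ℤ) N = jacobiSym (N:ℤ) P :=
        jacobiSym.quadratic_reciprocity_one_mod_four hP4 (Nat.odd_iff.mpr hNodd)
      have hmodP : ((P:ℤ)) % (N:ℤ) = (-1) % (N:ℤ) := by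
        have hd : (N:ℤ) ∣ (-1:ℤ) - (P:ℤ) := by
          rw [show (-1:ℤ) - (P:ℤ) = -((P:ℤ)+1) by ring]
          exact dvd_neg.mpr hPN
        exact Int.modEq_iff_dvd.mpr hd
      have hml : jacobiSym (P:ℤ) N = jacobiSym (-1) N := jacobiSym.mod_left' hmodP
      have hn1 : jacobiSym (-1) N = 1 := by
        rw [jacobiSym.at_neg_one (Nat.odd_iff.mpr hNodd), ZMod.χ₄_nat_one_mod_four h4]
      rw [← hrec, hml, hn1]
    rw [hmul, h1, h2]
    norm_num
  have hNne : ((N:ℤ) : ZMod P) ≠ 0 := by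
    rw [Ne, ZMod.intCast_zmod_eq_zero_iff_dvd]
    intro hdvd
    have hd : (P:ℤ) ∣ (N:ℤ) := hdvd
    have := Int.le_of_dvd (by exact_mod_cast (by omega : 0 < N)) hd
    omega
  have hsq : IsSquare ((-(N:ℤ) : ℤ) : ZMod P) := by
    have hne : ((-(N:ℤ) : ℤ) : ZMod P) ≠ 0 := by
      rw [Int.cast_neg, neg_ne_zero]
      exact hNne
    exact (legendreSym.eq_one_iff P hne).mp
      (by rw [jacobiSym.legendreSym.to_jacobiSym P (-(N:ℤ))]; exact hjac)
  obtain ⟨s₀, hs₀⟩ := hsq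
  have hs : s₀ * s₀ = -((N:ℤ) : ZMod P) := by
    rw [← hs₀]
    push_cast
    ring
  obtain ⟨e, he⟩ : ∃ e : ℤ, (P:ℤ) ∣ 1 + (N:ℤ)*e^2 := by
    have hNne' : ((N:ℕ) : ZMod P) ≠ 0 := by
      intro h0
      apply hNne
      push_cast
      exact h0
    have hs' : s₀ * s₀ = -((N:ℕ) : ZMod P) := by
      rw [hs]
      push_cast
      ring
    refine ⟨(((s₀ * ((N:ℕ) : ZMod P)⁻¹ : ZMod P)).val : ℤ), ?_⟩
    rw [← ZMod.intCast_zmod_eq_zero_iff_dvd]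
    push_cast
    rw [ZMod.natCast_val, ZMod.cast_id]
    have hinv : ((N:ℕ) : ZMod P) * ((N:ℕ) : ZMod P)⁻¹ = 1 :=
      ZMod.mul_inv_of_unit _ (isUnit_iff_ne_zero.mpr hNne')
    have hexp : (s₀ * ((N:ℕ) : ZMod P)⁻¹)^2
        = (s₀ * s₀) * (((N:ℕ) : ZMod P)⁻¹ * ((N:ℕ) : ZMod P)⁻¹) := by
      ring
    rw [hexp, hs']
    have hrr : ((N:ℕ) : ZMod P) * (-((N:ℕ) : ZMod P) * (((N:ℕ) : ZMod P)⁻¹ * ((N:ℕ) : ZMod P)⁻¹))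
        = -((((N:ℕ) : ZMod P)) * (((N:ℕ) : ZMod P))⁻¹) * ((((N:ℕ) : ZMod P)) * (((N:ℕ) : ZMod P))⁻¹) := by
      ring
    rw [hrr, hinv]
    ring
  obtain ⟨k, hk⟩ := he
  have hNk : (N:ℤ) ∣ 1 + k := by
    have h1 : (1:ℤ) + k = k*((P:ℤ)+1) - ((N:ℤ)*e^2) := by linear_combination hk
    rw [h1]
    exact dvd_sub (Dvd.dvd.mul_left hPN k) ⟨e^2, by ring⟩
  obtain ⟨f, hf⟩ := hNk
  have hdet3 : (N:ℤ)*P*f - (N:ℤ)*e^2 - P = 1 := by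
    linear_combination (-(P:ℤ))*hf - hk
  have hNpos : (0:ℤ) < N := by exact_mod_cast (by omega : 0 < N)
  have hPpos : (0:ℤ) < P := by exact_mod_cast hPp.pos
  obtain ⟨x, y, z, hxyz⟩ := ternary_repr (N:ℤ) 0 1 (P:ℤ) e f
    (by linear_combination hdet3)
    (by
      intro x y z hx
      have iden : (N:ℤ)^2*P*((N:ℤ)*x^2 + (P:ℤ)*y^2 + f*z^2 + 2*0*x*y + 2*1*x*z + 2*e*y*z)
          = (N:ℤ)*P*((N:ℤ)*x+z)^2 + ((N:ℤ)*(P:ℤ)*y + (N:ℤ)*e*z)^2 + (N:ℤ)*z^2 := by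
        linear_combination (z^2*(N:ℤ)) * hdet3
      have hrhs : 0 < (N:ℤ)*P*((N:ℤ)*x+z)^2 + ((N:ℤ)*(P:ℤ)*y + (N:ℤ)*e*z)^2 + (N:ℤ)*z^2 := by
        have t1 : 0 ≤ (N:ℤ)*P*((N:ℤ)*x+z)^2 := by positivity
        have t2 : 0 ≤ ((N:ℤ)*(P:ℤ)*y + (N:ℤ)*e*z)^2 := sq_nonneg _
        have t3 : 0 ≤ (N:ℤ)*z^2 := by positivity
        rcases eq_or_ne z 0 with hz | hz
        · rcases eq_or_ne y 0 with hy | hy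
          · have hxne : x ≠ 0 := by tauto
            have : 0 < (N:ℤ)*P*((N:ℤ)*x+z)^2 := by
              have hzz : (N:ℤ)*x + z ≠ 0 := by
                rw [hz, add_zero]
                exact mul_ne_zero (by omega) hxne
              have := lt_of_le_of_ne (sq_nonneg ((N:ℤ)*x+z)) (Ne.symm (pow_ne_zero 2 hzz))
              positivity
            linarith only [this, t2, t3]
          · have : 0 < ((N:ℤ)*(P:ℤ)*y + (N:ℤ)*e*z)^2 := by
              have hzz : (N:ℤ)*(P:ℤ)*y + (N:ℤ)*e*z ≠ 0 := by
                rw [hz, mul_zero, add_zero]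
                exact mul_ne_zero (mul_ne_zero (by omega) (by omega)) hy
              exact lt_of_le_of_ne (sq_nonneg _) (Ne.symm (pow_ne_zero 2 hzz))
            linarith only [this, t1, t3]
        · have : 0 < (N:ℤ)*z^2 := by
            have := lt_of_le_of_ne (sq_nonneg z) (Ne.symm (pow_ne_zero 2 hz))
            positivity
          linarith only [this, t1, t2]
      by_contra hcon
      push_neg at hcon
      have hle : (N:ℤ)^2*P*((N:ℤ)*x^2 + (P:ℤ)*y^2 + f*z^2 + 2*0*x*y + 2*1*x*z + 2*e*y*z) ≤ 0 :=
        mul_nonpos_of_nonneg_of_nonpos (by positivity) hcon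
      rw [iden] at hle
      linarith only [hle, hrhs])
  exact ⟨x, y, z, hxyz⟩

/-- arrange a three-square rep of a nonsquare N ≡ 1 mod 4 into (odd, even ≥ 2, even) -/
lemma arrange2 (X Y Z N : ℕ) (h : X^2 + Y^2 + Z^2 = N) (hX : X % 2 = 1)
    (hY : Y % 2 = 0) (hZ : Z % 2 = 0) (hnsq : ¬∃ t : ℕ, t*t = N) :
    ∃ A B C : ℕ, A % 2 = 1 ∧ B % 2 = 0 ∧ C % 2 = 0 ∧ 2 ≤ B ∧ A^2 + B^2 + C^2 = N := by
  have hYZ : ¬(Y = 0 ∧ Z = 0) := by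
    rintro ⟨rfl, rfl⟩
    exact hnsq ⟨X, by nlinarith [h]⟩
  rcases le_total Y Z with hle | hle
  · exact ⟨X, Z, Y, hX, hZ, hY, by omega, by linarith [h]⟩
  · exact ⟨X, Y, Z, hX, hY, hZ, by omega, by linarith [h]⟩

lemma arrange (X Y Z N : ℕ) (h : X^2 + Y^2 + Z^2 = N) (hN4 : N % 4 = 1)
    (hnsq : ¬∃ t : ℕ, t*t = N) :
    ∃ A B C : ℕ, A % 2 = 1 ∧ B % 2 = 0 ∧ C % 2 = 0 ∧ 2 ≤ B ∧ A^2 + B^2 + C^2 = N := by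
  have hx := sq_mod_four X
  have hy := sq_mod_four Y
  have hz := sq_mod_four Z
  rcases hx with ⟨hx1, hx2⟩ | ⟨hx1, hx2⟩ <;> rcases hy with ⟨hy1, hy2⟩ | ⟨hy1, hy2⟩ <;>
    rcases hz with ⟨hz1, hz2⟩ | ⟨hz1, hz2⟩
  · omega
  · exact arrange2 Z X Y N (by linarith [h]) hz1 hx1 hy1 hnsq
  · exact arrange2 Y X Z N (by linarith [h]) hy1 hx1 hz1 hnsq
  · omega
  · exact arrange2 X Y Z N h hx1 hy1 hz1 hnsq
  · omega
  · omega
  · omega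

theorem stmt_5 : ∀ n : ℕ, ∃ x y z : ℕ,
    n = x * (x + 1) / 2 + y * (y + 1) / 2 + z * (z + 2) := by
  intro n
  obtain ⟨N, hN⟩ : ∃ N, N = 4*n + 5 := ⟨_, rfl⟩
  have hN4 : N % 4 = 1 := by omega
  have hN5 : 5 ≤ N := by omega
  suffices h : ∃ A B C : ℕ, A % 2 = 1 ∧ B % 2 = 0 ∧ C % 2 = 0 ∧ 2 ≤ B ∧ A^2 + B^2 + C^2 = N by
    obtain ⟨A, B, C, h1, h2, h3, h4, h5⟩ := h
    exact endgame n A B C h1 h2 h3 h4 (by omega)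
  by_cases hsq : ∃ t : ℕ, t*t = N
  · obtain ⟨t, ht⟩ := hsq
    have htodd : t % 2 = 1 := by
      rcases sq_mod_four t with ⟨_, h4'⟩ | ⟨h2', _⟩
      · have : t^2 = t*t := by ring
        omega
      · omega
    have ht3 : 3 ≤ t := by
      by_contra hcon
      interval_cases t <;> omega
    obtain ⟨A, B, C, h1, h2, h3, h4, h5⟩ := oddSq_three t ht3 htodd
    exact ⟨A, B, C, h1, h2, h3, h4, by rw [h5, ← ht]; ring⟩
  · -- N is not a perfect square : squarefree reduction and the core theorem
    obtain ⟨N₀, f, hfac, hsf⟩ := Nat.sq_mul_squarefree N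
    have hNodd : N % 2 = 1 := by omega
    have hfodd : f % 2 = 1 := by
      rcases sq_mod_four f with ⟨h2', h4'⟩ | ⟨h2', _⟩
      · exfalso
        have : f^2 ∣ N := Dvd.intro _ hfac
        have h4d : 4 ∣ f^2 := by omega
        have : 4 ∣ N := dvd_trans h4d this
        omega
      · omega
    have hf4 : f^2 % 4 = 1 := by
      rcases sq_mod_four f with ⟨h2', _⟩ | ⟨_, h4'⟩
      · omega
      · omega
    have hN₀4 : N₀ % 4 = 1 := by
      have := Nat.mul_mod (f^2) N₀ 4
      rw [hfac, hf4] at this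
      omega
    have hN₀1 : 1 < N₀ := by
      rcases Nat.lt_or_ge N₀ 2 with h | h
      · exfalso
        interval_cases N₀
        · omega
        · apply hsq
          exact ⟨f, by nlinarith [hfac]⟩
      · omega
    obtain ⟨x, y, z, hxyz⟩ := one_mod_four_three_squares N₀ hN₀4 hN₀1
    obtain ⟨X, hX⟩ : ∃ X : ℕ, (X:ℤ) = |(f:ℤ)*x| := ⟨((f:ℤ)*x).natAbs, by simp⟩
    obtain ⟨Y, hY⟩ : ∃ Y : ℕ, (Y:ℤ) = |(f:ℤ)*y| := ⟨((f:ℤ)*y).natAbs, by simp⟩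
    obtain ⟨Z, hZ⟩ : ∃ Z : ℕ, (Z:ℤ) = |(f:ℤ)*z| := ⟨((f:ℤ)*z).natAbs, by simp⟩
    have hrep : X^2 + Y^2 + Z^2 = N := by
      have hcast : ((X^2 + Y^2 + Z^2 : ℕ) : ℤ) = ((N:ℕ) : ℤ) := by
        push_cast
        rw [hX, hY, hZ]
        rw [sq_abs, sq_abs, sq_abs]
        have hNc : ((N:ℕ):ℤ) = (f:ℤ)^2 * (N₀:ℤ) := by exact_mod_cast hfac.symm
        rw [hNc, hxyz]
        ring
      exact_mod_cast hcast
    exact arrange X Y Z N hrep hN4 hsq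
end

section
/- For every k ∈ {1, 2, 3, 4, 5, 6, 7}, the sum T_x + y² + z(z+2k+1)/2 is universal over ℕ; that is, every n ∈ ℕ can be written as T_x + y² + z(z+2k+1)/2 with x, y, z ∈ ℕ. -/
set_option maxHeartbeats 1000000

/-- Rounding: we can translate `b` by a multiple of `a` into `[-a/2, a/2]`. -/
lemma round_int (a b : ℤ) (ha : 0 < a) : ∃ t : ℤ, 4 * (b + t * a) ^ 2 ≤ a ^ 2 := by
  have h := Int.mul_ediv_add_emod b a
  have h1 : 0 ≤ b % a := Int.emod_nonneg b (by omega)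
  have h2 : b % a < a := Int.emod_lt_of_pos b ha
  rcases le_or_gt (2 * (b % a)) a with hc | hc
  · refine ⟨-(b / a), ?_⟩
    have : b + -(b / a) * a = b % a := by linarith [h]
    rw [this]; nlinarith
  · refine ⟨-(b / a) - 1, ?_⟩
    have : b + (-(b / a) - 1) * a = b % a - a := by linarith [h]
    rw [this]; nlinarith

/-- Binary form small-value lemma: a positive binary form `(a,b,c)` with positive
determinant `D` has a coprime vector with `3 * value^2 ≤ 4 * D`. -/
lemma bin1 : ∀ (fuel : ℕ) (a b c : ℤ), a.toNat ≤ fuel → 0 < a → 0 < a * c - b ^ 2 →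
    ∃ y z : ℤ, IsCoprime y z ∧ 0 < a * y ^ 2 + 2 * b * y * z + c * z ^ 2 ∧
      3 * (a * y ^ 2 + 2 * b * y * z + c * z ^ 2) ^ 2 ≤ 4 * (a * c - b ^ 2) := by
  intro fuel
  induction fuel with
  | zero => intro a b c hf ha _; exfalso; omega
  | succ n ih =>
    intro a b c hf ha hD
    obtain ⟨τ, hτ⟩ := round_int a b ha
    set b' := b + τ * a with hb'
    set c' := a * τ ^ 2 + 2 * b * τ + c with hc'
    have hdet : a * c' - b' ^ 2 = a * c - b ^ 2 := by ring
    have hc'pos : 0 < c' := by nlinarith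
    rcases lt_or_ge c' a with hlt | hle
    · -- recurse on swapped form (c', b', a)
      have hfuel : c'.toNat ≤ n := by omega
      obtain ⟨y₁, z₁, hcop, hpos, hbound⟩ := ih c' b' a hfuel hc'pos (by nlinarith)
      have hval : a * (z₁ + τ * y₁) ^ 2 + 2 * b * (z₁ + τ * y₁) * y₁ + c * y₁ ^ 2
          = c' * y₁ ^ 2 + 2 * b' * y₁ * z₁ + a * z₁ ^ 2 := by rw [hb', hc']; ring
      refine ⟨z₁ + τ * y₁, y₁, ?_, ?_, ?_⟩
      · have := (hcop.symm).add_mul_left_left τ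
        rwa [mul_comm] at this
      · rw [hval]; exact hpos
      · rw [hval]; nlinarith [hbound]
    · -- reduced: use (1,0)
      refine ⟨1, 0, isCoprime_one_left, by nlinarith, ?_⟩
      have h4 : 4 * b' ^ 2 ≤ a ^ 2 := hτ
      nlinarith
/-- A positive binary form of determinant 1 takes only sum-of-two-squares values. -/
lemma bin2 : ∀ (fuel : ℕ) (a b c : ℤ), a.toNat ≤ fuel → 0 < a → a * c - b ^ 2 = 1 →
    ∀ u v : ℤ, ∃ r s : ℤ, a * u ^ 2 + 2 * b * u * v + c * v ^ 2 = r ^ 2 + s ^ 2 := by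
  intro fuel
  induction fuel with
  | zero => intro a b c hf ha _; exfalso; omega
  | succ n ih =>
    intro a b c hf ha hD
    obtain ⟨τ, hτ⟩ := round_int a b ha
    set b' := b + τ * a with hb'
    set c' := a * τ ^ 2 + 2 * b * τ + c with hc'
    have hdet : a * c' - b' ^ 2 = 1 := by rw [hb', hc']; linear_combination hD
    have hc'pos : 0 < c' := by nlinarith
    rcases lt_or_ge c' a with hlt | hle
    · -- recurse on swapped form (c', b', a)
      have hfuel : c'.toNat ≤ n := by omega
      intro u v
      obtain ⟨r, s, hrs⟩ := ih c' b' a hfuel hc'pos (by linarith [hdet, sq_nonneg b'])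
        v (u - τ * v)
      refine ⟨r, s, ?_⟩
      rw [← hrs, hb', hc']; ring
    · -- reduced: a = 1, b' = 0, c' = 1
      have ha1 : a = 1 := by nlinarith
      have hb0 : b' = 0 := by nlinarith
      have hc1 : c' = 1 := by nlinarith
      intro u v
      refine ⟨u + b * v, v, ?_⟩
      have hcval : c = 1 + b ^ 2 := by
        have h := hD; rw [ha1] at h; linarith
      rw [ha1, hcval]; ring
/-- A positive definite integral ternary form of determinant 1 takes only
sum-of-three-squares values. -/
lemma ter : ∀ (fuel : ℕ) (M a b c d e : ℤ), M.toNat ≤ fuel → 0 < M →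
    M*c*e - M*d^2 - a^2*e + 2*a*b*d - b^2*c = 1 →
    (∀ x y z : ℤ, ¬(x = 0 ∧ y = 0 ∧ z = 0) →
      0 < M*x^2 + c*y^2 + e*z^2 + 2*a*x*y + 2*b*x*z + 2*d*y*z) →
    ∀ x y z : ℤ, ∃ r s t : ℤ,
      M*x^2 + c*y^2 + e*z^2 + 2*a*x*y + 2*b*x*z + 2*d*y*z = r^2 + s^2 + t^2 := by
  intro fuel
  induction fuel with
  | zero => intro M a b c d e hf hM _ _; exfalso; omega
  | succ n ih =>
    intro M a b c d e hf hM hdet hpos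
    rcases eq_or_lt_of_le (show (1:ℤ) ≤ M by omega) with hM1 | hM2
    · -- M = 1 : split off the first square
      have hM1 : M = 1 := hM1.symm
      subst hM1
      have hCApos : 0 < c - a^2 := by
        have h := hpos (-a) 1 0 (by simp)
        nlinarith
      have hCdet : (c - a^2) * (e - b^2) - (d - a*b)^2 = 1 := by linear_combination hdet
      have hbin := bin2 (c - a^2).toNat (c - a^2) (d - a*b) (e - b^2) le_rfl hCApos hCdet
      intro x y z
      obtain ⟨r, s, hrs⟩ := hbin y z
      exact ⟨x + a*y + b*z, r, s, by linear_combination hrs⟩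
    · -- M ≥ 2 : find a smaller represented value and change basis
      have hCApos : 0 < M*c - a^2 := by
        have h := hpos (-a) M 0 (by intro h; exact absurd h.2.1 (by omega))
        nlinarith
      have hCdetpos : 0 < (M*c - a^2) * (M*e - b^2) - (M*d - a*b)^2 := by
        have : (M*c - a^2) * (M*e - b^2) - (M*d - a*b)^2 = M := by linear_combination M * hdet
        omega
      obtain ⟨y₀, z₀, hcop, hEpos, hEb⟩ := bin1 (M*c - a^2).toNat (M*c - a^2) (M*d - a*b)
        (M*e - b^2) le_rfl hCApos hCdetpos
      set E := (M*c - a^2) * y₀^2 + 2*(M*d - a*b)*y₀*z₀ + (M*e - b^2) * z₀^2 with hEdef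
      have hEb' : 3 * E^2 ≤ 4 * M := by
        have : (M*c - a^2) * (M*e - b^2) - (M*d - a*b)^2 = M := by linear_combination M * hdet
        omega
      obtain ⟨x₀, hS⟩ := round_int M (a*y₀ + b*z₀) hM
      set S := a*y₀ + b*z₀ + x₀*M with hSdef
      -- value of the form at v₀ = (x₀, y₀, z₀)
      set Q₀ := M*x₀^2 + c*y₀^2 + e*z₀^2 + 2*a*x₀*y₀ + 2*b*x₀*z₀ + 2*d*y₀*z₀ with hQ₀def
      have hMQ : M * Q₀ = S^2 + E := by rw [hQ₀def, hSdef, hEdef]; ring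
      have hv₀ne : ¬(x₀ = 0 ∧ y₀ = 0 ∧ z₀ = 0) := by
        rintro ⟨-, hy, hz⟩
        rw [hy, hz] at hcop
        exact not_isCoprime_zero_zero hcop
      have hQ₀pos : 0 < Q₀ := hpos x₀ y₀ z₀ hv₀ne
      have hQ₀lt : Q₀ < M := by
        by_contra hcon
        push_neg at hcon
        have h1 : M^2 ≤ M * Q₀ := by nlinarith
        have h2 : 3 * M^2 ≤ 4 * E := by linarith
        have h3 : 9 * (M^2)^2 ≤ 16 * E^2 := by
          nlinarith [mul_le_mul h2 h2 (by positivity) (by linarith)]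
        have h4 : 27 * (M^2)^2 ≤ 64 * M := by linarith
        have h6 : 8 ≤ M^3 := by nlinarith
        have h7 : 216 * M ≤ 27 * (M^2)^2 := by nlinarith
        linarith
      obtain ⟨s, t, hst⟩ := hcop
      -- change of basis V with columns (x₀,y₀,z₀), (1,0,0), (0,-t,s)
      have htrans : ∀ X Y Z : ℤ,
          M*(x₀*X + Y)^2 + c*(y₀*X - t*Z)^2 + e*(z₀*X + s*Z)^2
            + 2*a*(x₀*X + Y)*(y₀*X - t*Z) + 2*b*(x₀*X + Y)*(z₀*X + s*Z)
            + 2*d*(y₀*X - t*Z)*(z₀*X + s*Z)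
          = Q₀*X^2 + M*Y^2 + (c*t^2 - 2*d*t*s + e*s^2)*Z^2
            + 2*S*X*Y
            + 2*(-(c*t*y₀) + e*s*z₀ - a*t*x₀ + b*s*x₀ + d*(s*y₀ - t*z₀))*X*Z
            + 2*(-(a*t) + b*s)*Y*Z := by
        intro X Y Z; rw [hQ₀def, hSdef]; ring
      have hdet' : Q₀*M*(c*t^2 - 2*d*t*s + e*s^2)
            - Q₀*(-(a*t) + b*s)^2
            - S^2*(c*t^2 - 2*d*t*s + e*s^2)
            + 2*S*(-(c*t*y₀) + e*s*z₀ - a*t*x₀ + b*s*x₀ + d*(s*y₀ - t*z₀))*(-(a*t) + b*s)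
            - (-(c*t*y₀) + e*s*z₀ - a*t*x₀ + b*s*x₀ + d*(s*y₀ - t*z₀))^2 * M = 1 := by
        have key : Q₀*M*(c*t^2 - 2*d*t*s + e*s^2)
            - Q₀*(-(a*t) + b*s)^2
            - S^2*(c*t^2 - 2*d*t*s + e*s^2)
            + 2*S*(-(c*t*y₀) + e*s*z₀ - a*t*x₀ + b*s*x₀ + d*(s*y₀ - t*z₀))*(-(a*t) + b*s)
            - (-(c*t*y₀) + e*s*z₀ - a*t*x₀ + b*s*x₀ + d*(s*y₀ - t*z₀))^2 * M
          = (M*c*e - M*d^2 - a^2*e + 2*a*b*d - b^2*c) * (s*y₀ + t*z₀)^2 := by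
          rw [hQ₀def, hSdef]; ring
        rw [key, hdet, hst]; ring
      have hpos' : ∀ X Y Z : ℤ, ¬(X = 0 ∧ Y = 0 ∧ Z = 0) →
          0 < Q₀*X^2 + M*Y^2 + (c*t^2 - 2*d*t*s + e*s^2)*Z^2
            + 2*S*X*Y
            + 2*(-(c*t*y₀) + e*s*z₀ - a*t*x₀ + b*s*x₀ + d*(s*y₀ - t*z₀))*X*Z
            + 2*(-(a*t) + b*s)*Y*Z := by
        intro X Y Z hne
        rw [← htrans X Y Z]
        apply hpos
        rintro ⟨h1, h2, h3⟩
        refine hne ⟨?_, ?_, ?_⟩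
        · linear_combination s*h2 + t*h3 - X*hst
        · linear_combination h1 - x₀*s*h2 - x₀*t*h3 + x₀*X*hst
        · linear_combination y₀*h3 - z₀*h2 - Z*hst
      have hfuel' : Q₀.toNat ≤ n := by omega
      have hIH := ih Q₀ S (-(c*t*y₀) + e*s*z₀ - a*t*x₀ + b*s*x₀ + d*(s*y₀ - t*z₀)) M
        (-(a*t) + b*s) (c*t^2 - 2*d*t*s + e*s^2) hfuel' hQ₀pos (by linear_combination hdet')
        hpos'
      intro x y z
      obtain ⟨r, s', t', hrst⟩ := hIH (s*y + t*z) (x - x₀*(s*y + t*z)) (y₀*z - z₀*y)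
      refine ⟨r, s', t', ?_⟩
      have hw := htrans (s*y + t*z) (x - x₀*(s*y + t*z)) (y₀*z - z₀*y)
      have hc1 : x₀*(s*y + t*z) + (x - x₀*(s*y + t*z)) = x := by ring
      have hc2 : y₀*(s*y + t*z) - t*(y₀*z - z₀*y) = y := by linear_combination y*hst
      have hc3 : z₀*(s*y + t*z) + s*(y₀*z - z₀*y) = z := by linear_combination z*hst
      rw [hc1, hc2, hc3] at hw
      rw [hw]
      linear_combination hrst
/-- Every natural number `≡ 1 (mod 4)` is a sum of three squares. -/
lemma three_squares_of_mod_four (M : ℕ) (hM : M % 4 = 1) :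
    ∃ A B C : ℕ, M = A^2 + B^2 + C^2 := by
  have hM1 : 1 ≤ M := by omega
  haveI : NeZero (4*M) := ⟨by omega⟩
  have hoddM : Odd M := by
    rcases Nat.even_or_odd M with h | h
    · exfalso; obtain ⟨j, hj⟩ := h; omega
    · exact h
  -- coprimality for Dirichlet
  have hcop : Nat.Coprime (2*M - 1) (4*M) := by
    have h4 : Nat.Coprime (2*M - 1) 4 := by
      have h1 : (2*M - 1) % 4 = 1 := by omega
      unfold Nat.Coprime
      rw [Nat.gcd_comm, Nat.gcd_rec, h1]
      rfl
    have hMc : Nat.Coprime (2*M - 1) M := by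
      have h1 : Nat.gcd (2*M - 1) M ∣ 2*M - 1 := Nat.gcd_dvd_left _ _
      have h2 : Nat.gcd (2*M - 1) M ∣ M := Nat.gcd_dvd_right _ _
      have h3 : Nat.gcd (2*M - 1) M ∣ 2*M := Dvd.dvd.mul_left h2 2
      have h5 : Nat.gcd (2*M - 1) M ∣ 1 := by
        have h6 := Nat.dvd_sub h3 h1
        simpa [show 2*M - (2*M - 1) = 1 by omega] using h6
      exact Nat.dvd_one.mp h5
    exact Nat.Coprime.mul_right h4 hMc
  have hunit : IsUnit ((2*M - 1 : ℕ) : ZMod (4*M)) :=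
    (ZMod.isUnit_iff_coprime _ _).mpr hcop
  obtain ⟨p, hpgt, hpp, hpmod⟩ := Nat.forall_exists_prime_gt_and_eq_mod hunit (4*M)
  haveI : Fact p.Prime := ⟨hpp⟩
  have hmodeq : p % (4*M) = 2*M - 1 := by
    have h := (ZMod.natCast_eq_natCast_iff' _ _ _).mp hpmod
    rwa [Nat.mod_eq_of_lt (show 2*M - 1 < 4*M by omega)] at h
  have hpeq : p = 4*M*(p / (4*M)) + (2*M - 1) := by
    have := Nat.div_add_mod p (4*M); omega
  -- p ≡ 1 mod 4
  have hp4 : p % 4 = 1 := by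
    obtain ⟨m, hm⟩ : ∃ m, M = 4*m + 1 := ⟨M/4, by omega⟩
    have : p = 4*(M*(p / (4*M)) + 2*m) + 1 := by
      calc p = 4*M*(p / (4*M)) + (2*M - 1) := hpeq
      _ = 4*(M*(p / (4*M)) + 2*m) + 1 := by rw [hm]; ring_nf; omega
    omega
  -- M ∣ p + 1
  have hMdvd : M ∣ p + 1 := by
    refine ⟨4*(p / (4*M)) + 2, ?_⟩
    calc p + 1 = 4*M*(p / (4*M)) + (2*M - 1) + 1 := by omega
    _ = M * (4*(p / (4*M)) + 2) := by have : (2*M - 1) + 1 = 2*M := by omega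
                                      rw [add_assoc, this]; ring
  have hpM : ¬ p ∣ M := fun hdvd => by have := Nat.le_of_dvd (by omega) hdvd; omega
  have hMne : ((M : ℤ) : ZMod p) ≠ 0 := by
    rw [show ((M : ℤ) : ZMod p) = ((M : ℕ) : ZMod p) by push_cast; ring]
    rw [Ne, ZMod.natCast_eq_zero_iff]
    exact hpM
  -- M is a square mod p
  have hMsq : IsSquare ((M : ℤ) : ZMod p) := by
    rw [← legendreSym.eq_one_iff p hMne, jacobiSym.legendreSym.to_jacobiSym]
    have h1 : jacobiSym (M : ℤ) p = jacobiSym (p : ℤ) M :=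
      (jacobiSym.quadratic_reciprocity_one_mod_four hp4 hoddM).symm
    have h2 : (p : ℤ) % (M : ℤ) = (-1) % (M : ℤ) := by
      have hdd : (M : ℤ) ∣ (-1) - (p : ℤ) := by
        obtain ⟨j, hj⟩ := hMdvd
        refine ⟨-j, ?_⟩
        have : (p : ℤ) + 1 = (M : ℤ) * j := by exact_mod_cast hj
        linarith
      exact Int.modEq_iff_dvd.mpr hdd
    rw [h1, jacobiSym.mod_left' h2, jacobiSym.at_neg_one hoddM, ZMod.χ₄_nat_one_mod_four hM]
  -- -1 is a square mod p
  have hneg : IsSquare (-1 : ZMod p) := ZMod.exists_sq_eq_neg_one_iff.mpr (by omega)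
  -- find β with M * β² = -1 mod p
  obtain ⟨σ, hσ⟩ := hMsq
  obtain ⟨ι, hι⟩ := hneg
  have hσne : σ ≠ 0 := by
    intro h
    rw [h, mul_zero] at hσ
    exact hMne (by rw [hσ])
  set β : ZMod p := ι * σ⁻¹ with hβ
  have hβkey : ((M : ℤ) : ZMod p) * β^2 + 1 = 0 := by
    have hσinv : σ * σ⁻¹ = 1 := ZMod.mul_inv_of_unit σ (Ne.isUnit hσne)
    have : ((M : ℤ) : ZMod p) * β^2 = -1 := by
      rw [hβ, hσ]
      calc σ * σ * (ι * σ⁻¹)^2 = (ι * ι) * ((σ * σ⁻¹) * (σ * σ⁻¹)) := by ring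
      _ = -1 := by rw [hσinv, ← hι]; ring
    rw [this]; ring
  -- lift to ℕ: p ∣ M * b² + 1
  set b : ℕ := β.val with hbdef
  have hlift : p ∣ M * b^2 + 1 := by
    haveI : NeZero p := ⟨hpp.ne_zero⟩
    rw [← ZMod.natCast_eq_zero_iff]
    push_cast
    have hbcast : ((b : ℕ) : ZMod p) = β := ZMod.natCast_zmod_val β
    have hMM : (((M : ℕ) : ℤ) : ZMod p) = ((M : ℕ) : ZMod p) := by push_cast; ring
    rw [hbcast]
    rw [hMM] at hβkey
    exact hβkey
  -- move to ℤ and build the ternary form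
  obtain ⟨g, hg⟩ : ∃ g : ℤ, (M : ℤ) * (b : ℤ)^2 + 1 = (p : ℤ) * g := by
    obtain ⟨g, hgn⟩ := hlift
    exact ⟨(g : ℤ), by exact_mod_cast hgn⟩
  obtain ⟨γ, hγ⟩ : ∃ γ : ℤ, (p : ℤ) + 1 = (M : ℤ) * γ := by
    obtain ⟨γ, hγn⟩ := hMdvd
    exact ⟨(γ : ℤ), by exact_mod_cast hγn⟩
  have hMpos : 0 < (M : ℤ) := by exact_mod_cast hM1
  have hPpos : 0 < (p : ℤ) := by exact_mod_cast hpp.pos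
  have hdet : (M:ℤ)*γ*g - (M:ℤ)*(-(b:ℤ))^2 - 1^2*g + 2*1*0*(-(b:ℤ)) - 0^2*γ = 1 := by
    linear_combination (-g)*hγ - hg
  have hposQ : ∀ x y z : ℤ, ¬(x = 0 ∧ y = 0 ∧ z = 0) →
      0 < (M:ℤ)*x^2 + γ*y^2 + g*z^2 + 2*1*x*y + 2*0*x*z + 2*(-(b:ℤ))*y*z := by
    intro x y z hne
    have hid : (M:ℤ)*(p:ℤ)*((M:ℤ)*x^2 + γ*y^2 + g*z^2 + 2*1*x*y + 2*0*x*z + 2*(-(b:ℤ))*y*z)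
        = (p:ℤ)*((M:ℤ)*x + y)^2 + ((p:ℤ)*y - (M:ℤ)*(b:ℤ)*z)^2 + (M:ℤ)*z^2 := by
      linear_combination (-(p:ℤ)*y^2)*hγ + (-(M:ℤ)*z^2)*hg
    have hMP : 0 < (M:ℤ)*(p:ℤ) := mul_pos hMpos hPpos
    rcases eq_or_ne z 0 with hz | hz
    · rcases eq_or_ne y 0 with hy | hy
      · have hx : x ≠ 0 := by tauto
        have h1 : 0 < (p:ℤ)*((M:ℤ)*x + y)^2 := by
          rw [hy, add_zero]
          positivity
        nlinarith [sq_nonneg ((p:ℤ)*y - (M:ℤ)*(b:ℤ)*z), sq_nonneg z]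
      · have h1 : 0 < ((p:ℤ)*y - (M:ℤ)*(b:ℤ)*z)^2 := by
          rw [hz, mul_zero, sub_zero]
          positivity
        nlinarith [sq_nonneg ((M:ℤ)*x + y), sq_nonneg z]
    · have h1 : 0 < (M:ℤ)*z^2 := by positivity
      nlinarith [sq_nonneg ((M:ℤ)*x + y), sq_nonneg ((p:ℤ)*y - (M:ℤ)*(b:ℤ)*z)]
  obtain ⟨r, s, t, hrst⟩ := ter (M:ℤ).toNat (M:ℤ) 1 0 γ (-(b:ℤ)) g le_rfl hMpos hdet hposQ 1 0 0
  refine ⟨r.natAbs, s.natAbs, t.natAbs, ?_⟩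
  have : (M : ℤ) = r^2 + s^2 + t^2 := by linear_combination hrst
  rw [← Int.natAbs_sq r, ← Int.natAbs_sq s, ← Int.natAbs_sq t] at this
  exact_mod_cast this
lemma odd_sq (x : ℕ) (h : Odd x) : ∃ m, x^2 = 4*m + 1 := by
  obtain ⟨j, rfl⟩ := h; exact ⟨j^2 + j, by ring⟩

lemma even_sq (x : ℕ) (h : Even x) : ∃ m, x^2 = 4*m^2 ∧ x = 2*m := by
  obtain ⟨j, rfl⟩ := h; exact ⟨j, by constructor; ring; ring⟩

/-- From a three-squares representation of `M ≡ 1 (mod 4)`, extract the odd one. -/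
lemma odd_split (M : ℕ) (hM : M % 4 = 1) :
    ∃ o u v : ℕ, Odd o ∧ v ≤ u ∧ M = o^2 + 4*u^2 + 4*v^2 := by
  obtain ⟨A, B, C, h⟩ := three_squares_of_mod_four M hM
  have key : ∀ X Y Z : ℕ, Odd X → Even Y → Even Z → M = X^2 + Y^2 + Z^2 →
      ∃ o u v : ℕ, Odd o ∧ v ≤ u ∧ M = o^2 + 4*u^2 + 4*v^2 := by
    intro X Y Z hX hY hZ hM'
    obtain ⟨uy, hy2, -⟩ := even_sq Y hY
    obtain ⟨uz, hz2, -⟩ := even_sq Z hZ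
    rcases le_total uz uy with hle | hle
    · exact ⟨X, uy, uz, hX, hle, by rw [hM', hy2, hz2]⟩
    · exact ⟨X, uz, uy, hX, hle, by rw [hM', hy2, hz2]; ring⟩
  rcases Nat.even_or_odd A with hA | hA <;> rcases Nat.even_or_odd B with hB | hB <;>
    rcases Nat.even_or_odd C with hC | hC
  · -- all even: impossible
    obtain ⟨a, ha, -⟩ := even_sq A hA; obtain ⟨b', hb, -⟩ := even_sq B hB
    obtain ⟨c, hc, -⟩ := even_sq C hC
    exfalso
    obtain ⟨a2, ha2⟩ : ∃ m, A^2 = 4*m := ⟨a^2, ha⟩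
    obtain ⟨b2, hb2⟩ : ∃ m, B^2 = 4*m := ⟨b'^2, hb⟩
    obtain ⟨c2, hc2⟩ : ∃ m, C^2 = 4*m := ⟨c^2, hc⟩
    omega
  · -- A even, B even, C odd
    exact key C A B hC hA hB (by omega)
  · exact key B A C hB hA hC (by omega)
  · -- A even, B odd, C odd : impossible
    exfalso
    obtain ⟨a, ha, -⟩ := even_sq A hA
    obtain ⟨b2, hb2⟩ := odd_sq B hB; obtain ⟨c2, hc2⟩ := odd_sq C hC
    obtain ⟨a2, ha2⟩ : ∃ m, A^2 = 4*m := ⟨a^2, ha⟩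
    omega
  · exact key A B C hA hB hC h
  · exfalso
    obtain ⟨b, hb, -⟩ := even_sq B hB
    obtain ⟨a2, ha2⟩ := odd_sq A hA; obtain ⟨c2, hc2⟩ := odd_sq C hC
    obtain ⟨b2, hb2⟩ : ∃ m, B^2 = 4*m := ⟨b^2, hb⟩
    omega
  · exfalso
    obtain ⟨c, hc, -⟩ := even_sq C hC
    obtain ⟨a2, ha2⟩ := odd_sq A hA; obtain ⟨b2, hb2⟩ := odd_sq B hB
    obtain ⟨c2, hc2⟩ : ∃ m, C^2 = 4*m := ⟨c^2, hc⟩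
    omega
  · exfalso
    obtain ⟨a2, ha2⟩ := odd_sq A hA; obtain ⟨b2, hb2⟩ := odd_sq B hB
    obtain ⟨c2, hc2⟩ := odd_sq C hC
    omega

/-- Main lemma, large case. -/
lemma large_case (k n : ℕ) (h : 2*(2*k+1)^2 ≤ 4*(n + k*(k+1)/2) + 1) :
    ∃ x y z : ℕ, n = x*(x+1)/2 + y^2 + z*(z+2*k+1)/2 := by
  obtain ⟨Tk, hTk⟩ : ∃ T, k*(k+1) = 2*T := by
    obtain ⟨t, ht⟩ := Nat.even_mul_succ_self k; exact ⟨t, by omega⟩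
  have hTk' : k*(k+1)/2 = Tk := by omega
  rw [hTk'] at h
  set N := n + Tk with hN
  have hM4 : (4*N + 1) % 4 = 1 := by omega
  obtain ⟨o, u, v, hodd, huv, hrep⟩ := odd_split (4*N + 1) hM4
  obtain ⟨i, rfl⟩ := hodd
  -- bound: (2*(i+u)+1)^2 ≥ (2k+1)^2, so i + u ≥ k
  have hw_ge : k ≤ i + u := by
    by_contra hcon
    push_neg at hcon
    have h1 : 2*((2*i+1)^2 + 4*u^2) ≥ 4*N + 1 := by nlinarith
    have h2 : (2*(i+u)+1)^2 ≥ (2*i+1)^2 + 4*u^2 := by nlinarith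
    have h3 : (2*(i+u)+1)^2 < (2*k+1)^2 := by nlinarith
    nlinarith
  set w := i + u with hw
  obtain ⟨z, hz⟩ : ∃ z, w = k + z := ⟨w - k, by omega⟩
  -- find x with (2w+1)^2 + (2x+1)^2 + 8v^2 = 2*(4N+1)
  have hkey : ∃ x : ℕ, w*(w+1) + x*(x+1) + 2*v^2 = 2*N := by
    rcases le_total (2*u) (2*i+1) with hle | hle
    · refine ⟨i - u, ?_⟩
      obtain ⟨j, rfl⟩ : ∃ j, i = u + j := ⟨i - u, by omega⟩
      have hij : u + j - u = j := by omega
      rw [hw, hij]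
      have expand : 4*((u+j+u)*(u+j+u+1) + j*(j+1) + 2*v^2) + 2 = 2*((2*(u+j)+1)^2 + 4*u^2 + 4*v^2) := by ring
      omega
    · refine ⟨u - i - 1, ?_⟩
      obtain ⟨j, rfl⟩ : ∃ j, u = i + j + 1 := ⟨u - i - 1, by omega⟩
      have hij : i + j + 1 - i - 1 = j := by omega
      rw [hw, hij]
      have expand : 4*((i+(i+j+1))*(i+(i+j+1)+1) + j*(j+1) + 2*v^2) + 2
          = 2*((2*i+1)^2 + 4*(i+j+1)^2 + 4*v^2) := by ring
      omega
  obtain ⟨x, hx⟩ := hkey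
  refine ⟨x, v, z, ?_⟩
  -- final arithmetic
  have hfin : x*(x+1) + 2*v^2 + z*(z+2*k+1) + 2*Tk = 2*N := by
    have hwz : w*(w+1) = z*(z+2*k+1) + k*(k+1) := by rw [hz]; ring
    omega
  obtain ⟨X, hX⟩ : ∃ X, x*(x+1) = 2*X := by
    obtain ⟨t, ht⟩ := Nat.even_mul_succ_self x; exact ⟨t, by omega⟩
  obtain ⟨Z, hZ⟩ : ∃ Z, z*(z+2*k+1) = 2*Z := by
    rcases Nat.even_or_odd z with ⟨j, hj⟩ | ⟨j, hj⟩
    · exact ⟨j*(z+2*k+1), by rw [hj]; ring⟩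
    · exact ⟨z*(j+k+1), by rw [hj]; ring⟩
  rw [hX, hZ, Nat.mul_div_cancel_left X (by norm_num), Nat.mul_div_cancel_left Z (by norm_num)]
  have hv : v^2 = v^2 := rfl
  omega
lemma small_1 (n : ℕ) (h : n < 4) :
    ∃ x y z : ℕ, n = x*(x+1)/2 + y^2 + z*(z+2*1+1)/2 := by
  interval_cases n
  exacts [⟨0,0,0, by norm_num⟩, ⟨0,1,0, by norm_num⟩, ⟨0,0,1, by norm_num⟩, ⟨0,1,1, by norm_num⟩]

lemma small_2 (n : ℕ) (h : n < 10) :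
    ∃ x y z : ℕ, n = x*(x+1)/2 + y^2 + z*(z+2*2+1)/2 := by
  interval_cases n
  exacts [⟨0,0,0, by norm_num⟩, ⟨0,1,0, by norm_num⟩, ⟨1,1,0, by norm_num⟩, ⟨0,0,1, by norm_num⟩, ⟨0,1,1, by norm_num⟩, ⟨1,1,1, by norm_num⟩, ⟨2,0,1, by norm_num⟩, ⟨0,0,2, by norm_num⟩, ⟨0,1,2, by norm_num⟩, ⟨0,3,0, by norm_num⟩]

lemma small_3 (n : ℕ) (h : n < 19) :
    ∃ x y z : ℕ, n = x*(x+1)/2 + y^2 + z*(z+2*3+1)/2 := by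
  interval_cases n
  exacts [⟨0,0,0, by norm_num⟩, ⟨0,1,0, by norm_num⟩, ⟨1,1,0, by norm_num⟩, ⟨2,0,0, by norm_num⟩, ⟨0,0,1, by norm_num⟩, ⟨0,1,1, by norm_num⟩, ⟨1,1,1, by norm_num⟩, ⟨2,0,1, by norm_num⟩, ⟨0,2,1, by norm_num⟩, ⟨0,0,2, by norm_num⟩, ⟨0,1,2, by norm_num⟩, ⟨1,1,2, by norm_num⟩, ⟨2,0,2, by norm_num⟩, ⟨0,2,2, by norm_num⟩, ⟨1,2,2, by norm_num⟩, ⟨0,0,3, by norm_num⟩, ⟨0,1,3, by norm_num⟩, ⟨1,1,3, by norm_num⟩, ⟨0,3,2, by norm_num⟩]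

lemma small_4 (n : ℕ) (h : n < 31) :
    ∃ x y z : ℕ, n = x*(x+1)/2 + y^2 + z*(z+2*4+1)/2 := by
  interval_cases n
  exacts [⟨0,0,0, by norm_num⟩, ⟨0,1,0, by norm_num⟩, ⟨1,1,0, by norm_num⟩, ⟨2,0,0, by norm_num⟩, ⟨0,2,0, by norm_num⟩, ⟨0,0,1, by norm_num⟩, ⟨0,1,1, by norm_num⟩, ⟨1,1,1, by norm_num⟩, ⟨2,0,1, by norm_num⟩, ⟨0,2,1, by norm_num⟩, ⟨1,2,1, by norm_num⟩, ⟨0,0,2, by norm_num⟩, ⟨0,1,2, by norm_num⟩, ⟨1,1,2, by norm_num⟩, ⟨0,3,1, by norm_num⟩, ⟨0,2,2, by norm_num⟩, ⟨0,4,0, by norm_num⟩, ⟨1,4,0, by norm_num⟩, ⟨0,0,3, by norm_num⟩, ⟨0,1,3, by norm_num⟩, ⟨0,3,2, by norm_num⟩, ⟨0,4,1, by norm_num⟩, ⟨0,2,3, by norm_num⟩, ⟨1,2,3, by norm_num⟩, ⟨2,4,1, by norm_num⟩, ⟨0,5,0, by norm_num⟩, ⟨0,0,4, by norm_num⟩,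 ⟨0,1,4, by norm_num⟩, ⟨1,1,4, by norm_num⟩, ⟨2,0,4, by norm_num⟩, ⟨0,2,4, by norm_num⟩]

lemma small_5 (n : ℕ) (h : n < 46) :
    ∃ x y z : ℕ, n = x*(x+1)/2 + y^2 + z*(z+2*5+1)/2 := by
  interval_cases n
  exacts [⟨0,0,0, by norm_num⟩, ⟨0,1,0, by norm_num⟩, ⟨1,1,0, by norm_num⟩, ⟨2,0,0, by norm_num⟩, ⟨0,2,0, by norm_num⟩, ⟨1,2,0, by norm_num⟩, ⟨0,0,1, by norm_num⟩, ⟨0,1,1, by norm_num⟩, ⟨1,1,1, by norm_num⟩, ⟨0,3,0, by norm_num⟩, ⟨0,2,1, by norm_num⟩, ⟨1,2,1, by norm_num⟩, ⟨2,3,0, by norm_num⟩, ⟨0,0,2, by norm_num⟩, ⟨0,1,2, by norm_num⟩, ⟨0,3,1, by norm_num⟩, ⟨0,4,0, by norm_num⟩, ⟨0,2,2, by norm_num⟩, ⟨1,2,2, by norm_num⟩, ⟨2,4,0, by norm_num⟩, ⟨2,2,2, by norm_num⟩, ⟨0,0,3, by norm_num⟩, ⟨0,1,3, by norm_num⟩,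 ⟨1,1,3, by norm_num⟩, ⟨2,0,3, by norm_num⟩, ⟨0,2,3, by norm_num⟩, ⟨1,2,3, by norm_num⟩, ⟨3,0,3, by norm_num⟩, ⟨2,2,3, by norm_num⟩, ⟨0,4,2, by norm_num⟩, ⟨0,0,4, by norm_num⟩, ⟨0,1,4, by norm_num⟩, ⟨1,1,4, by norm_num⟩, ⟨2,0,4, by norm_num⟩, ⟨0,2,4, by norm_num⟩, ⟨1,2,4, by norm_num⟩, ⟨0,6,0, by norm_num⟩, ⟨0,4,3, by norm_num⟩, ⟨0,5,2, by norm_num⟩, ⟨0,3,4, by norm_num⟩, ⟨0,0,5, by norm_num⟩, ⟨0,1,5, by norm_num⟩, ⟨0,6,1, by norm_num⟩, ⟨1,6,1, by norm_num⟩, ⟨0,2,5, by norm_num⟩, ⟨1,2,5, by norm_num⟩]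

lemma small_6 (n : ℕ) (h : n < 64) :
    ∃ x y z : ℕ, n = x*(x+1)/2 + y^2 + z*(z+2*6+1)/2 := by
  interval_cases n
  exacts [⟨0,0,0, by norm_num⟩, ⟨0,1,0, by norm_num⟩, ⟨1,1,0, by norm_num⟩, ⟨2,0,0, by norm_num⟩, ⟨0,2,0, by norm_num⟩, ⟨1,2,0, by norm_num⟩, ⟨3,0,0, by norm_num⟩, ⟨0,0,1, by norm_num⟩, ⟨0,1,1, by norm_num⟩, ⟨0,3,0, by norm_num⟩, ⟨1,3,0, by norm_num⟩, ⟨0,2,1, by norm_num⟩, ⟨1,2,1, by norm_num⟩, ⟨3,0,1, by norm_num⟩, ⟨2,2,1, by norm_num⟩, ⟨0,0,2, by norm_num⟩, ⟨0,1,2, by norm_num⟩, ⟨1,1,2, by norm_num⟩, ⟨2,0,2, by norm_num⟩, ⟨0,2,2, by norm_num⟩, ⟨1,2,2, by norm_num⟩, ⟨3,0,2, by norm_num⟩, ⟨2,2,2, by norm_num⟩, ⟨0,4,1, by norm_num⟩, ⟨0,0,3, by norm_num⟩, ⟨0,1,3, by norm_num⟩, ⟨1,1,3, by norm_num⟩,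 ⟨2,0,3, by norm_num⟩, ⟨0,2,3, by norm_num⟩, ⟨1,2,3, by norm_num⟩, ⟨3,0,3, by norm_num⟩, ⟨0,4,2, by norm_num⟩, ⟨0,5,1, by norm_num⟩, ⟨0,3,3, by norm_num⟩, ⟨0,0,4, by norm_num⟩, ⟨0,1,4, by norm_num⟩, ⟨0,6,0, by norm_num⟩, ⟨1,6,0, by norm_num⟩, ⟨0,2,4, by norm_num⟩, ⟨1,2,4, by norm_num⟩, ⟨0,4,3, by norm_num⟩, ⟨1,4,3, by norm_num⟩, ⟨3,6,0, by norm_num⟩, ⟨0,3,4, by norm_num⟩, ⟨1,3,4, by norm_num⟩, ⟨0,0,5, by norm_num⟩, ⟨0,1,5, by norm_num⟩, ⟨1,1,5, by norm_num⟩, ⟨2,0,5, by norm_num⟩, ⟨0,2,5, by norm_num⟩, ⟨0,4,4, by norm_num⟩, ⟨0,6,2, by norm_num⟩, ⟨1,6,2, by norm_num⟩, ⟨2,4,4, by norm_num⟩, ⟨0,3,5, by norm_num⟩, ⟨1,3,5, by norm_num⟩, ⟨0,7,1, by norm_num⟩, ⟨0,0,6, by norm_num⟩, ⟨0,1,6,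 by norm_num⟩, ⟨0,5,4, by norm_num⟩, ⟨0,6,3, by norm_num⟩, ⟨0,2,6, by norm_num⟩, ⟨1,2,6, by norm_num⟩, ⟨2,6,3, by norm_num⟩]

lemma small_7 (n : ℕ) (h : n < 85) :
    ∃ x y z : ℕ, n = x*(x+1)/2 + y^2 + z*(z+2*7+1)/2 := by
  interval_cases n
  exacts [⟨0,0,0, by norm_num⟩, ⟨0,1,0, by norm_num⟩, ⟨1,1,0, by norm_num⟩, ⟨2,0,0, by norm_num⟩, ⟨0,2,0, by norm_num⟩, ⟨1,2,0, by norm_num⟩, ⟨3,0,0, by norm_num⟩, ⟨2,2,0, by norm_num⟩, ⟨0,0,1, by norm_num⟩, ⟨0,1,1, by norm_num⟩, ⟨1,1,1, by norm_num⟩, ⟨2,0,1, by norm_num⟩, ⟨0,2,1, by norm_num⟩, ⟨1,2,1, by norm_num⟩, ⟨3,0,1, by norm_num⟩, ⟨2,2,1, by norm_num⟩, ⟨0,4,0, by norm_num⟩, ⟨0,0,2, by norm_num⟩, ⟨0,1,2, by norm_num⟩, ⟨1,1,2, by norm_num⟩, ⟨2,0,2, by norm_num⟩, ⟨0,2,2,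 by norm_num⟩, ⟨1,2,2, by norm_num⟩, ⟨3,0,2, by norm_num⟩, ⟨0,4,1, by norm_num⟩, ⟨0,5,0, by norm_num⟩, ⟨0,3,2, by norm_num⟩, ⟨0,0,3, by norm_num⟩, ⟨0,1,3, by norm_num⟩, ⟨1,1,3, by norm_num⟩, ⟨2,0,3, by norm_num⟩, ⟨0,2,3, by norm_num⟩, ⟨1,2,3, by norm_num⟩, ⟨0,4,2, by norm_num⟩, ⟨1,4,2, by norm_num⟩, ⟨4,5,0, by norm_num⟩, ⟨0,3,3, by norm_num⟩, ⟨1,3,3, by norm_num⟩, ⟨0,0,4, by norm_num⟩, ⟨0,1,4, by norm_num⟩, ⟨1,1,4, by norm_num⟩, ⟨2,0,4, by norm_num⟩, ⟨0,2,4, by norm_num⟩, ⟨0,4,3, by norm_num⟩, ⟨0,6,1, by norm_num⟩, ⟨1,6,1, by norm_num⟩, ⟨2,4,3, by norm_num⟩, ⟨0,3,4, by norm_num⟩, ⟨1,3,4, by norm_num⟩, ⟨0,7,0, by norm_num⟩, ⟨0,0,5, by norm_num⟩, ⟨0,1,5, by norm_num⟩, ⟨0,5,3, by norm_num⟩, ⟨0,6,2,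 by norm_num⟩, ⟨0,2,5, by norm_num⟩, ⟨1,2,5, by norm_num⟩, ⟨2,6,2, by norm_num⟩, ⟨0,7,1, by norm_num⟩, ⟨1,7,1, by norm_num⟩, ⟨0,3,5, by norm_num⟩, ⟨1,3,5, by norm_num⟩, ⟨4,1,5, by norm_num⟩, ⟨2,3,5, by norm_num⟩, ⟨0,0,6, by norm_num⟩, ⟨0,1,6, by norm_num⟩, ⟨1,1,6, by norm_num⟩, ⟨0,4,5, by norm_num⟩, ⟨0,2,6, by norm_num⟩, ⟨1,2,6, by norm_num⟩, ⟨2,4,5, by norm_num⟩, ⟨2,2,6, by norm_num⟩, ⟨6,0,5, by norm_num⟩, ⟨0,3,6, by norm_num⟩, ⟨1,3,6, by norm_num⟩, ⟨0,6,4, by norm_num⟩, ⟨0,5,5, by norm_num⟩, ⟨0,7,3, by norm_num⟩, ⟨0,0,7, by norm_num⟩, ⟨0,1,7, by norm_num⟩, ⟨0,4,6, by norm_num⟩, ⟨1,4,6, by norm_num⟩, ⟨0,2,7, by norm_num⟩, ⟨1,2,7, by norm_num⟩, ⟨3,0,7, by norm_num⟩, ⟨2,2,7, by norm_num⟩]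

theorem stmt_10 : ∀ k ∈ ({1, 2, 3, 4, 5, 6, 7} : Set ℕ), ∀ n : ℕ, ∃ x y z : ℕ,
    n = x * (x + 1) / 2 + y ^ 2 + z * (z + 2 * k + 1) / 2 := by
  intro k hk n
  simp only [Set.mem_insert_iff, Set.mem_singleton_iff] at hk
  rcases hk with rfl | rfl | rfl | rfl | rfl | rfl | rfl
  · rcases lt_or_ge n 4 with h | h
    · exact small_1 n h
    · exact large_case 1 n (by omega)
  · rcases lt_or_ge n 10 with h | h
    · exact small_2 n h
    · exact large_case 2 n (by omega)
  · rcases lt_or_ge n 19 with h | h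
    · exact small_3 n h
    · exact large_case 3 n (by omega)
  · rcases lt_or_ge n 31 with h | h
    · exact small_4 n h
    · exact large_case 4 n (by omega)
  · rcases lt_or_ge n 46 with h | h
    · exact small_5 n h
    · exact large_case 5 n (by omega)
  · rcases lt_or_ge n 64 with h | h
    · exact small_6 n h
    · exact large_case 6 n (by omega)
  · rcases lt_or_ge n 85 with h | h
    · exact small_7 n h
    · exact large_case 7 n (by omega)
end

section
/- Every positive integer n can be written as x² + T_y + T_z with x, y, z ∈ ℕ and x ≥ 1; that is, every positive integer is the sum of a positive square and two triangular numbers. -/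
def bQ (A B C y z : ℤ) : ℤ := A*y^2 + 2*B*y*z + C*z^2
def tQ (p q r s t u x y z : ℤ) : ℤ := p*x^2 + s*y^2 + u*z^2 + 2*(q*x*y + r*x*z + t*y*z)
def tB (p q r s t u x1 y1 z1 x2 y2 z2 : ℤ) : ℤ :=
  p*x1*x2 + s*y1*y2 + u*z1*z2 + q*(x1*y2+x2*y1) + r*(x1*z2+x2*z1) + t*(y1*z2+y2*z1)
def det3 (a b c d e f g h i : ℤ) : ℤ := a*(e*i - f*h) - b*(d*i - f*g) + c*(d*h - e*g)
def tdet (p q r s t u : ℤ) : ℤ := det3 p q r q s t r t u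

lemma bQ_subst (A B C α β γ δ y z : ℤ) :
    bQ (bQ A B C α γ) (A*α*β + B*(α*δ + β*γ) + C*γ*δ) (bQ A B C β δ) y z
      = bQ A B C (α*y + β*z) (γ*y + δ*z) := by
  unfold bQ; ring

lemma bQ_det (A B C α β γ δ : ℤ) :
    bQ A B C α γ * bQ A B C β δ - (A*α*β + B*(α*δ + β*γ) + C*γ*δ)^2
      = (A*C - B^2) * (α*δ - β*γ)^2 := by
  unfold bQ; ring

/-- Existence of the minimum of a positive binary form. -/
lemma bin_min_exists {A B C : ℤ}
    (hpos : ∀ y z : ℤ, ¬(y = 0 ∧ z = 0) → 0 < bQ A B C y z) :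
    ∃ μ : ℤ, (∃ y z, ¬(y = 0 ∧ z = 0) ∧ bQ A B C y z = μ) ∧
      (∀ y z, ¬(y = 0 ∧ z = 0) → μ ≤ bQ A B C y z) := by
  classical
  let S : Set ℕ := {k | ∃ y z, ¬(y = 0 ∧ z = 0) ∧ bQ A B C y z = (k : ℤ)}
  have h10 : ¬((1:ℤ) = 0 ∧ (0:ℤ) = 0) := by simp
  have hSne : S.Nonempty := by
    refine ⟨(bQ A B C 1 0).toNat, 1, 0, h10, ?_⟩
    rw [Int.toNat_of_nonneg (le_of_lt (hpos 1 0 h10))]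
  refine ⟨((sInf S : ℕ) : ℤ), ?_, ?_⟩
  · obtain ⟨y, z, hyz, hv⟩ := Nat.sInf_mem hSne
    exact ⟨y, z, hyz, hv⟩
  · intro y z hyz
    have hmem : (bQ A B C y z).toNat ∈ S := by
      refine ⟨y, z, hyz, ?_⟩
      rw [Int.toNat_of_nonneg (le_of_lt (hpos y z hyz))]
    have h1 : sInf S ≤ (bQ A B C y z).toNat := Nat.sInf_le hmem
    have h2 : ((sInf S : ℕ) : ℤ) ≤ ((bQ A B C y z).toNat : ℤ) := by exact_mod_cast h1
    rwa [Int.toNat_of_nonneg (le_of_lt (hpos y z hyz))] at h2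

/-- Core binary reduction: a positive binary form has a reduced equivalent form. -/
lemma bin_reduced {A B C : ℤ}
    (hpos : ∀ y z : ℤ, ¬(y = 0 ∧ z = 0) → 0 < bQ A B C y z) :
    ∃ μ b' c' α β γ δ : ℤ, α*δ - β*γ = 1 ∧ 0 < μ ∧
      (∀ y z, ¬(y = 0 ∧ z = 0) → μ ≤ bQ A B C y z) ∧
      bQ A B C α γ = μ ∧ (A*α*β + B*(α*δ + β*γ) + C*γ*δ) = b' ∧ bQ A B C β δ = c' ∧
      4*b'^2 ≤ μ^2 ∧ μ ≤ c' := by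
  obtain ⟨μ, ⟨y0, z0, hyz0, hval⟩, hmin⟩ := bin_min_exists hpos
  have hμpos : 0 < μ := hval ▸ hpos y0 z0 hyz0
  -- primitivize
  set g : ℕ := Int.gcd y0 z0 with hg
  have hgne : (g : ℤ) ≠ 0 := by
    simp only [hg, ne_eq, Int.natCast_eq_zero, Int.gcd_eq_zero_iff]
    tauto
  obtain ⟨y1, hy1⟩ : (g:ℤ) ∣ y0 := (Int.gcd_dvd_left _ _)
  obtain ⟨z1, hz1⟩ : (g:ℤ) ∣ z0 := (Int.gcd_dvd_right _ _)
  have hyz1 : ¬(y1 = 0 ∧ z1 = 0) := by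
    rintro ⟨rfl, rfl⟩; simp at hy1 hz1; exact hyz0 ⟨hy1, hz1⟩
  have hsq : bQ A B C y0 z0 = (g:ℤ)^2 * bQ A B C y1 z1 := by
    rw [hy1, hz1]; unfold bQ; ring
  have h1 := hmin y1 z1 hyz1
  have h2 : 0 < bQ A B C y1 z1 := hpos y1 z1 hyz1
  have hgsq : 1 ≤ (g:ℤ)^2 := by
    have h3 : 0 < (g:ℤ) := lt_of_le_of_ne (Int.natCast_nonneg g) (Ne.symm hgne)
    nlinarith
  have hkey : (g:ℤ)^2 * μ ≤ μ := by
    calc (g:ℤ)^2 * μ ≤ (g:ℤ)^2 * bQ A B C y1 z1 := by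
          apply mul_le_mul_of_nonneg_left h1 (by positivity)
      _ = μ := by rw [← hsq, hval]
  have hg1 : (g:ℤ)^2 = 1 := by nlinarith
  -- Bezout
  have hgnat1 : (g:ℤ) = 1 := by nlinarith [lt_of_le_of_ne (Int.natCast_nonneg g) (Ne.symm hgne)]
  have hbez : (g : ℤ) = y0 * Int.gcdA y0 z0 + z0 * Int.gcdB y0 z0 := Int.gcd_eq_gcd_ab y0 z0
  set u : ℤ := Int.gcdA y0 z0
  set v : ℤ := Int.gcdB y0 z0
  have huv : y0 * u + z0 * v = 1 := by rw [← hbez, hgnat1]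
  have hmin1 : bQ A B C y0 z0 = μ := hval
  -- first change of basis: columns (y0,z0), (-v,u)
  set α := y0; set γ := z0
  set β0 : ℤ := -v; set δ0 : ℤ := u
  have hdet0 : α*δ0 - β0*γ = 1 := by simp only [α, γ, β0, δ0]; linarith [huv]
  set B0 : ℤ := A*α*β0 + B*(α*δ0 + β0*γ) + C*γ*δ0 with hB0
  -- shear
  set k : ℤ := if 2 * (B0 % μ) ≤ μ then B0 / μ else B0 / μ + 1 with hk
  set β : ℤ := β0 - k*α
  set δ : ℤ := δ0 - k*γ
  have hdet : α*δ - β*γ = 1 := by simp only [β, δ]; linarith [hdet0, mul_comm α γ]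
  have hnewB : A*α*β + B*(α*δ + β*γ) + C*γ*δ = B0 - k * bQ A B C α γ := by
    simp only [β, δ, hB0]; unfold bQ; ring
  have hAval : bQ A B C α γ = μ := hmin1
  set b' : ℤ := B0 - k * μ
  have hmod : B0 % μ = B0 - μ * (B0 / μ) := Int.emod_def B0 μ
  have hmod0 : 0 ≤ B0 % μ := Int.emod_nonneg B0 (ne_of_gt hμpos)
  have hmodlt : B0 % μ < μ := Int.emod_lt_of_pos B0 hμpos
  have hb'bound : 4*b'^2 ≤ μ^2 := by
    by_cases hc : 2 * (B0 % μ) ≤ μ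
    · have : k = B0 / μ := by simp [hk, hc]
      have hb' : b' = B0 % μ := by simp only [b', this, hmod]; ring
      nlinarith [hmod0, hc, hb']
    · push_neg at hc
      have : k = B0 / μ + 1 := by simp [hk, not_le.mpr hc]
      have hb' : b' = B0 % μ - μ := by simp only [b', this, hmod]; ring
      nlinarith [hmodlt, hc, hb']
  have hβδ : ¬(β = 0 ∧ δ = 0) := by
    rintro ⟨h1, h2⟩; rw [h1, h2] at hdet; simp at hdet
  have hCge : μ ≤ bQ A B C β δ := hmin β δ hβδ
  exact ⟨μ, b', bQ A B C β δ, α, β, γ, δ, hdet, hμpos, hmin, hAval,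
    by rw [hnewB, hAval], rfl, hb'bound, hCge⟩

/-- Hermite-type bound: the minimum `μ` of a positive binary form satisfies `3μ² ≤ 4 det`. -/
lemma bin_key {A B C : ℤ}
    (hpos : ∀ y z : ℤ, ¬(y = 0 ∧ z = 0) → 0 < bQ A B C y z) :
    ∃ μ : ℤ, 0 < μ ∧ (∃ y z, ¬(y = 0 ∧ z = 0) ∧ bQ A B C y z = μ) ∧
      (∀ y z, ¬(y = 0 ∧ z = 0) → μ ≤ bQ A B C y z) ∧
      3 * μ^2 ≤ 4 * (A*C - B^2) := by
  obtain ⟨μ, b', c', α, β, γ, δ, hdet, hμpos, hmin, hA, hB, hC, hb, hc⟩ := bin_reduced hpos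
  have hαγ : ¬(α = 0 ∧ γ = 0) := by
    rintro ⟨rfl, rfl⟩; simp at hdet
  refine ⟨μ, hμpos, ⟨α, γ, hαγ, hA⟩, hmin, ?_⟩
  have h1 : μ * c' - b'^2 = (A*C - B^2) * (α*δ - β*γ)^2 := by
    rw [← hA, ← hB, ← hC]; exact bQ_det A B C α β γ δ
  rw [hdet] at h1
  nlinarith [hc, hb, hμpos]

/-- A positive binary form of determinant 1 is equivalent to `y² + z²`. -/
lemma bin_equiv {A B C : ℤ}
    (hpos : ∀ y z : ℤ, ¬(y = 0 ∧ z = 0) → 0 < bQ A B C y z)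
    (hdet1 : A*C - B^2 = 1) :
    ∃ α β γ δ : ℤ, α*δ - β*γ = 1 ∧
      ∀ y z : ℤ, bQ A B C (α*y + β*z) (γ*y + δ*z) = y^2 + z^2 := by
  obtain ⟨μ, b', c', α, β, γ, δ, hdet, hμpos, hmin, hA, hB, hC, hb, hc⟩ := bin_reduced hpos
  have h1 : μ * c' - b'^2 = (A*C - B^2) * (α*δ - β*γ)^2 := by
    rw [← hA, ← hB, ← hC]; exact bQ_det A B C α β γ δ
  rw [hdet1, hdet] at h1
  have hμ1 : μ = 1 := by nlinarith
  have hb0 : b' = 0 := by nlinarith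
  have hc1 : c' = 1 := by rw [hμ1, hb0] at h1; linarith
  refine ⟨α, β, γ, δ, hdet, fun y z => ?_⟩
  have := bQ_subst A B C α β γ δ y z
  rw [hA, hB, hC, hμ1, hb0, hc1] at this
  rw [← this]; unfold bQ; ring

/-- rounding: find `x` with `|p x + w| ≤ p/2`. -/
lemma round_lemma (w p : ℤ) (hp : 0 < p) : ∃ x : ℤ, 4*(p*x + w)^2 ≤ p^2 := by
  have hmod : w % p = w - p * (w / p) := Int.emod_def w p
  have hmod0 : 0 ≤ w % p := Int.emod_nonneg w (ne_of_gt hp)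
  have hmodlt : w % p < p := Int.emod_lt_of_pos w hp
  by_cases hc : 2 * (w % p) ≤ p
  · exact ⟨-(w / p), by nlinarith⟩
  · push_neg at hc
    exact ⟨-(w / p) - 1, by nlinarith⟩

/-- minimum of a positive ternary form exists -/
lemma tern_min_exists {p q r s t u : ℤ}
    (hpos : ∀ x y z : ℤ, ¬(x = 0 ∧ y = 0 ∧ z = 0) → 0 < tQ p q r s t u x y z) :
    ∃ μ : ℤ, (∃ x y z, ¬(x = 0 ∧ y = 0 ∧ z = 0) ∧ tQ p q r s t u x y z = μ) ∧
      (∀ x y z, ¬(x = 0 ∧ y = 0 ∧ z = 0) → μ ≤ tQ p q r s t u x y z) := by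
  classical
  let S : Set ℕ := {k | ∃ x y z, ¬(x = 0 ∧ y = 0 ∧ z = 0) ∧ tQ p q r s t u x y z = (k : ℤ)}
  have h10 : ¬((1:ℤ) = 0 ∧ (0:ℤ) = 0 ∧ (0:ℤ) = 0) := by simp
  have hSne : S.Nonempty := by
    refine ⟨(tQ p q r s t u 1 0 0).toNat, 1, 0, 0, h10, ?_⟩
    rw [Int.toNat_of_nonneg (le_of_lt (hpos 1 0 0 h10))]
  refine ⟨((sInf S : ℕ) : ℤ), ?_, ?_⟩
  · obtain ⟨x, y, z, hxyz, hv⟩ := Nat.sInf_mem hSne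
    exact ⟨x, y, z, hxyz, hv⟩
  · intro x y z hxyz
    have hmem : (tQ p q r s t u x y z).toNat ∈ S := by
      refine ⟨x, y, z, hxyz, ?_⟩
      rw [Int.toNat_of_nonneg (le_of_lt (hpos x y z hxyz))]
    have h1 : sInf S ≤ (tQ p q r s t u x y z).toNat := Nat.sInf_le hmem
    have h2 : ((sInf S : ℕ) : ℤ) ≤ ((tQ p q r s t u x y z).toNat : ℤ) := by exact_mod_cast h1
    rwa [Int.toNat_of_nonneg (le_of_lt (hpos x y z hxyz))] at h2

/-- a primitive vector in `ℤ³` is the first column of a determinant-1 matrix -/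
lemma ext_basis (x0 y0 z0 : ℤ) (hg : Int.gcd x0 (Int.gcd y0 z0) = 1) :
    ∃ b c e f h i : ℤ, det3 x0 b c y0 e f z0 h i = 1 := by
  by_cases hyz : Int.gcd y0 z0 = 0
  · have hy0 : y0 = 0 := Int.gcd_eq_zero_iff.mp hyz |>.1
    have hz0 : z0 = 0 := Int.gcd_eq_zero_iff.mp hyz |>.2
    rw [hyz] at hg
    have hx : x0 * x0 = 1 := by
      have h1 : x0.natAbs = 1 := by simpa [Int.gcd] using hg
      have := Int.natAbs_mul_self (a := x0)
      rw [h1] at this; omega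
    exact ⟨0, 0, x0, 0, 0, 1, by rw [hy0, hz0]; unfold det3; linarith [hx]⟩
  · set g2 : ℕ := Int.gcd y0 z0 with hg2
    have hg2ne : g2 ≠ 0 := hyz
    have hg2pos : 0 < (g2:ℤ) := by exact_mod_cast Nat.pos_of_ne_zero hg2ne
    obtain ⟨y', hy'⟩ : (g2:ℤ) ∣ y0 := (Int.gcd_dvd_left _ _)
    obtain ⟨z', hz'⟩ : (g2:ℤ) ∣ z0 := (Int.gcd_dvd_right _ _)
    have hgyz' : Int.gcd y' z' = 1 := by
      have h1 : Int.gcd ((g2:ℤ) * y') ((g2:ℤ) * z') = g2 * Int.gcd y' z' := by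
        rw [Int.gcd_mul_left]; simp
      rw [← hy', ← hz', ← hg2] at h1
      exact Nat.eq_of_mul_eq_mul_left (Nat.pos_of_ne_zero hg2ne) (by omega)
    -- Bezout for (y', z')
    have hbez1 : y' * Int.gcdA y' z' + z' * Int.gcdB y' z' = 1 := by
      have := Int.gcd_eq_gcd_ab y' z'
      rw [hgyz'] at this; exact_mod_cast this.symm
    set A : ℤ := Int.gcdA y' z'
    set B : ℤ := Int.gcdB y' z'
    -- Bezout for (x0, g2)
    have hbez2 : x0 * Int.gcdA x0 (g2:ℤ) + (g2:ℤ) * Int.gcdB x0 (g2:ℤ) = 1 := by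
      have := Int.gcd_eq_gcd_ab x0 ((g2:ℤ))
      rw [show Int.gcd x0 ((g2:ℤ)) = 1 from by simpa [hg2] using hg] at this
      exact_mod_cast this.symm
    set c' : ℤ := Int.gcdA x0 (g2:ℤ)
    set d' : ℤ := Int.gcdB x0 (g2:ℤ)
    refine ⟨0, d', -B, -c'*y', A, -c'*z', ?_⟩
    rw [hy', hz']
    unfold det3
    linear_combination (x0*c' + d'*(g2:ℤ)) * hbez1 + hbez2

lemma tQ_subst (p q r s t u a b c d e f g h i x y z : ℤ) :
    tQ (tQ p q r s t u a d g) (tB p q r s t u a d g b e h) (tB p q r s t u a d g c f i)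
       (tQ p q r s t u b e h) (tB p q r s t u b e h c f i) (tQ p q r s t u c f i) x y z
      = tQ p q r s t u (a*x+b*y+c*z) (d*x+e*y+f*z) (g*x+h*y+i*z) := by
  unfold tQ tB; ring

lemma tdet_subst (p q r s t u a b c d e f g h i : ℤ) :
    tdet (tQ p q r s t u a d g) (tB p q r s t u a d g b e h) (tB p q r s t u a d g c f i)
       (tQ p q r s t u b e h) (tB p q r s t u b e h c f i) (tQ p q r s t u c f i)
      = tdet p q r s t u * (det3 a b c d e f g h i)^2 := by
  unfold tdet det3 tQ tB; ring

lemma det3_mul (a b c d e f g h i A B C D E F G H I : ℤ) :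
    det3 (a*A + b*D + c*G) (a*B + b*E + c*H) (a*C + b*F + c*I)
         (d*A + e*D + f*G) (d*B + e*E + f*H) (d*C + e*F + f*I)
         (g*A + h*D + i*G) (g*B + h*E + i*H) (g*C + h*F + i*I)
      = det3 a b c d e f g h i * det3 A B C D E F G H I := by
  unfold det3; ring

lemma solve_e1 (a b c d e f g h i : ℤ) (hdet : det3 a b c d e f g h i = 1) :
    a*(e*i - f*h) + b*(-(d*i - f*g)) + c*(d*h - e*g) = 1 ∧
    d*(e*i - f*h) + e*(-(d*i - f*g)) + f*(d*h - e*g) = 0 ∧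
    g*(e*i - f*h) + h*(-(d*i - f*g)) + i*(d*h - e*g) = 0 := by
  refine ⟨?_, by ring, by ring⟩
  rw [← hdet]; unfold det3; ring

lemma lin_inj (a b c d e f g h i x y z : ℤ) (hdet : det3 a b c d e f g h i = 1)
    (h1 : a*x + b*y + c*z = 0) (h2 : d*x + e*y + f*z = 0) (h3 : g*x + h*y + i*z = 0) :
    x = 0 ∧ y = 0 ∧ z = 0 := by
  refine ⟨?_, ?_, ?_⟩
  · have : det3 a b c d e f g h i * x =
      (e*i - f*h)*(a*x + b*y + c*z) - (b*i - c*h)*(d*x + e*y + f*z) + (b*f - c*e)*(g*x + h*y + i*z) := by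
      unfold det3; ring
    rw [hdet, h1, h2, h3] at this; linarith
  · have : det3 a b c d e f g h i * y =
      -(d*i - f*g)*(a*x + b*y + c*z) + (a*i - c*g)*(d*x + e*y + f*z) - (a*f - c*d)*(g*x + h*y + i*z) := by
      unfold det3; ring
    rw [hdet, h1, h2, h3] at this; linarith
  · have : det3 a b c d e f g h i * z =
      (d*h - e*g)*(a*x + b*y + c*z) - (a*h - b*g)*(d*x + e*y + f*z) + (a*e - b*d)*(g*x + h*y + i*z) := by
      unfold det3; ring
    rw [hdet, h1, h2, h3] at this; linarith

lemma adjQ_val (p q r s t u x y z : ℤ) :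
    p * tQ p q r s t u x y z
      = (p*x + q*y + r*z)^2 + bQ (p*s - q^2) (p*t - q*r) (p*u - r^2) y z := by
  unfold tQ bQ; ring

lemma adjQ_det (p q r s t u : ℤ) :
    (p*s - q^2)*(p*u - r^2) - (p*t - q*r)^2 = p * tdet p q r s t u := by
  unfold tdet det3; ring

lemma shear_id (q1 r1 s1 t1 u1 X y z : ℤ) :
    tQ 1 q1 r1 s1 t1 u1 (X - q1*y - r1*z) y z
      = X^2 + bQ (s1 - q1^2) (t1 - q1*r1) (u1 - r1^2) y z := by
  unfold tQ bQ; ring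

/-- Stage 2: reduction of a minimal ternary form of determinant 1 to the identity form. -/
lemma stage2 (p1 q1 r1 s1 t1 u1 μ : ℤ) (hμpos : 0 < μ)
    (hdet1 : tdet p1 q1 r1 s1 t1 u1 = 1)
    (hmin1 : ∀ X Y Z : ℤ, ¬(X = 0 ∧ Y = 0 ∧ Z = 0) → μ ≤ tQ p1 q1 r1 s1 t1 u1 X Y Z)
    (hp1μ : p1 = μ) :
    ∃ a b c d e f g h i : ℤ, det3 a b c d e f g h i = 1 ∧
      ∀ X Y Z : ℤ, tQ p1 q1 r1 s1 t1 u1 (a*X+b*Y+c*Z) (d*X+e*Y+f*Z) (g*X+h*Y+i*Z)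
        = X^2 + Y^2 + Z^2 := by
  subst hp1μ
  -- the adjoint binary form
  have hABdet : (p1*s1 - q1^2)*(p1*u1 - r1^2) - (p1*t1 - q1*r1)^2 = p1 := by
    rw [adjQ_det, hdet1]; ring
  have hQ2lb : ∀ y z : ℤ, ¬(y = 0 ∧ z = 0) →
      3*p1^2 ≤ 4 * bQ (p1*s1 - q1^2) (p1*t1 - q1*r1) (p1*u1 - r1^2) y z := by
    intro y z hyz
    obtain ⟨x, hx⟩ := round_lemma (q1*y + r1*z) p1 hμpos
    have hval := adjQ_val p1 q1 r1 s1 t1 u1 x y z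
    have hge : p1 ≤ tQ p1 q1 r1 s1 t1 u1 x y z := hmin1 x y z (by tauto)
    nlinarith [hval, hge, hx, hμpos, mul_le_mul_of_nonneg_left hge hμpos.le]
  have hQ2pos : ∀ y z : ℤ, ¬(y = 0 ∧ z = 0) →
      0 < bQ (p1*s1 - q1^2) (p1*t1 - q1*r1) (p1*u1 - r1^2) y z := by
    intro y z hyz; nlinarith [hQ2lb y z hyz, hμpos]
  obtain ⟨μ2, hμ2pos, ⟨ya, za, hyzane, hμ2val⟩, hμ2min, hμ2bound⟩ := bin_key hQ2pos
  have hμ2lb : 3*p1^2 ≤ 4*μ2 := hμ2val ▸ hQ2lb ya za hyzane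
  rw [hABdet] at hμ2bound
  have e1 : 9*p1^4 ≤ 16*μ2^2 := by
    nlinarith [hμ2lb, mul_le_mul_of_nonneg_left hμ2lb (sq_nonneg p1), hμ2pos, hμpos]
  have e3 : 27*p1^4 ≤ 64*p1 := by linarith
  have hμ1 : p1 = 1 := by
    by_contra hne
    have h2 : 2 ≤ p1 := by omega
    have h4 : 4 ≤ p1*p1 := by nlinarith
    have h8 : 8 ≤ p1*p1*p1 := by nlinarith
    nlinarith [e3, h8, hμpos]
  subst hμ1
  -- the binary complement after the shear
  have hbQval : ∀ y z : ℤ, bQ (s1 - q1^2) (t1 - q1*r1) (u1 - r1^2) y z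
      = tQ 1 q1 r1 s1 t1 u1 (0 - q1*y - r1*z) y z := by
    intro y z; rw [shear_id]; ring
  have hbpos : ∀ y z : ℤ, ¬(y = 0 ∧ z = 0) → 0 < bQ (s1 - q1^2) (t1 - q1*r1) (u1 - r1^2) y z := by
    intro y z hyz
    rw [hbQval]
    have := hmin1 (0 - q1*y - r1*z) y z (by tauto)
    linarith
  have hbdet : (s1 - q1^2)*(u1 - r1^2) - (t1 - q1*r1)^2 = 1 := by
    rw [← hdet1]; unfold tdet det3; ring
  obtain ⟨α, β, γ, δ, hdetb, hbin⟩ := bin_equiv hbpos hbdet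
  refine ⟨1, -q1*α - r1*γ, -q1*β - r1*δ, 0, α, β, 0, γ, δ, ?_, ?_⟩
  · unfold det3; linarith [hdetb]
  · intro X Y Z
    have harg1 : (1:ℤ)*X + (-q1*α - r1*γ)*Y + (-q1*β - r1*δ)*Z
        = X - q1*(α*Y + β*Z) - r1*(γ*Y + δ*Z) := by ring
    have harg2 : (0:ℤ)*X + α*Y + β*Z = α*Y + β*Z := by ring
    have harg3 : (0:ℤ)*X + γ*Y + δ*Z = γ*Y + δ*Z := by ring
    rw [harg1, harg2, harg3, shear_id, hbin]; ring

/-- A positive ternary form of determinant 1 represents its `(1,1)`-coefficient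
as a primitive sum of three squares. -/
theorem ternary_main (p q r s t u : ℤ)
    (hpos : ∀ x y z : ℤ, ¬(x = 0 ∧ y = 0 ∧ z = 0) → 0 < tQ p q r s t u x y z)
    (hdet : tdet p q r s t u = 1) :
    ∃ x y z : ℤ, Int.gcd x (Int.gcd y z) = 1 ∧ p = x^2 + y^2 + z^2 := by
  obtain ⟨μ, ⟨x0, y0, z0, h0ne, h0val⟩, hminall⟩ := tern_min_exists hpos
  have hμpos : 0 < μ := h0val ▸ hpos x0 y0 z0 h0ne
  -- primitivize the minimal vector
  have hgne : (Int.gcd x0 (Int.gcd y0 z0) : ℤ) ≠ 0 := by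
    simp only [ne_eq, Int.natCast_eq_zero, Int.gcd_eq_zero_iff]
    tauto
  obtain ⟨x1, hx1⟩ : ((Int.gcd x0 (Int.gcd y0 z0) : ℤ)) ∣ x0 := (Int.gcd_dvd_left _ _)
  obtain ⟨y1, hy1⟩ : ((Int.gcd x0 (Int.gcd y0 z0) : ℤ)) ∣ y0 :=
    dvd_trans (Int.gcd_dvd_right _ _) (Int.gcd_dvd_left _ _)
  obtain ⟨z1, hz1⟩ : ((Int.gcd x0 (Int.gcd y0 z0) : ℤ)) ∣ z0 :=
    dvd_trans (Int.gcd_dvd_right _ _) (Int.gcd_dvd_right _ _)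
  set G : ℤ := (Int.gcd x0 (Int.gcd y0 z0) : ℤ) with hGdef
  have hyz1 : ¬(x1 = 0 ∧ y1 = 0 ∧ z1 = 0) := by
    rintro ⟨rfl, rfl, rfl⟩; simp at hx1 hy1 hz1; exact h0ne ⟨hx1, hy1, hz1⟩
  have hsq : tQ p q r s t u x0 y0 z0 = G^2 * tQ p q r s t u x1 y1 z1 := by
    rw [hx1, hy1, hz1]; unfold tQ; ring
  have h1 := hminall x1 y1 z1 hyz1
  have hGpos : 0 < G := lt_of_le_of_ne (Int.natCast_nonneg _) (Ne.symm hgne)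
  have hgsq : 1 ≤ G^2 := by nlinarith
  have hkey : G^2 * μ ≤ μ := by
    calc G^2 * μ ≤ G^2 * tQ p q r s t u x1 y1 z1 :=
          mul_le_mul_of_nonneg_left h1 (by positivity)
      _ = μ := by rw [← hsq, h0val]
  have hgnat1 : G = 1 := by nlinarith
  have hgcd1 : Int.gcd x0 (Int.gcd y0 z0) = 1 := by exact_mod_cast hGdef ▸ hgnat1
  -- extend to a basis
  obtain ⟨b2, c2, e2, f2, h2', i2, hdetM⟩ := ext_basis x0 y0 z0 hgcd1
  -- transformed form F1, with opaque coefficients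
  obtain ⟨q1, hq1⟩ : ∃ v, v = tB p q r s t u x0 y0 z0 b2 e2 h2' := ⟨_, rfl⟩
  obtain ⟨r1, hr1⟩ : ∃ v, v = tB p q r s t u x0 y0 z0 c2 f2 i2 := ⟨_, rfl⟩
  obtain ⟨s1, hs1⟩ : ∃ v, v = tQ p q r s t u b2 e2 h2' := ⟨_, rfl⟩
  obtain ⟨t1, ht1⟩ : ∃ v, v = tB p q r s t u b2 e2 h2' c2 f2 i2 := ⟨_, rfl⟩
  obtain ⟨u1, hu1⟩ : ∃ v, v = tQ p q r s t u c2 f2 i2 := ⟨_, rfl⟩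
  have hsubst1 : ∀ X Y Z : ℤ, tQ μ q1 r1 s1 t1 u1 X Y Z
      = tQ p q r s t u (x0*X+b2*Y+c2*Z) (y0*X+e2*Y+f2*Z) (z0*X+h2'*Y+i2*Z) := by
    intro X Y Z
    rw [hq1, hr1, hs1, ht1, hu1, ← h0val]
    exact tQ_subst p q r s t u x0 b2 c2 y0 e2 f2 z0 h2' i2 X Y Z
  have hdet1 : tdet μ q1 r1 s1 t1 u1 = 1 := by
    rw [hq1, hr1, hs1, ht1, hu1, ← h0val]
    have := tdet_subst p q r s t u x0 b2 c2 y0 e2 f2 z0 h2' i2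
    rw [hdet, hdetM] at this; simpa using this
  have hmin1 : ∀ X Y Z : ℤ, ¬(X = 0 ∧ Y = 0 ∧ Z = 0) → μ ≤ tQ μ q1 r1 s1 t1 u1 X Y Z := by
    intro X Y Z hXYZ
    rw [hsubst1]
    apply hminall
    intro ⟨d1, d2, d3⟩
    exact hXYZ (lin_inj x0 b2 c2 y0 e2 f2 z0 h2' i2 X Y Z hdetM d1 d2 d3)
  -- stage 2
  obtain ⟨a, b, c, d, e, f, g, h, i, hdetN, hid⟩ :=
    stage2 μ q1 r1 s1 t1 u1 μ hμpos hdet1 hmin1 rfl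
  -- compose the two transformations
  obtain ⟨T1, hT1⟩ : ∃ v, v = x0*a + b2*d + c2*g := ⟨_, rfl⟩
  obtain ⟨T2, hT2⟩ : ∃ v, v = x0*b + b2*e + c2*h := ⟨_, rfl⟩
  obtain ⟨T3, hT3⟩ : ∃ v, v = x0*c + b2*f + c2*i := ⟨_, rfl⟩
  obtain ⟨T4, hT4⟩ : ∃ v, v = y0*a + e2*d + f2*g := ⟨_, rfl⟩
  obtain ⟨T5, hT5⟩ : ∃ v, v = y0*b + e2*e + f2*h := ⟨_, rfl⟩
  obtain ⟨T6, hT6⟩ : ∃ v, v = y0*c + e2*f + f2*i := ⟨_, rfl⟩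
  obtain ⟨T7, hT7⟩ : ∃ v, v = z0*a + h2'*d + i2*g := ⟨_, rfl⟩
  obtain ⟨T8, hT8⟩ : ∃ v, v = z0*b + h2'*e + i2*h := ⟨_, rfl⟩
  obtain ⟨T9, hT9⟩ : ∃ v, v = z0*c + h2'*f + i2*i := ⟨_, rfl⟩
  have hdetT : det3 T1 T2 T3 T4 T5 T6 T7 T8 T9 = 1 := by
    rw [hT1, hT2, hT3, hT4, hT5, hT6, hT7, hT8, hT9, det3_mul, hdetM, hdetN]; ring
  have htotal : ∀ X Y Z : ℤ, tQ p q r s t u (T1*X+T2*Y+T3*Z) (T4*X+T5*Y+T6*Z) (T7*X+T8*Y+T9*Z)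
      = X^2 + Y^2 + Z^2 := by
    intro X Y Z
    have h1' := hid X Y Z
    rw [hsubst1] at h1'
    have ea : T1*X+T2*Y+T3*Z = x0*(a*X+b*Y+c*Z)+b2*(d*X+e*Y+f*Z)+c2*(g*X+h*Y+i*Z) := by
      rw [hT1, hT2, hT3]; ring
    have eb : T4*X+T5*Y+T6*Z = y0*(a*X+b*Y+c*Z)+e2*(d*X+e*Y+f*Z)+f2*(g*X+h*Y+i*Z) := by
      rw [hT4, hT5, hT6]; ring
    have ec : T7*X+T8*Y+T9*Z = z0*(a*X+b*Y+c*Z)+h2'*(d*X+e*Y+f*Z)+i2*(g*X+h*Y+i*Z) := by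
      rw [hT7, hT8, hT9]; ring
    rw [ea, eb, ec, h1']
  -- extract the representation of p by solving T·w = e₁
  obtain ⟨hc1, hc2, hc3⟩ := solve_e1 T1 T2 T3 T4 T5 T6 T7 T8 T9 hdetT
  refine ⟨T5*T9 - T6*T8, -(T4*T9 - T6*T7), T4*T8 - T5*T7, ?_, ?_⟩
  · -- primitivity
    have hdvd : (Int.gcd (T5*T9 - T6*T8) (Int.gcd (-(T4*T9 - T6*T7)) (T4*T8 - T5*T7)) : ℤ) ∣ 1 := by
      rw [← hc1]
      have d1 : (Int.gcd (T5*T9 - T6*T8) (Int.gcd (-(T4*T9 - T6*T7)) (T4*T8 - T5*T7)) : ℤ)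
          ∣ (T5*T9 - T6*T8) := (Int.gcd_dvd_left _ _)
      have d2 : (Int.gcd (T5*T9 - T6*T8) (Int.gcd (-(T4*T9 - T6*T7)) (T4*T8 - T5*T7)) : ℤ)
          ∣ (-(T4*T9 - T6*T7)) := dvd_trans (Int.gcd_dvd_right _ _) (Int.gcd_dvd_left _ _)
      have d3 : (Int.gcd (T5*T9 - T6*T8) (Int.gcd (-(T4*T9 - T6*T7)) (T4*T8 - T5*T7)) : ℤ)
          ∣ (T4*T8 - T5*T7) := dvd_trans (Int.gcd_dvd_right _ _) (Int.gcd_dvd_right _ _)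
      exact dvd_add (dvd_add (Dvd.dvd.mul_left d1 T1) (Dvd.dvd.mul_left d2 T2))
        (Dvd.dvd.mul_left d3 T3)
    have := Int.eq_one_of_dvd_one (by positivity) hdvd
    exact_mod_cast this
  · -- the representation
    have h5 := htotal (T5*T9 - T6*T8) (-(T4*T9 - T6*T7)) (T4*T8 - T5*T7)
    rw [hc1, hc2, hc3] at h5
    rw [← h5]; unfold tQ; ring

lemma partA (m : ℕ) (hm4 : m % 4 = 1) (hm5 : 5 ≤ m) :
    ∃ a b c : ℤ, 0 < a ∧ (m:ℤ) * (a*c - b^2) = a + 1 := by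
  haveI : NeZero (4*m) := ⟨by omega⟩
  -- the residue class 2m-1 is a unit mod 4m
  have hcop : Nat.Coprime (2*m-1) (4*m) := by
    rw [← Nat.isCoprime_iff_coprime]
    refine ⟨((2*m-1 : ℕ) : ℤ), -((m:ℤ)-1), ?_⟩
    have h1 : ((2*m-1 : ℕ) : ℤ) = 2*(m:ℤ) - 1 := by push_cast [Nat.cast_sub (by omega : 1 ≤ 2*m)]; ring
    rw [h1]; push_cast; ring
  have hunit : IsUnit (((2*m-1 : ℕ) : ZMod (4*m))) := (ZMod.isUnit_iff_coprime _ _).mpr hcop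
  obtain ⟨a, hagt, haprime, hamod⟩ := Nat.forall_exists_prime_gt_and_eq_mod hunit (4*m)
  haveI := Fact.mk haprime
  -- congruences satisfied by a
  have ha4 : a % 4 = 1 := by
    have h4 : (a : ZMod 4) = ((2*m-1 : ℕ) : ZMod 4) := by
      have := congrArg (ZMod.castHom (⟨m, rfl⟩ : (4:ℕ) ∣ 4*m) (ZMod 4)) hamod
      simpa [map_natCast] using this
    have := (ZMod.natCast_eq_natCast_iff' _ _ _).mp h4
    omega
  have ham : a % m = m - 1 := by
    have h4 : (a : ZMod m) = ((2*m-1 : ℕ) : ZMod m) := by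
      have := congrArg (ZMod.castHom (⟨4, by ring⟩ : m ∣ 4*m) (ZMod m)) hamod
      simpa [map_natCast] using this
    have h5 := (ZMod.natCast_eq_natCast_iff' _ _ _).mp h4
    have hcomp : (2*m-1) % m = m - 1 := by
      rw [show 2*m-1 = m + (m-1) from by omega, Nat.add_mod_left]
      exact Nat.mod_eq_of_lt (by omega)
    rw [hcomp] at h5
    exact h5
  have haodd : Odd a := Nat.odd_iff.mpr (by omega)
  have hmodd : Odd m := Nat.odd_iff.mpr (by omega)
  -- D = (a+1)/m
  have hdvd : m ∣ a + 1 := by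
    refine ⟨a / m + 1, ?_⟩
    have h6 := Nat.div_add_mod a m
    rw [ham] at h6
    rw [Nat.mul_add, Nat.mul_one]
    set E := m * (a / m) with hE
    omega
  obtain ⟨D, hD⟩ := hdvd
  have hDZ : (m:ℤ) * (D:ℤ) = (a:ℤ) + 1 := by exact_mod_cast hD.symm
  have hDpos : 0 < D := by
    rcases Nat.eq_zero_or_pos D with h | h
    · subst h; simp at hD
    · exact h
  have hDlt : D < a := by
    have h5 : 5*D ≤ m*D := Nat.mul_le_mul_right D (by omega)
    rw [← hD] at h5
    omega
  -- Jacobi symbol computations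
  have hamodm : (a:ℤ) ≡ -1 [ZMOD (m:ℕ)] := by
    have hd : ((m:ℕ):ℤ) ∣ -1 - (a:ℤ) := by
      rw [show (-1 - (a:ℤ)) = -((a:ℤ)+1) from by ring]
      exact dvd_neg.mpr ⟨(D:ℤ), by push_cast; linarith [hDZ]⟩
    exact Int.modEq_iff_dvd.mpr hd
  have hJm : jacobiSym ((m:ℕ):ℤ) a = 1 := by
    rw [jacobiSym.quadratic_reciprocity_one_mod_four hm4 haodd]
    rw [jacobiSym.mod_left' hamodm]
    rw [jacobiSym.at_neg_one hmodd, ZMod.χ₄_nat_one_mod_four hm4]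
  have hJmD : jacobiSym ((m:ℕ):ℤ) a * jacobiSym ((D:ℕ):ℤ) a = 1 := by
    rw [← jacobiSym.mul_left]
    have h1 : ((m:ℕ):ℤ) * ((D:ℕ):ℤ) = ((a:ℕ):ℤ) + 1 := by push_cast; push_cast at hDZ; linarith
    rw [h1]
    have h2 : ((a:ℤ) + 1) ≡ 1 [ZMOD a] := by
      refine Int.modEq_iff_dvd.mpr ?_
      exact ⟨-1, by ring⟩
    rw [jacobiSym.mod_left' h2, jacobiSym.one_left]
  have hJD : jacobiSym ((D:ℕ):ℤ) a = 1 := by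
    rw [hJm, one_mul] at hJmD; exact hJmD
  have hJnegD : jacobiSym (-((D:ℕ):ℤ)) a = 1 := by
    have h1 : (-((D:ℕ):ℤ)) = (-1) * ((D:ℕ):ℤ) := by ring
    rw [h1, jacobiSym.mul_left, jacobiSym.at_neg_one haodd, ZMod.χ₄_nat_one_mod_four ha4, hJD]; ring
  -- -D is a square mod a
  have hD0 : ((-((D:ℕ):ℤ) : ℤ) : ZMod a) ≠ 0 := by
    rw [Ne, ZMod.intCast_zmod_eq_zero_iff_dvd]
    intro hdvd'
    have h1 : (a:ℤ) ∣ ((D:ℕ):ℤ) := (dvd_neg.mp hdvd')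
    have h2 : a ∣ D := by exact_mod_cast h1
    exact absurd (Nat.le_of_dvd hDpos h2) (by omega)
  have hsq : IsSquare ((-((D:ℕ):ℤ) : ℤ) : ZMod a) := by
    apply (legendreSym.eq_one_iff a hD0).mp
    rw [jacobiSym.legendreSym.to_jacobiSym]; exact hJnegD
  obtain ⟨s, hs⟩ := hsq
  -- lift to ℤ
  set b : ℤ := (s.val : ℤ) with hbdef
  have hbs : ((b : ℤ) : ZMod a) = s := by
    rw [hbdef]; push_cast; exact ZMod.natCast_rightInverse s
  have hzero : ((b^2 + (D:ℕ) : ℤ) : ZMod a) = 0 := by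
    push_cast
    rw [hbs]  
    rw [show ((D:ℕ) : ZMod a) = ((((D:ℕ):ℤ)) : ZMod a) from by push_cast; rfl]
    rw [show (s:ZMod a)^2 = s * s from sq s, ← hs]
    push_cast
    ring
  obtain ⟨c, hc⟩ := (ZMod.intCast_zmod_eq_zero_iff_dvd _ _).mp hzero
  refine ⟨(a:ℤ), b, c, by exact_mod_cast haprime.pos, ?_⟩
  have h1 : (a:ℤ)*c - b^2 = ((D:ℕ):ℤ) := by linarith [hc]
  rw [h1]
  push_cast at hDZ ⊢
  linarith

theorem threeSquares (m : ℕ) (hm4 : m % 4 = 1) (hm5 : 5 ≤ m) :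
    ∃ x y z : ℤ, (m:ℤ) = x^2 + y^2 + z^2 ∧
      (x = 0 ∧ y = 0 → z^2 = 1) ∧ (x = 0 ∧ z = 0 → y^2 = 1) ∧ (y = 0 ∧ z = 0 → x^2 = 1) := by
  obtain ⟨a, b, c, hapos, hrel⟩ := partA m hm4 hm5
  have hm0 : 0 < (m:ℤ) := by exact_mod_cast (by omega : 0 < m)
  have hdet : tdet (m:ℤ) 0 1 a b c = 1 := by
    unfold tdet det3; linear_combination hrel
  have hposQ : ∀ x y z : ℤ, ¬(x = 0 ∧ y = 0 ∧ z = 0) → 0 < tQ (m:ℤ) 0 1 a b c x y z := by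
    intro x y z hne
    by_contra hle
    push_neg at hle
    have hid : a * (m:ℤ) * tQ (m:ℤ) 0 1 a b c x y z
        = a*((m:ℤ)*x + z)^2 + (m:ℤ)*(a*y + b*z)^2 + z^2 := by
      unfold tQ; linear_combination (z^2) * hrel
    have hamt : a * (m:ℤ) * tQ (m:ℤ) 0 1 a b c x y z ≤ 0 :=
      mul_nonpos_of_nonneg_of_nonpos (mul_nonneg hapos.le hm0.le) hle
    have hz2 : z^2 ≤ 0 := by
      nlinarith [mul_nonneg hapos.le (sq_nonneg ((m:ℤ)*x + z)),
        mul_nonneg hm0.le (sq_nonneg (a*y + b*z))]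
    have hz : z = 0 := by
      have := sq_nonneg z; exact pow_eq_zero_iff (by norm_num) |>.mp (le_antisymm hz2 this)
    subst hz
    have hy2 : (a*y + b*0)^2 ≤ 0 := by
      nlinarith [mul_nonneg hapos.le (sq_nonneg ((m:ℤ)*x + 0)),
        mul_nonneg hm0.le (sq_nonneg (a*y + b*0)), sq_nonneg (a*y+b*0)]
    have hy : y = 0 := by
      have h3 : a*y = 0 := by
        have := pow_eq_zero_iff (n := 2) (by norm_num) |>.mp
          (le_antisymm hy2 (sq_nonneg _))
        simpa using this
      rcases mul_eq_zero.mp h3 with h | h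
      · exact absurd h (ne_of_gt hapos)
      · exact h
    subst hy
    have hx2 : ((m:ℤ)*x + 0)^2 ≤ 0 := by nlinarith [sq_nonneg ((m:ℤ)*x+0)]
    have hx : x = 0 := by
      have h3 : (m:ℤ)*x = 0 := by
        have := pow_eq_zero_iff (n := 2) (by norm_num) |>.mp
          (le_antisymm hx2 (sq_nonneg _))
        simpa using this
      rcases mul_eq_zero.mp h3 with h | h
      · exact absurd h (ne_of_gt hm0)
      · exact h
    exact hne ⟨hx, rfl, rfl⟩
  obtain ⟨x, y, z, hgcd, hrep⟩ := ternary_main (m:ℤ) 0 1 a b c hposQ hdet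
  refine ⟨x, y, z, hrep, ?_, ?_, ?_⟩
  · rintro ⟨rfl, rfl⟩
    simp only [Int.gcd_zero_left] at hgcd
    simp only [Int.natAbs_natCast] at hgcd
    rw [← Int.natAbs_sq z, hgcd]
    norm_num
  · rintro ⟨rfl, rfl⟩
    simp only [Int.gcd_zero_left, Int.gcd_zero_right] at hgcd
    simp only [Int.natAbs_natCast] at hgcd
    rw [← Int.natAbs_sq y, hgcd]
    norm_num
  · rintro ⟨rfl, rfl⟩
    simp at hgcd
    rw [← Int.natAbs_sq x, hgcd]
    norm_num

lemma sqmod4_even (x : ℤ) (h : x % 2 = 0) : x^2 % 4 = 0 := by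
  obtain ⟨k, hk⟩ : ∃ k, x = 2*k := ⟨x/2, by omega⟩
  have h2 : x^2 = 4*(k*k) := by rw [hk]; ring
  rw [h2]; exact Int.mul_emod_right 4 (k*k)

lemma sqmod4_odd (x : ℤ) (h : x % 2 = 1) : x^2 % 4 = 1 := by
  obtain ⟨k, hk⟩ : ∃ k, x = 2*k+1 := ⟨x/2, by omega⟩
  have h2 : x^2 = 1 + (k*k+k)*4 := by rw [hk]; ring
  rw [h2, Int.add_mul_emod_self_right]
  norm_num

lemma finish0 (n : ℕ) (E1 E2 O : ℤ) (hm : 4*(n:ℤ)+1 = E1^2 + E2^2 + O^2)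
    (hE1 : E1 % 2 = 0) (hE2 : E2 % 2 = 0) (hO : O % 2 = 1) (hne : E1 ≠ 0) :
    ∃ x y z : ℕ, 1 ≤ x ∧ n = x^2 + y*(y+1)/2 + z*(z+1)/2 := by
  obtain ⟨X, hX⟩ : ∃ k, E1 = 2*k := ⟨E1/2, by omega⟩
  have hXne : X ≠ 0 := by intro h; rw [h] at hX; simp at hX; exact hne hX
  set Xn := X.natAbs with hXn
  have hXn1 : 1 ≤ Xn := by
    rcases Nat.eq_zero_or_pos Xn with h | h
    · exact absurd (Int.natAbs_eq_zero.mp h) hXne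
    · exact h
  set pn := (E2 + O).natAbs with hpn
  set qn := (E2 - O).natAbs with hqn
  have hpodd : pn % 2 = 1 := by omega
  have hqodd : qn % 2 = 1 := by omega
  set Y := pn / 2 with hY
  set Z := qn / 2 with hZ
  have hpn2 : pn = 2*Y + 1 := by omega
  have hqn2 : qn = 2*Z + 1 := by omega
  -- the integer identity
  have heq : (8*(n:ℤ)+2) = 8*(X*X) + (E2+O)*(E2+O) + (E2-O)*(E2-O) := by
    linear_combination 2*hm + 2*(E1 + 2*X)*hX
  have hcast : ((8*n+2 : ℕ) : ℤ) = ((8*(Xn*Xn) + pn*pn + qn*qn : ℕ) : ℤ) := by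
    push_cast
    rw [hXn, hpn, hqn, Int.natAbs_mul_self', Int.natAbs_mul_self', Int.natAbs_mul_self']
    linear_combination heq
  have hc : 8*n + 2 = 8*(Xn*Xn) + pn*pn + qn*qn := by exact_mod_cast hcast
  have e1 : pn * pn = 4*(Y*Y) + 4*Y + 1 := by rw [hpn2]; ring
  have e2 : qn * qn = 4*(Z*Z) + 4*Z + 1 := by rw [hqn2]; ring
  obtain ⟨d1, hd1⟩ := Nat.even_mul_succ_self Y
  obtain ⟨d2, hd2⟩ := Nat.even_mul_succ_self Z
  have e3 : Y*(Y+1) = Y*Y + Y := by ring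
  have e4 : Z*(Z+1) = Z*Z + Z := by ring
  refine ⟨Xn, Y, Z, hXn1, ?_⟩
  rw [pow_two]
  obtain ⟨A, hA⟩ : ∃ v, Xn*Xn = v := ⟨_, rfl⟩
  obtain ⟨B, hB⟩ : ∃ v, Y*Y = v := ⟨_, rfl⟩
  obtain ⟨C, hC⟩ : ∃ v, Z*Z = v := ⟨_, rfl⟩
  rw [e1, e2, hA, hB, hC] at hc
  rw [e3, hB] at hd1
  rw [e4, hC] at hd2
  rw [e3, e4, hA, hB, hC]
  omega

lemma finish1 (n : ℕ) (hn : 0 < n) (E1 E2 O : ℤ) (hm : 4*(n:ℤ)+1 = E1^2 + E2^2 + O^2)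
    (hE1 : E1 % 2 = 0) (hE2 : E2 % 2 = 0) (hO : O % 2 = 1)
    (hnz : ¬(E1 = 0 ∧ E2 = 0)) :
    ∃ x y z : ℕ, 1 ≤ x ∧ n = x^2 + y*(y+1)/2 + z*(z+1)/2 := by
  by_cases h1 : E1 = 0
  · have h2 : E2 ≠ 0 := fun h2 => hnz ⟨h1, h2⟩
    exact finish0 n E2 E1 O (by linear_combination hm) hE2 hE1 hO h2
  · exact finish0 n E1 E2 O hm hE1 hE2 hO h1

theorem stmt_12 : ∀ n : ℕ, 0 < n → ∃ x y z : ℕ, 1 ≤ x ∧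
    n = x ^ 2 + y * (y + 1) / 2 + z * (z + 1) / 2 := by
  intro n hn
  obtain ⟨x, y, z, hm, i1, i2, i3⟩ := threeSquares (4*n+1) (by omega) (by omega)
  have hmZ : 4*(n:ℤ)+1 = x^2 + y^2 + z^2 := by push_cast at hm ⊢; linarith
  have hn1 : (1:ℤ) ≤ (n:ℤ) := by exact_mod_cast hn
  -- parity analysis
  obtain ⟨XX, hXX⟩ : ∃ v, x^2 = v := ⟨_, rfl⟩
  obtain ⟨YY, hYY⟩ : ∃ v, y^2 = v := ⟨_, rfl⟩
  obtain ⟨ZZ, hZZ⟩ : ∃ v, z^2 = v := ⟨_, rfl⟩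
  rcases (by omega : x % 2 = 0 ∨ x % 2 = 1) with hx | hx <;>
    rcases (by omega : y % 2 = 0 ∨ y % 2 = 1) with hy | hy <;>
    rcases (by omega : z % 2 = 0 ∨ z % 2 = 1) with hz | hz
  · -- eee : impossible
    have c1 := sqmod4_even x hx; have c2 := sqmod4_even y hy; have c3 := sqmod4_even z hz
    rw [hXX] at c1; rw [hYY] at c2; rw [hZZ] at c3; rw [hXX, hYY, hZZ] at hmZ
    omega
  · -- eeo : valid, odd = z
    refine finish1 n hn x y z hmZ hx hy hz ?_
    intro ⟨h1, h2⟩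
    have := i1 ⟨h1, h2⟩
    rw [h1, h2, this] at hmZ
    omega
  · -- eoe : valid, odd = y
    refine finish1 n hn x z y (by linear_combination hmZ) hx hz hy ?_
    intro ⟨h1, h2⟩
    have := i2 ⟨h1, h2⟩
    rw [h1, h2, this] at hmZ
    omega
  · -- eoo : impossible
    have c1 := sqmod4_even x hx; have c2 := sqmod4_odd y hy; have c3 := sqmod4_odd z hz
    rw [hXX] at c1; rw [hYY] at c2; rw [hZZ] at c3; rw [hXX, hYY, hZZ] at hmZ
    omega
  · -- oee : valid, odd = x
    refine finish1 n hn y z x (by linear_combination hmZ) hy hz hx ?_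
    intro ⟨h1, h2⟩
    have := i3 ⟨h1, h2⟩
    rw [h1, h2, this] at hmZ
    omega
  · -- oeo : impossible
    have c1 := sqmod4_odd x hx; have c2 := sqmod4_even y hy; have c3 := sqmod4_odd z hz
    rw [hXX] at c1; rw [hYY] at c2; rw [hZZ] at c3; rw [hXX, hYY, hZZ] at hmZ
    omega
  · -- ooe : impossible
    have c1 := sqmod4_odd x hx; have c2 := sqmod4_odd y hy; have c3 := sqmod4_even z hz
    rw [hXX] at c1; rw [hYY] at c2; rw [hZZ] at c3; rw [hXX, hYY, hZZ] at hmZ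
    omega
  · -- ooo : impossible
    have c1 := sqmod4_odd x hx; have c2 := sqmod4_odd y hy; have c3 := sqmod4_odd z hz
    rw [hXX] at c1; rw [hYY] at c2; rw [hZZ] at c3; rw [hXX, hYY, hZZ] at hmZ
    omega
end
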